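/- arXiv:math/0508178 — 6 statements merged into one kernel-verified Lean document; each statement's English description precedes it below -/
import Mathlib

section
/- The normalized in-forest matrix J_k = σ_k^{-1} Q_k is row stochastic for each k = 0, …, n−d, where d is the in-forest dimension of Γ. -/
open Matrix Finset Polynomial

/-- `A` is (the arc set of) an in-forest of the weighted digraph with arc-weight
matrix `W`: all arcs are loopless arcs of positive weight, every vertex has
outdegree at most one, and there are no directed cycles. -/
def IsInForest {n : ℕ} (W : Matrix (Fin n) (Fin n) ℝ)
    (A : Finset (Fin n × Fin n)) : Prop :=
  (∀ e ∈ A, e.1 ≠ e.2 ∧ 0 < W e.1 e.2) ∧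
  (∀ i : Fin n, (A.filter (fun e => e.1 = i)).card ≤ 1) ∧
  (∀ i : Fin n, ¬ Relation.TransGen (fun a b => (a, b) ∈ A) i i)

/-- The weight of a forest: the product of its arc weights. -/
def forestWeight {n : ℕ} (W : Matrix (Fin n) (Fin n) ℝ)
    (A : Finset (Fin n × Fin n)) : ℝ :=
  ∏ e ∈ A, W e.1 e.2

/-- `i` belongs to the tree of the forest `A` converging to (rooted at) `j`. -/
def InTreeRootedAt {n : ℕ} (A : Finset (Fin n × Fin n)) (i j : Fin n) : Prop :=
  Relation.ReflTransGen (fun a b => (a, b) ∈ A) i j ∧ ∀ e ∈ A, e.1 ≠ j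

open scoped Classical in
/-- `σ_k`: the total weight of in-forests with `k` arcs. -/
noncomputable def sigmaW {n : ℕ} (W : Matrix (Fin n) (Fin n) ℝ) (k : ℕ) : ℝ :=
  ∑ A ∈ Finset.univ.powerset.filter
      (fun A => IsInForest W A ∧ A.card = k), forestWeight W A

open scoped Classical in
/-- `Q_k`: the matrix of in-forests with `k` arcs; its `(i,j)` entry is the total
weight of in-forests with `k` arcs in which `i` belongs to a tree rooted at `j`. -/
noncomputable def forestMatrix {n : ℕ} (W : Matrix (Fin n) (Fin n) ℝ) (k : ℕ) :
    Matrix (Fin n) (Fin n) ℝ :=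
  Matrix.of fun i j =>
    ∑ A ∈ Finset.univ.powerset.filter
        (fun A => IsInForest W A ∧ A.card = k ∧ InTreeRootedAt A i j),
      forestWeight W A

open scoped Classical in
/-- `σ`: the total weight of all in-forests. -/
noncomputable def sigmaTot {n : ℕ} (W : Matrix (Fin n) (Fin n) ℝ) : ℝ :=
  ∑ A ∈ Finset.univ.powerset.filter (fun A => IsInForest W A), forestWeight W A

open scoped Classical in
/-- `Q`: the matrix of all in-forests. -/
noncomputable def forestMatrixTot {n : ℕ} (W : Matrix (Fin n) (Fin n) ℝ) :
    Matrix (Fin n) (Fin n) ℝ :=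
  Matrix.of fun i j =>
    ∑ A ∈ Finset.univ.powerset.filter
        (fun A => IsInForest W A ∧ InTreeRootedAt A i j), forestWeight W A

open scoped Classical in
/-- The number of arcs in a maximum in-forest (equal to `n - d` where `d` is the
in-forest dimension). -/
noncomputable def maxForestCard {n : ℕ} (W : Matrix (Fin n) (Fin n) ℝ) : ℕ :=
  (Finset.univ.powerset.filter (fun A => IsInForest W A)).sup Finset.card

/-- The in-forest dimension `d` of the digraph. -/
noncomputable def forestDim {n : ℕ} (W : Matrix (Fin n) (Fin n) ℝ) : ℕ :=
  n - maxForestCard W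

/-- The (row) Laplacian matrix of the weighted digraph with arc-weight matrix `W`. -/
def lap {n : ℕ} (W : Matrix (Fin n) (Fin n) ℝ) : Matrix (Fin n) (Fin n) ℝ :=
  Matrix.diagonal (fun i => ∑ j, W i j) - W

/-- `J̃`: the normalized matrix of maximum in-forests. -/
noncomputable def Jtilde {n : ℕ} (W : Matrix (Fin n) (Fin n) ℝ) :
    Matrix (Fin n) (Fin n) ℝ :=
  (sigmaW W (maxForestCard W))⁻¹ • forestMatrix W (maxForestCard W)

lemma forestWeight_pos {n : ℕ} {W : Matrix (Fin n) (Fin n) ℝ}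
    {A : Finset (Fin n × Fin n)} (h : IsInForest W A) : 0 < forestWeight W A :=
  Finset.prod_pos fun e he => (h.1 e he).2

lemma IsInForest.subset {n : ℕ} {W : Matrix (Fin n) (Fin n) ℝ}
    {A B : Finset (Fin n × Fin n)} (h : IsInForest W A) (hBA : B ⊆ A) :
    IsInForest W B := by
  classical
  refine ⟨fun e he => h.1 e (hBA he), fun i => le_trans ?_ (h.2.1 i),
    fun i hi => h.2.2 i (Relation.TransGen.mono (fun a b hab => hBA hab) i i hi)⟩
  exact Finset.card_le_card (Finset.filter_subset_filter _ hBA)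

lemma exists_forest_of_card {n : ℕ} {W : Matrix (Fin n) (Fin n) ℝ} {k : ℕ}
    (hk : k ≤ maxForestCard W) : ∃ A, IsInForest W A ∧ A.card = k := by
  classical
  have hne : (Finset.univ.powerset.filter (fun A => IsInForest W A)).Nonempty := by
    refine ⟨∅, ?_⟩
    simp only [Finset.mem_filter, Finset.mem_powerset, Finset.empty_subset, true_and]
    refine ⟨fun e he => absurd he (Finset.notMem_empty e), fun i => by simp,
      fun i hi => ?_⟩
    cases hi with
    | single h => exact absurd h (Finset.notMem_empty _)
    | tail _ h => exact absurd h (Finset.notMem_empty _)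
  obtain ⟨A, hA, hcard⟩ := Finset.exists_mem_eq_sup _ hne Finset.card
  rw [Finset.mem_filter] at hA
  have hAf : IsInForest W A := hA.2
  have : k ≤ A.card := by rwa [maxForestCard, hcard] at hk
  obtain ⟨B, hBA, hBcard⟩ := Finset.exists_subset_card_eq this
  exact ⟨B, hAf.subset hBA, hBcard⟩

lemma sigmaW_pos {n : ℕ} {W : Matrix (Fin n) (Fin n) ℝ} {k : ℕ}
    (hk : k ≤ maxForestCard W) : 0 < sigmaW W k := by
  classical
  obtain ⟨A, hA, hcard⟩ := exists_forest_of_card hk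
  rw [sigmaW]
  refine Finset.sum_pos ?_ ⟨A, by simp [hA, hcard]⟩
  intro B hB
  rw [Finset.mem_filter] at hB
  exact forestWeight_pos hB.2.1

lemma existsUnique_root {n : ℕ} {W : Matrix (Fin n) (Fin n) ℝ}
    {A : Finset (Fin n × Fin n)} (h : IsInForest W A) (i : Fin n) :
    ∃! j, InTreeRootedAt A i j := by
  classical
  set r : Fin n → Fin n → Prop := fun a b => (a, b) ∈ A with hr
  -- existence
  have hwf : WellFounded (fun b a => Relation.TransGen r a b) := by
    haveI : IsTrans (Fin n) (fun b a => Relation.TransGen r a b) :=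
      ⟨fun a b c hab hbc => hbc.trans hab⟩
    haveI : IsIrrefl (Fin n) (fun b a => Relation.TransGen r a b) :=
      ⟨fun a ha => h.2.2 a ha⟩
    exact Finite.wellFounded_of_trans_of_irrefl _
  have hex : ∀ i : Fin n, ∃ j, InTreeRootedAt A i j := by
    intro i
    induction i using hwf.induction with
    | _ i ih =>
      by_cases hi : ∃ e ∈ A, e.1 = i
      · obtain ⟨e, heA, he1⟩ := hi
        have hmem : (i, e.2) ∈ A := by
          have : e = (e.1, e.2) := rfl
          rw [← he1]; rwa [← this]
        obtain ⟨j, hj1, hj2⟩ := ih e.2 (Relation.TransGen.single hmem)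
        exact ⟨j, Relation.ReflTransGen.head hmem hj1, hj2⟩
      · exact ⟨i, Relation.ReflTransGen.refl, fun e he h' => hi ⟨e, he, h'⟩⟩
  -- uniqueness
  have huniq : ∀ i j₁ j₂, InTreeRootedAt A i j₁ → InTreeRootedAt A i j₂ → j₁ = j₂ := by
    intro i j₁ j₂ h1 h2
    obtain ⟨h1p, h1r⟩ := h1
    induction h1p using Relation.ReflTransGen.head_induction_on with
    | refl =>
      rcases h2.1.cases_head with heq | ⟨b, hab, -⟩
      · exact heq
      · exact absurd rfl (h1r (j₁, b) hab)
    | head hab hbj ih =>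
      rename_i a b
      rcases h2.1.cases_head with heq | ⟨c, hac, hcj⟩
      · exact absurd rfl (heq ▸ h2.2 (a, b) hab)
      · have hbc : b = c := by
          have hcard := Finset.card_le_one.mp (h.2.1 a)
          have := hcard (a, b) (by simp [hab]) (a, c) (by simp [hac])
          exact congrArg Prod.snd this
        exact ih ⟨hbc ▸ hcj, h2.2⟩
  obtain ⟨j, hj⟩ := hex i
  exact ⟨j, hj, fun j' hj' => huniq i j' j hj' hj⟩

/-- The normalized in-forest matrix `J_k = σ_k⁻¹ Q_k` is row stochastic for
`k = 0, …, n − d`. -/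
theorem forestMatrix_normalized_rowStochastic {n : ℕ} (W : Matrix (Fin n) (Fin n) ℝ)
    (hn : 1 < n) (hW : ∀ i j, 0 ≤ W i j) (hdiag : ∀ i, W i i = 0)
    (k : ℕ) (hk : k ≤ maxForestCard W) :
    (∀ i j, 0 ≤ ((sigmaW W k)⁻¹ • forestMatrix W k) i j) ∧
    (∀ i : Fin n, ∑ j, ((sigmaW W k)⁻¹ • forestMatrix W k) i j = 1) := by
  classical
  have hσ : 0 < sigmaW W k := sigmaW_pos hk
  constructor
  · intro i j
    simp only [Matrix.smul_apply, smul_eq_mul]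
    refine mul_nonneg (inv_nonneg.mpr hσ.le) ?_
    rw [forestMatrix]
    refine Finset.sum_nonneg fun A hA => ?_
    rw [Finset.mem_filter] at hA
    exact (forestWeight_pos hA.2.1).le
  · intro i
    have hrow : ∑ j, forestMatrix W k i j = sigmaW W k := by
      rw [sigmaW]
      have : ∀ j, forestMatrix W k i j =
          ∑ A ∈ Finset.univ.powerset.filter (fun A => IsInForest W A ∧ A.card = k),
            (if InTreeRootedAt A i j then forestWeight W A else 0) := by
        intro j
        rw [forestMatrix, Matrix.of_apply, Finset.sum_filter, Finset.sum_filter]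
        refine Finset.sum_congr rfl fun A _ => ?_
        by_cases h1 : IsInForest W A ∧ A.card = k <;>
          by_cases h2 : InTreeRootedAt A i j <;> simp [h1, h2] <;> tauto
      simp only [this]
      rw [Finset.sum_comm]
      refine Finset.sum_congr rfl fun A hA => ?_
      rw [Finset.mem_filter] at hA
      obtain ⟨j₀, hj₀, huniq⟩ := existsUnique_root hA.2.1 i
      rw [Finset.sum_eq_single j₀]
      · simp [hj₀]
      · intro b _ hb
        rw [if_neg fun hc => hb (huniq b hc)]
      · simp
    simp only [Matrix.smul_apply, smul_eq_mul, ← Finset.mul_sum, hrow]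
    exact inv_mul_cancel₀ hσ.ne'
end

section
/- For a weighted digraph Γ with Laplacian matrix L, Q = adj(I + L) and σ = det(I + L), where Q is the matrix of all in-forests and σ is the total weight of all in-forests; consequently J = σ^{-1}Q = (I + L)^{-1}. -/
open Matrix Finset Polynomial

namespace MFT

variable {n : ℕ}

/-- one step of a partial functional digraph -/
def pstep (c : Fin n → Option (Fin n)) (a b : Fin n) : Prop := c a = some b

/-- iterates of the partial function -/
def cIter (c : Fin n → Option (Fin n)) : ℕ → Fin n → Option (Fin n)
  | 0, i => some i
  | m+1, i => (c i).bind (cIter c m)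

lemma cIter_add (c : Fin n → Option (Fin n)) (a b : ℕ) (i : Fin n) :
    cIter c (a + b) i = (cIter c a i).bind (cIter c b) := by
  induction a generalizing i with
  | zero => simp [cIter]
  | succ a ih =>
      have : a + 1 + b = (a + b) + 1 := by omega
      rw [this]
      show (c i).bind (cIter c (a+b)) = ((c i).bind (cIter c a)).bind (cIter c b)
      cases h : c i with
      | none => simp
      | some x => simp [ih]

lemma cIter_one (c : Fin n → Option (Fin n)) (i : Fin n) : cIter c 1 i = c i := by
  show (c i).bind (cIter c 0) = c i
  cases h : c i <;> simp [cIter]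

lemma reflTransGen_iff_cIter (c : Fin n → Option (Fin n)) (i j : Fin n) :
    Relation.ReflTransGen (pstep c) i j ↔ ∃ m, cIter c m i = some j := by
  constructor
  · intro h
    induction h with
    | refl => exact ⟨0, rfl⟩
    | tail _ hbc ih =>
        obtain ⟨m, hm⟩ := ih
        exact ⟨m + 1, by rw [cIter_add, hm]; simpa [cIter_one, pstep] using hbc⟩
  · rintro ⟨m, hm⟩
    induction m generalizing i with
    | zero => cases hm; exact Relation.ReflTransGen.refl
    | succ m ih =>
        obtain ⟨b, hb, hbm⟩ := Option.bind_eq_some_iff.mp hm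
        exact Relation.ReflTransGen.head hb (ih b hbm)

lemma transGen_of_cIter {c : Fin n → Option (Fin n)} {m : ℕ} (hm : 1 ≤ m) {i j : Fin n}
    (h : cIter c m i = some j) : Relation.TransGen (pstep c) i j := by
  obtain ⟨m', rfl⟩ : ∃ m', m = m' + 1 := ⟨m - 1, by omega⟩
  have : cIter c (1 + m') i = some j := by rw [Nat.add_comm]; exact h
  rw [cIter_add] at this
  obtain ⟨b, hb, hbm⟩ := Option.bind_eq_some_iff.mp this
  rw [cIter_one] at hb
  exact Relation.TransGen.head' hb ((reflTransGen_iff_cIter c b j).mpr ⟨m', hbm⟩)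

lemma exists_cIter_of_transGen {c : Fin n → Option (Fin n)} {i j : Fin n}
    (h : Relation.TransGen (pstep c) i j) : ∃ m, 1 ≤ m ∧ cIter c m i = some j := by
  rw [Relation.TransGen.head'_iff] at h
  obtain ⟨b, hb, hbj⟩ := h
  obtain ⟨m, hm⟩ := (reflTransGen_iff_cIter c b j).mp hbj
  refine ⟨1 + m, by omega, ?_⟩
  rw [cIter_add, cIter_one, hb]
  exact hm

section Acyclic

variable {c : Fin n → Option (Fin n)} (hacyc : ∀ x, ¬ Relation.TransGen (pstep c) x x)

include hacyc

lemma hit_unique {a b : ℕ} {i j : Fin n} (ha : cIter c a i = some j)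
    (hb : cIter c b i = some j) : a = b := by
  rcases Nat.lt_trichotomy a b with h | h | h
  · obtain ⟨d, rfl⟩ : ∃ d, b = a + d := ⟨b - a, by omega⟩
    rw [cIter_add, ha] at hb
    exact absurd (transGen_of_cIter (by omega) hb) (hacyc j)
  · exact h
  · obtain ⟨d, rfl⟩ : ∃ d, a = b + d := ⟨a - b, by omega⟩
    rw [cIter_add, hb] at ha
    exact absurd (transGen_of_cIter (by omega) ha) (hacyc j)

lemma cIter_n_eq_none (i : Fin n) : cIter c n i = none := by
  by_contra h
  obtain ⟨j, hj⟩ := Option.ne_none_iff_exists'.mp h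
  have hdef : ∀ m : ℕ, m ≤ n → (cIter c m i).isSome := by
    intro m hm
    obtain ⟨d, rfl⟩ : ∃ d, n = m + d := ⟨n - m, by omega⟩
    rw [cIter_add] at hj
    obtain ⟨b, hb, -⟩ := Option.bind_eq_some_iff.mp hj
    simp [hb]
  have hn' : Fintype.card (Fin n) < Fintype.card (Fin (n+1)) := by simp
  set f : Fin (n+1) → Fin n := fun m => (cIter c m i).get (hdef m (by omega)) with hf
  obtain ⟨a, b, hab, hfab⟩ := Fintype.exists_ne_map_eq_of_card_lt f hn'
  have ha : cIter c a i = some (f a) := by simp [hf]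
  have hb : cIter c b i = some (f a) := by rw [hfab]; simp [hf]
  exact hab (Fin.ext (hit_unique hacyc ha hb))

end Acyclic

/-- arc matrix of a partial functional digraph -/
def Pmat (c : Fin n → Option (Fin n)) : Matrix (Fin n) (Fin n) ℝ :=
  Matrix.of fun i j => if c i = some j then 1 else 0

lemma Pmat_pow (c : Fin n → Option (Fin n)) (m : ℕ) (i j : Fin n) :
    (Pmat c ^ m) i j = if cIter c m i = some j then 1 else 0 := by
  induction m generalizing i with
  | zero =>
      rw [pow_zero]
      show (if i = j then (1:ℝ) else 0) = _
      simp [cIter]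
  | succ m ih =>
      rw [pow_succ', Matrix.mul_apply]
      cases h : c i with
      | none =>
          have : ∀ l, Pmat c i l = 0 := by intro l; simp [Pmat, h]
          simp [this, cIter, h]
      | some b =>
          have : ∀ l, Pmat c i l * (Pmat c ^ m) l j
              = if l = b then (Pmat c ^ m) l j else 0 := by
            intro l
            simp only [Pmat, Matrix.of_apply, h, ite_mul, one_mul, zero_mul]
            congr 1
            simp [eq_comm]
          rw [Finset.sum_congr rfl (fun l _ => this l), Finset.sum_ite_eq' univ b]
          simp [ih, cIter, h]


open scoped Classical in
lemma det_zero_of_cycle {c : Fin n → Option (Fin n)} {x : Fin n}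
    (hx : Relation.TransGen (pstep c) x x) (M : Matrix (Fin n) (Fin n) ℝ)
    (hM : ∀ k, Relation.TransGen (pstep c) k k → M k = (1 - Pmat c) k) :
    M.det = 0 := by
  classical
  set S : Finset (Fin n) := univ.filter (fun k => Relation.TransGen (pstep c) k k) with hS
  have hmemS : ∀ k, k ∈ S ↔ Relation.TransGen (pstep c) k k := by
    intro k; simp [hS]
  have hr : ∀ m : Fin n, ∀ k ∈ S, c k = some m →
      ∃ t, cIter c t m = some k ∧ cIter c (t+1) m = some m := by
    intro m k hk hkm
    obtain ⟨b, hb, hbk⟩ := Relation.TransGen.head'_iff.mp ((hmemS k).mp hk)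
    have hbm : b = m := Option.some_injective _ (hb.symm.trans hkm)
    subst hbm
    obtain ⟨t, ht⟩ := (reflTransGen_iff_cIter c b k).mp hbk
    refine ⟨t, ht, ?_⟩
    rw [cIter_add, ht, Option.bind_some, cIter_one]
    exact hkm
  -- uniqueness of predecessor within S
  have huniq : ∀ m : Fin n, ∀ k₁ ∈ S, ∀ k₂ ∈ S, c k₁ = some m → c k₂ = some m → k₁ = k₂ := by
    intro m k₁ hk₁ k₂ hk₂ h₁ h₂
    obtain ⟨t₁, ht₁, hp₁⟩ := hr m k₁ hk₁ h₁
    obtain ⟨t₂, ht₂, hp₂⟩ := hr m k₂ hk₂ h₂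
    have e₁ : cIter c ((t₂+1) + t₁) m = some k₁ := by
      rw [cIter_add, hp₂, Option.bind_some, ht₁]
    have e₂ : cIter c ((t₁+1) + t₂) m = some k₂ := by
      rw [cIter_add, hp₁, Option.bind_some, ht₂]
    have : (t₂+1) + t₁ = (t₁+1) + t₂ := by omega
    rw [this, e₂] at e₁
    exact (Option.some_injective _ e₁).symm
  -- membership of m in S iff it has a predecessor in S
  have hcolsum : ∀ m : Fin n, ∑ k ∈ S, (1 - Pmat c) k m = 0 := by
    intro m
    have h1 : ∑ k ∈ S, (if k = m then (1:ℝ) else 0) = if m ∈ S then 1 else 0 := by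
      rw [Finset.sum_ite_eq' S m (fun _ => (1:ℝ))]
    have h2 : ∑ k ∈ S, (if c k = some m then (1:ℝ) else 0) = if m ∈ S then 1 else 0 := by
      rw [Finset.sum_boole]
      by_cases hm : m ∈ S
      · rw [if_pos hm]
        obtain ⟨b, hb, hbm'⟩ := Relation.TransGen.tail'_iff.mp ((hmemS m).mp hm)
        have hbS : b ∈ S := (hmemS b).mpr (Relation.TransGen.head' hbm' hb)
        have hbm : c b = some m := hbm'
        have : S.filter (fun k => c k = some m) = {b} := by
          apply Finset.eq_singleton_iff_unique_mem.mpr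
          refine ⟨Finset.mem_filter.mpr ⟨hbS, hbm⟩, ?_⟩
          intro y hy
          obtain ⟨hyS, hym⟩ := Finset.mem_filter.mp hy
          exact huniq m y hyS b hbS hym hbm
        rw [this]; simp
      · rw [if_neg hm]
        have : S.filter (fun k => c k = some m) = ∅ := by
          apply Finset.filter_eq_empty_iff.mpr
          intro k hk hkm
          obtain ⟨b, hb, hbk⟩ := Relation.TransGen.head'_iff.mp ((hmemS k).mp hk)
          have hbm : b = m := Option.some_injective _ ((hb : c k = some b).symm.trans hkm)
          subst hbm
          exact hm ((hmemS b).mpr (Relation.TransGen.tail' hbk hkm))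
        rw [this]; simp
    calc ∑ k ∈ S, (1 - Pmat c) k m
        = ∑ k ∈ S, ((if k = m then (1:ℝ) else 0) - (if c k = some m then 1 else 0)) := by
          apply Finset.sum_congr rfl; intro k _
          simp [Matrix.sub_apply, Matrix.one_apply, Pmat]
      _ = 0 := by rw [Finset.sum_sub_distrib, h1, h2, sub_self]
  -- null vector
  have hdet : ∃ v, v ≠ 0 ∧ v ᵥ* M = 0 := by
    refine ⟨fun k => if k ∈ S then 1 else 0, ?_, ?_⟩
    · intro h0
      have hxS : x ∈ S := (hmemS x).mpr hx
      have := congrFun h0 x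
      simp [hxS] at this
    · funext m
      have e0 : ((fun k => if k ∈ S then (1:ℝ) else 0) ᵥ* M) m
          = ∑ k, (if k ∈ S then (1:ℝ) else 0) * M k m := by
        simp [Matrix.vecMul, dotProduct]
      have e1 : ∑ k, (if k ∈ S then (1:ℝ) else 0) * M k m = ∑ k ∈ S, M k m := by
        rw [Finset.sum_congr rfl (fun k (_ : k ∈ univ) => by
          split <;> simp : ∀ k ∈ univ, (if k ∈ S then (1:ℝ) else 0) * M k m
            = if k ∈ S then M k m else 0)]
        rw [Finset.sum_ite_mem, Finset.univ_inter]
      have e2 : ∑ k ∈ S, M k m = ∑ k ∈ S, (1 - Pmat c) k m :=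
        Finset.sum_congr rfl (fun k hk => by rw [hM k ((hmemS k).mp hk)])
      show ((fun k => if k ∈ S then (1:ℝ) else 0) ᵥ* M) m = (0:ℝ)
      rw [e0, e1, e2, hcolsum m]
  obtain ⟨v, hv, hvM⟩ := hdet
  exact Matrix.exists_vecMul_eq_zero_iff.mp ⟨v, hv, hvM⟩
section Acyclic
variable {c : Fin n → Option (Fin n)} (hacyc : ∀ x, ¬ Relation.TransGen (pstep c) x x)
include hacyc

lemma det_one_sub_Pmat : (1 - Pmat c).det = 1 := by
  rw [Matrix.det_apply]
  rw [Finset.sum_eq_single (1 : Equiv.Perm (Fin n))]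
  · have : ∀ i, (1 - Pmat c) i i = 1 := by
      intro i
      have : ¬ (c i = some i) := fun h =>
        hacyc i (Relation.TransGen.single (h : pstep c i i))
      simp [Matrix.sub_apply, Matrix.one_apply, Pmat, this]
    simp [this]
  · intro σ _ hσ
    have hprod : ∏ i, (1 - Pmat c) (σ i) i = 0 := by
      by_contra hne
      have hfac : ∀ i, (1 - Pmat c) (σ i) i ≠ 0 := fun i hi =>
        hne (Finset.prod_eq_zero (Finset.mem_univ i) hi)
      -- every moved point has an arc σ i → i
      have harc : ∀ i, σ i ≠ i → pstep c (σ i) i := by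
        intro i hi
        have := hfac i
        simp only [Matrix.sub_apply, Matrix.one_apply, Pmat, Matrix.of_apply,
          if_neg hi] at this
        by_cases hc : c (σ i) = some i
        · exact hc
        · simp [hc] at this
      obtain ⟨i₀, hi₀⟩ : ∃ i, σ i ≠ i := by
        by_contra h; push_neg at h; exact hσ (Equiv.ext h)
      have hmoved : ∀ y, σ y ≠ y → σ (σ⁻¹ y) ≠ σ⁻¹ y := by
        intro y hy h
        rw [show σ (σ⁻¹ y) = y from σ.apply_symm_apply y] at h
        apply hy
        conv_lhs => rw [h]
        exact σ.apply_symm_apply y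
      have hstep : ∀ y, σ y ≠ y → pstep c y (σ⁻¹ y) := by
        intro y hy
        have h2 := harc (σ⁻¹ y) (hmoved y hy)
        rwa [show σ (σ⁻¹ y) = y from σ.apply_symm_apply y] at h2
      have key : ∀ m : ℕ, σ ((σ⁻¹ ^ m) i₀) ≠ (σ⁻¹ ^ m) i₀ ∧
          Relation.TransGen (pstep c) i₀ ((σ⁻¹ ^ (m+1)) i₀) := by
        intro m
        induction m with
        | zero =>
            refine ⟨by simpa using hi₀, ?_⟩
            have := hstep i₀ hi₀
            exact Relation.TransGen.single (by simpa using this)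
        | succ m ih =>
            have hy := ih.1
            have hpow : ∀ k : ℕ, (σ⁻¹ ^ (k+1)) i₀ = σ⁻¹ ((σ⁻¹ ^ k) i₀) := by
              intro k; rw [pow_succ']; rfl
            constructor
            · rw [hpow m]; exact hmoved _ hy
            · have := ih.2
              rw [hpow m] at this
              rw [hpow (m+1), hpow m]
              exact this.tail (hstep _ (hmoved _ hy))
      have hm₀ : 1 ≤ orderOf σ⁻¹ := orderOf_pos σ⁻¹
      have hkey := (key (orderOf σ⁻¹ - 1)).2
      rw [Nat.sub_add_cancel hm₀, pow_orderOf_eq_one] at hkey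
      exact hacyc i₀ (by simpa using hkey)
    rw [hprod, smul_zero]
  · intro h; exact absurd (Finset.mem_univ 1) h

lemma Pmat_pow_n (i j : Fin n) : (Pmat c ^ n) i j = 0 := by
  rw [Pmat_pow, cIter_n_eq_none hacyc]
  simp

lemma geom_inv : (1 - Pmat c) * (∑ m ∈ range n, Pmat c ^ m) = 1 := by
  have h := mul_geom_sum (Pmat c) n
  have hz : Pmat c ^ n = 0 := by
    ext i j; rw [Matrix.zero_apply]; exact Pmat_pow_n hacyc i j
  rw [hz] at h
  calc (1 - Pmat c) * (∑ m ∈ range n, Pmat c ^ m)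
      = -((Pmat c - 1) * ∑ m ∈ range n, Pmat c ^ m) := by rw [← neg_sub, neg_mul]
    _ = -(0 - 1) := by rw [h]
    _ = 1 := by simp

lemma adjugate_eq_geom :
    (1 - Pmat c).adjugate = ∑ m ∈ range n, Pmat c ^ m := by
  have hdet := det_one_sub_Pmat hacyc
  calc (1 - Pmat c).adjugate
      = (1 - Pmat c).adjugate * ((1 - Pmat c) * (∑ m ∈ range n, Pmat c ^ m)) := by
        rw [geom_inv hacyc, mul_one]
    _ = ((1 - Pmat c).adjugate * (1 - Pmat c)) * (∑ m ∈ range n, Pmat c ^ m) := by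
        rw [mul_assoc]
    _ = ∑ m ∈ range n, Pmat c ^ m := by
        rw [Matrix.adjugate_mul, hdet, one_smul, one_mul]

open scoped Classical in
lemma adjugate_entry (i j : Fin n) :
    (1 - Pmat c).adjugate i j
      = if Relation.ReflTransGen (pstep c) i j then 1 else 0 := by
  rw [adjugate_eq_geom hacyc]
  have hsum : (∑ m ∈ range n, Pmat c ^ m) i j
      = ∑ m ∈ range n, (if cIter c m i = some j then (1:ℝ) else 0) := by
    rw [Matrix.sum_apply]
    exact Finset.sum_congr rfl (fun m _ => Pmat_pow c m i j)
  rw [hsum]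
  by_cases hreach : Relation.ReflTransGen (pstep c) i j
  · rw [if_pos hreach]
    obtain ⟨m, hm⟩ := (reflTransGen_iff_cIter c i j).mp hreach
    have hmn : m < n := by
      by_contra hge
      obtain ⟨d, rfl⟩ : ∃ d, m = n + d := ⟨m - n, by omega⟩
      rw [cIter_add, cIter_n_eq_none hacyc, Option.bind_none] at hm
      exact nomatch hm
    rw [Finset.sum_eq_single_of_mem m (Finset.mem_range.mpr hmn)]
    · rw [if_pos hm]
    · intro m' _ hne
      rw [if_neg]
      intro hm'
      exact hne (hit_unique hacyc hm' hm)
  · rw [if_neg hreach]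
    apply Finset.sum_eq_zero
    intro m _
    rw [if_neg]
    intro hm
    exact hreach ((reflTransGen_iff_cIter c i j).mpr ⟨m, hm⟩)

end Acyclic
noncomputable def wt (W : Matrix (Fin n) (Fin n) ℝ) (i : Fin n) : Option (Fin n) → ℝ
  | none => 1
  | some j => W i j

def urow (i : Fin n) : Option (Fin n) → (Fin n → ℝ)
  | none => fun k => if i = k then 1 else 0
  | some j => fun k => (if i = k then (1:ℝ) else 0) - (if j = k then 1 else 0)

lemma row_decomp (W : Matrix (Fin n) (Fin n) ℝ) (i : Fin n) :
    (1 + lap W) i = ∑ o ∈ (univ : Finset (Option (Fin n))), wt W i o • urow i o := by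
  funext k
  rw [show ((∑ o ∈ (univ : Finset (Option (Fin n))), wt W i o • urow i o) k)
      = ∑ o ∈ (univ : Finset (Option (Fin n))), wt W i o * urow i o k from by
    rw [Finset.sum_apply]; rfl]
  rw [Fintype.sum_option]
  have hsum : ∑ j : Fin n, wt W i (some j) * urow i (some j) k
      = (∑ j, W i j) * (if i = k then 1 else 0) - W i k := by
    have : ∀ j : Fin n, wt W i (some j) * urow i (some j) k
        = W i j * (if i = k then 1 else 0) - W i j * (if j = k then 1 else 0) := by
      intro j; simp [wt, urow, mul_sub]
    rw [Finset.sum_congr rfl (fun j _ => this j), Finset.sum_sub_distrib,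
      ← Finset.sum_mul]
    congr 1
    rw [Finset.sum_congr rfl (fun j (_ : j ∈ univ) => by
      split <;> simp [*] : ∀ j ∈ univ, W i j * (if j = k then (1:ℝ) else 0)
        = if j = k then W i j else 0)]
    rw [Finset.sum_ite_eq' univ k (fun j => W i j)]
    simp
  rw [hsum]
  show (1 + lap W) i k = 1 * urow i none k + _
  by_cases h : i = k
  · subst h
    simp [lap, Matrix.add_apply, Matrix.one_apply, urow, Matrix.sub_apply,
      Matrix.diagonal_apply]
  · simp [lap, Matrix.add_apply, Matrix.one_apply_ne h, urow, Matrix.sub_apply,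
      Matrix.diagonal_apply, h]

lemma urow_matrix (c : Fin n → Option (Fin n)) :
    (Matrix.of fun i => urow i (c i)) = 1 - Pmat c := by
  ext i k
  cases h : c i with
  | none => simp [urow, h, Matrix.one_apply, Pmat, Matrix.sub_apply]
  | some j => simp [urow, h, Matrix.one_apply, Pmat, Matrix.sub_apply]

lemma det_expansion (W : Matrix (Fin n) (Fin n) ℝ) :
    (1 + lap W).det
      = ∑ c ∈ Fintype.piFinset (fun _ : Fin n => (univ : Finset (Option (Fin n)))),
          (∏ i, wt W i (c i)) * (1 - Pmat c).det := by
  have h0 : (1 + lap W).det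
      = Matrix.detRowAlternating
          (fun i => ∑ o ∈ (univ : Finset (Option (Fin n))), wt W i o • urow i o) := by
    have : (fun i => ∑ o ∈ (univ : Finset (Option (Fin n))), wt W i o • urow i o)
        = fun i => (1 + lap W) i := by funext i; exact (row_decomp W i).symm
    rw [this]
    rfl
  rw [h0]
  rw [show (Matrix.detRowAlternating
        (fun i => ∑ o ∈ (univ : Finset (Option (Fin n))), wt W i o • urow i o) : ℝ)
      = (Matrix.detRowAlternating (R := ℝ) (n := Fin n)).toMultilinearMap
          (fun i => ∑ o ∈ (univ : Finset (Option (Fin n))), wt W i o • urow i o) from rfl]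
  rw [MultilinearMap.map_sum_finset]
  apply Finset.sum_congr rfl
  intro c _
  rw [show ((Matrix.detRowAlternating (R := ℝ) (n := Fin n)).toMultilinearMap
        (fun i => wt W i (c i) • urow i (c i)))
      = (∏ i, wt W i (c i)) •
        ((Matrix.detRowAlternating (R := ℝ) (n := Fin n)).toMultilinearMap
          (fun i => urow i (c i))) from MultilinearMap.map_smul_univ _ _ _]
  rw [smul_eq_mul]
  congr 1
  rw [← urow_matrix c]
  rfl

lemma adj_expansion (W : Matrix (Fin n) (Fin n) ℝ) (i j : Fin n) :
    (1 + lap W).adjugate i j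
      = ∑ c ∈ Fintype.piFinset
          (fun k : Fin n => if k = j then ({none} : Finset (Option (Fin n))) else univ),
          (∏ k, wt W k (c k)) * ((1 - Pmat c).updateRow j (Pi.single i 1)).det := by
  classical
  rw [Matrix.adjugate_apply]
  have h0 : ((1 + lap W).updateRow j (Pi.single i 1)).det
      = (Matrix.detRowAlternating (R := ℝ) (n := Fin n)).toMultilinearMap
          (fun k => ∑ o ∈ (if k = j then ({none} : Finset (Option (Fin n))) else univ),
            (if k = j then (fun _ => Pi.single i 1)
              else (fun o => wt W k o • urow k o)) o) := by
    congr 1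
    funext k
    by_cases hk : k = j
    · subst hk
      rw [if_pos rfl, if_pos rfl, Finset.sum_singleton, Matrix.updateRow_self]
    · rw [if_neg hk, if_neg hk, Matrix.updateRow_ne hk]
      exact row_decomp W k
  rw [h0, MultilinearMap.map_sum_finset]
  apply Finset.sum_congr rfl
  intro c hc
  have hcj : c j = none := by
    have := (Fintype.mem_piFinset.mp hc) j
    rw [if_pos rfl] at this
    simpa using this
  have h1 : (fun k => (if k = j then (fun _ => Pi.single i 1)
        else (fun o => wt W k o • urow k o)) (c k))
      = fun k => (if k = j then (1:ℝ) else wt W k (c k)) •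
          (if k = j then (Pi.single i 1 : Fin n → ℝ) else urow k (c k)) := by
    funext k
    by_cases hk : k = j <;> simp [hk]
  rw [h1, MultilinearMap.map_smul_univ, smul_eq_mul]
  congr 1
  · apply Finset.prod_congr rfl
    intro k _
    by_cases hk : k = j
    · subst hk; rw [if_pos rfl, hcj]; rfl
    · rw [if_neg hk]
  · have h2 : (fun k => if k = j then (Pi.single i 1 : Fin n → ℝ) else urow k (c k))
        = fun k => ((1 - Pmat c).updateRow j (Pi.single i 1)) k := by
      funext k l
      rw [Matrix.updateRow_apply]
      by_cases hk : k = j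
      · simp [hk]
      · rw [if_neg hk, if_neg hk, ← urow_matrix c]; rfl
    rw [h2]
    rfl

section Combinatorics

/-- arc set of a partial function -/
def arcs (c : Fin n → Option (Fin n)) : Finset (Fin n × Fin n) :=
  univ.filter (fun e => c e.1 = some e.2)

lemma mem_arcs {c : Fin n → Option (Fin n)} {e : Fin n × Fin n} :
    e ∈ arcs c ↔ c e.1 = some e.2 := by simp [arcs]

lemma arcs_rel (c : Fin n → Option (Fin n)) :
    (fun a b => (a, b) ∈ arcs c) = pstep c := by
  funext a b
  exact propext (by simpa [pstep] using (mem_arcs (c := c) (e := (a, b))))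

lemma weight_arcs (W : Matrix (Fin n) (Fin n) ℝ) (c : Fin n → Option (Fin n)) :
    ∏ k, wt W k (c k) = forestWeight W (arcs c) := by
  classical
  have h1 : ∏ k, wt W k (c k)
      = ∏ k ∈ univ.filter (fun k => (c k).isSome), wt W k (c k) := by
    symm
    apply Finset.prod_subset (Finset.filter_subset _ _)
    intro x _ hx
    simp only [Finset.mem_filter, Finset.mem_univ, true_and] at hx
    cases h : c x with
    | none => rfl
    | some b => rw [h] at hx; simp at hx
  rw [h1, forestWeight]
  apply Finset.prod_nbij' (fun k => (k, (c k).getD k)) (fun e => e.1)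
  · intro a ha
    simp only [Finset.mem_filter, Finset.mem_univ, true_and] at ha
    obtain ⟨b, hb⟩ := Option.isSome_iff_exists.mp ha
    rw [mem_arcs]
    simp [hb]
  · intro e he
    rw [mem_arcs] at he
    simp [he]
  · intro a _; rfl
  · intro e he
    rw [mem_arcs] at he
    have : (c e.1).getD e.1 = e.2 := by rw [he]; rfl
    rw [this]
  · intro a ha
    simp only [Finset.mem_filter, Finset.mem_univ, true_and] at ha
    obtain ⟨b, hb⟩ := Option.isSome_iff_exists.mp ha
    rw [hb]
    rfl

/-- goodness of a partial function w.r.t. weights -/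
def good (W : Matrix (Fin n) (Fin n) ℝ) (c : Fin n → Option (Fin n)) : Prop :=
  (∀ x, ¬ Relation.TransGen (pstep c) x x) ∧ ∀ a b, c a = some b → 0 < W a b

lemma isInForest_arcs {W : Matrix (Fin n) (Fin n) ℝ} {c : Fin n → Option (Fin n)}
    (hg : good W c) : IsInForest W (arcs c) := by
  refine ⟨?_, ?_, ?_⟩
  · intro e he
    rw [mem_arcs] at he
    refine ⟨?_, hg.2 _ _ he⟩
    intro h
    exact hg.1 e.1 (Relation.TransGen.single (show pstep c e.1 e.1 by rw [h] at he ⊢; exact he))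
  · intro a
    rw [Finset.card_le_one]
    intro e he f hf
    simp only [Finset.mem_filter, mem_arcs] at he hf
    have h1 : c a = some e.2 := by rw [← he.2]; exact he.1
    have h2 : c a = some f.2 := by rw [← hf.2]; exact hf.1
    exact Prod.ext (he.2.trans hf.2.symm) (Option.some_injective _ (h1.symm.trans h2))
  · intro a
    rw [arcs_rel]
    exact hg.1 a

lemma arcs_inj {c₁ c₂ : Fin n → Option (Fin n)} (h : arcs c₁ = arcs c₂) : c₁ = c₂ := by
  funext a
  cases h₁ : c₁ a with
  | none =>
      cases h₂ : c₂ a with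
      | none => rfl
      | some b =>
          have : (a, b) ∈ arcs c₁ := by rw [h]; exact mem_arcs.mpr h₂
          rw [mem_arcs] at this
          rw [h₁] at this
          exact nomatch this
  | some b =>
      have : (a, b) ∈ arcs c₂ := by rw [← h]; exact mem_arcs.mpr h₁
      rw [mem_arcs] at this
      rw [this]

/-- canonical partial function of an arc set with out-degree at most one -/
noncomputable def cOf (A : Finset (Fin n × Fin n)) : Fin n → Option (Fin n) :=
  fun a => if h : ∃ b, (a, b) ∈ A then some h.choose else none

lemma arcs_cOf {W : Matrix (Fin n) (Fin n) ℝ} {A : Finset (Fin n × Fin n)}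
    (hA : ∀ i : Fin n, (A.filter (fun e => e.1 = i)).card ≤ 1) :
    arcs (cOf A) = A := by
  ext e
  obtain ⟨a, b⟩ := e
  rw [mem_arcs]
  constructor
  · intro h
    by_cases hex : ∃ b', (a, b') ∈ A
    · rw [cOf] at h
      simp only [dif_pos hex] at h
      have hb : hex.choose = b := Option.some_injective _ h
      rw [← hb]
      exact hex.choose_spec
    · rw [cOf] at h
      simp only [dif_neg hex] at h
      exact nomatch h
  · intro h
    have hex : ∃ b', (a, b') ∈ A := ⟨b, h⟩
    rw [cOf]
    simp only [dif_pos hex]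
    congr 1
    have h1 : (a, hex.choose) ∈ A.filter (fun e => e.1 = a) :=
      Finset.mem_filter.mpr ⟨hex.choose_spec, rfl⟩
    have h2 : (a, b) ∈ A.filter (fun e => e.1 = a) := Finset.mem_filter.mpr ⟨h, rfl⟩
    have := Finset.card_le_one.mp (hA a) _ h1 _ h2
    exact congrArg Prod.snd this

lemma good_cOf {W : Matrix (Fin n) (Fin n) ℝ} {A : Finset (Fin n × Fin n)}
    (hA : IsInForest W A) : good W (cOf A) := by
  have harcs := arcs_cOf (W := W) hA.2.1
  constructor
  · intro x hx
    apply hA.2.2 x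
    rw [← arcs_rel (cOf A), harcs] at hx
    exact hx
  · intro a b hab
    have : (a, b) ∈ A := by rw [← harcs]; exact mem_arcs.mpr hab
    exact (hA.1 _ this).2

end Combinatorics

section MainLemmas

open scoped Classical

lemma det_eq (W : Matrix (Fin n) (Fin n) ℝ) (hW : ∀ i j, 0 ≤ W i j) :
    sigmaTot W = (1 + lap W).det := by
  rw [det_expansion]
  have hval : ∀ c : Fin n → Option (Fin n), (1 - Pmat c).det
      = if (∀ x, ¬ Relation.TransGen (pstep c) x x) then (1:ℝ) else 0 := by
    intro c
    by_cases h : ∀ x, ¬ Relation.TransGen (pstep c) x x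
    · rw [if_pos h, det_one_sub_Pmat h]
    · rw [if_neg h]
      push_neg at h
      obtain ⟨x, hx⟩ := h
      exact det_zero_of_cycle hx _ (fun k _ => rfl)
  have h2 : ∑ c ∈ Fintype.piFinset (fun _ : Fin n => (univ : Finset (Option (Fin n)))),
        (∏ i, wt W i (c i)) * (1 - Pmat c).det
      = ∑ c ∈ (Fintype.piFinset
          (fun _ : Fin n => (univ : Finset (Option (Fin n))))).filter (good W),
          ∏ i, wt W i (c i) := by
    rw [Finset.sum_filter]
    apply Finset.sum_congr rfl
    intro c _
    rw [hval c]
    by_cases hg : good W c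
    · rw [if_pos hg, if_pos hg.1, mul_one]
    · rw [if_neg hg]
      by_cases ha : ∀ x, ¬ Relation.TransGen (pstep c) x x
      · rw [if_pos ha, mul_one]
        have hpos : ¬ ∀ a b, c a = some b → 0 < W a b := fun hp => hg ⟨ha, hp⟩
        push_neg at hpos
        obtain ⟨a, b, hab, hnpos⟩ := hpos
        apply Finset.prod_eq_zero (Finset.mem_univ a)
        rw [hab]
        show W a b = 0
        exact le_antisymm hnpos (hW a b)
      · rw [if_neg ha, mul_zero]
  rw [h2, sigmaTot]
  symm
  apply Finset.sum_bij (fun c _ => arcs c)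
  · intro c hc
    rw [Finset.mem_filter] at hc ⊢
    exact ⟨Finset.mem_powerset.mpr (Finset.subset_univ _), isInForest_arcs hc.2⟩
  · intro c₁ _ c₂ _ h
    exact arcs_inj h
  · intro A hA
    rw [Finset.mem_filter] at hA
    refine ⟨cOf A, ?_, arcs_cOf (W := W) hA.2.2.1⟩
    rw [Finset.mem_filter]
    exact ⟨by simp [Fintype.mem_piFinset], good_cOf hA.2⟩
  · intro c _
    exact weight_arcs W c

lemma adj_eq (W : Matrix (Fin n) (Fin n) ℝ) (hW : ∀ i j, 0 ≤ W i j) :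
    forestMatrixTot W = (1 + lap W).adjugate := by
  ext i j
  rw [adj_expansion]
  have hval : ∀ c : Fin n → Option (Fin n), c j = none →
      ((1 - Pmat c).updateRow j (Pi.single i 1)).det
      = if ((∀ x, ¬ Relation.TransGen (pstep c) x x)
            ∧ Relation.ReflTransGen (pstep c) i j) then (1:ℝ) else 0 := by
    intro c hcj
    by_cases ha : ∀ x, ¬ Relation.TransGen (pstep c) x x
    · rw [← Matrix.adjugate_apply, adjugate_entry ha i j]
      by_cases hr : Relation.ReflTransGen (pstep c) i j
      · rw [if_pos hr, if_pos ⟨ha, hr⟩]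
      · rw [if_neg hr, if_neg (fun h => hr h.2)]
    · rw [if_neg (fun h => ha h.1)]
      push_neg at ha
      obtain ⟨x, hx⟩ := ha
      apply det_zero_of_cycle hx
      intro k hk
      have hkj : k ≠ j := by
        intro h
        obtain ⟨b, hb, -⟩ := Relation.TransGen.head'_iff.mp hk
        have hb' : c k = some b := hb
        rw [h, hcj] at hb'
        exact nomatch hb'
      rw [Matrix.updateRow_ne hkj]
  have h2 : ∑ c ∈ Fintype.piFinset
        (fun k : Fin n => if k = j then ({none} : Finset (Option (Fin n))) else univ),
        (∏ k, wt W k (c k)) * ((1 - Pmat c).updateRow j (Pi.single i 1)).det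
      = ∑ c ∈ (Fintype.piFinset
          (fun k : Fin n => if k = j then ({none} : Finset (Option (Fin n))) else univ)).filter
          (fun c => good W c ∧ Relation.ReflTransGen (pstep c) i j),
          ∏ k, wt W k (c k) := by
    rw [Finset.sum_filter]
    apply Finset.sum_congr rfl
    intro c hc
    have hcj : c j = none := by
      have := (Fintype.mem_piFinset.mp hc) j
      rw [if_pos rfl] at this
      simpa using this
    rw [hval c hcj]
    by_cases hgr : good W c ∧ Relation.ReflTransGen (pstep c) i j
    · rw [if_pos hgr, if_pos ⟨hgr.1.1, hgr.2⟩, mul_one]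
    · rw [if_neg hgr]
      by_cases har : (∀ x, ¬ Relation.TransGen (pstep c) x x)
          ∧ Relation.ReflTransGen (pstep c) i j
      · rw [if_pos har, mul_one]
        have hpos : ¬ ∀ a b, c a = some b → 0 < W a b :=
          fun hp => hgr ⟨⟨har.1, hp⟩, har.2⟩
        push_neg at hpos
        obtain ⟨a, b, hab, hnpos⟩ := hpos
        apply Finset.prod_eq_zero (Finset.mem_univ a)
        rw [hab]
        show W a b = 0
        exact le_antisymm hnpos (hW a b)
      · rw [if_neg har, mul_zero]
  rw [h2]
  rw [show forestMatrixTot W i j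
      = ∑ A ∈ Finset.univ.powerset.filter
          (fun A => IsInForest W A ∧ InTreeRootedAt A i j), forestWeight W A from rfl]
  symm
  apply Finset.sum_bij (fun c _ => arcs c)
  · intro c hc
    rw [Finset.mem_filter] at hc ⊢
    obtain ⟨hmem, hg, hr⟩ := hc
    have hcj : c j = none := by
      have := (Fintype.mem_piFinset.mp hmem) j
      rw [if_pos rfl] at this
      simpa using this
    refine ⟨Finset.mem_powerset.mpr (Finset.subset_univ _), isInForest_arcs hg, ?_, ?_⟩
    · rw [arcs_rel]; exact hr
    · intro e he h1
      rw [mem_arcs] at he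
      rw [h1, hcj] at he
      exact nomatch he
  · intro c₁ _ c₂ _ h
    exact arcs_inj h
  · intro A hA
    rw [Finset.mem_filter] at hA
    obtain ⟨-, hF, hT⟩ := hA
    have harcs := arcs_cOf (W := W) hF.2.1
    have hnoj : ¬ ∃ b, (j, b) ∈ A := by
      rintro ⟨b, hb⟩
      exact hT.2 _ hb rfl
    refine ⟨cOf A, ?_, harcs⟩
    rw [Finset.mem_filter]
    refine ⟨?_, good_cOf hF, ?_⟩
    · rw [Fintype.mem_piFinset]
      intro k
      by_cases hk : k = j
      · subst hk
        rw [if_pos rfl, cOf]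
        simp [dif_neg hnoj]
      · rw [if_neg hk]
        exact Finset.mem_univ _
    · have := hT.1
      rw [← arcs_rel (cOf A), harcs]
      exact this
  · intro c _
    exact weight_arcs W c

end MainLemmas

end MFT

/-- Matrix-forest theorem: `Q = adj(I + L)`, `σ = det(I + L)`, and
`J = σ⁻¹ Q = (I + L)⁻¹`. -/
theorem matrix_forest_theorem {n : ℕ} (W : Matrix (Fin n) (Fin n) ℝ)
    (hn : 1 < n) (hW : ∀ i j, 0 ≤ W i j) (hdiag : ∀ i, W i i = 0) :
    forestMatrixTot W = (1 + lap W).adjugate ∧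
    sigmaTot W = (1 + lap W).det ∧
    (sigmaTot W)⁻¹ • forestMatrixTot W = (1 + lap W)⁻¹ := by
  have hdet := MFT.det_eq W hW
  have hadj := MFT.adj_eq W hW
  refine ⟨hadj, hdet, ?_⟩
  rw [Matrix.inv_def, Ring.inverse_eq_inv, ← hdet, ← hadj]
end

section
/- For every real τ, adj(I + τL) = Q(τ) := Σ_{k=0}^{n−d} Q_k τ^k and det(I + τL) = σ(τ) := Σ_{k=0}^{n−d} σ_k τ^k, where Q_k are the in-forest matrices and σ_k the in-forest weights of Γ. -/
open Matrix Finset Polynomial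

namespace PMFT

variable {n : ℕ}

def arcR (f : Fin n → Option (Fin n)) : Fin n → Fin n → Prop := fun a b => f a = some b

def stepF (f : Fin n → Option (Fin n)) : Option (Fin n) → Option (Fin n) := fun o => o.bind f

lemma stepF_none (f : Fin n → Option (Fin n)) (k : ℕ) : (stepF f)^[k] none = none := by
  induction k with
  | zero => rfl
  | succ k ih => rw [Function.iterate_succ_apply, show stepF f none = none from rfl, ih]

lemma stepF_some (f : Fin n → Option (Fin n)) (i : Fin n) : stepF f (some i) = f i := rfl

lemma iter_ne_none_of_le {f : Fin n → Option (Fin n)} {o : Option (Fin n)} {k l : ℕ}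
    (hkl : k ≤ l) (h : (stepF f)^[l] o ≠ none) : (stepF f)^[k] o ≠ none := by
  intro hk
  obtain ⟨m, rfl⟩ := Nat.exists_eq_add_of_le hkl
  rw [add_comm, Function.iterate_add_apply, hk, stepF_none] at h
  exact h rfl

lemma iter_reflTransGen {f : Fin n → Option (Fin n)} :
    ∀ (k : ℕ) {i j : Fin n}, (stepF f)^[k] (some i) = some j →
      Relation.ReflTransGen (arcR f) i j := by
  intro k
  induction k with
  | zero =>
    intro i j h
    simp only [Function.iterate_zero, id_eq, Option.some.injEq] at h
    exact h ▸ Relation.ReflTransGen.refl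
  | succ k ih =>
    intro i j h
    rw [Function.iterate_succ_apply, stepF_some] at h
    cases hf : f i with
    | none => rw [hf, stepF_none] at h; exact absurd h (by simp)
    | some b =>
      rw [hf] at h
      exact Relation.ReflTransGen.head hf (ih h)

lemma reflTransGen_iter {f : Fin n → Option (Fin n)} {i j : Fin n}
    (h : Relation.ReflTransGen (arcR f) i j) : ∃ k, (stepF f)^[k] (some i) = some j := by
  induction h with
  | refl => exact ⟨0, rfl⟩
  | tail _ hbc ih =>
    obtain ⟨k, hk⟩ := ih
    exact ⟨k + 1, by rw [Function.iterate_succ_apply', hk]; exact hbc⟩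

lemma iter_transGen {f : Fin n → Option (Fin n)} {i j : Fin n} {k : ℕ} (hk : k ≠ 0)
    (h : (stepF f)^[k] (some i) = some j) : Relation.TransGen (arcR f) i j := by
  obtain ⟨k, rfl⟩ := Nat.exists_eq_succ_of_ne_zero hk
  rw [Function.iterate_succ_apply, stepF_some] at h
  cases hf : f i with
  | none => rw [hf, stepF_none] at h; exact absurd h (by simp)
  | some b =>
    rw [hf] at h
    exact Relation.TransGen.head' hf (iter_reflTransGen k h)

def Acyc (f : Fin n → Option (Fin n)) : Prop := ∀ i, ¬ Relation.TransGen (arcR f) i i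

lemma iter_unique {f : Fin n → Option (Fin n)} (hf : Acyc f) {i j : Fin n} {k l : ℕ}
    (hk : (stepF f)^[k] (some i) = some j) (hl : (stepF f)^[l] (some i) = some j) : k = l := by
  have key : ∀ {a b : ℕ}, a ≤ b → (stepF f)^[a] (some i) = some j →
      (stepF f)^[b] (some i) = some j → a = b := by
    intro a b hab ha hb
    by_contra hne
    obtain ⟨m, rfl⟩ := Nat.exists_eq_add_of_le hab
    rw [add_comm, Function.iterate_add_apply, ha] at hb
    exact hf j (iter_transGen (by omega) hb)
  rcases le_total k l with h | h
  · exact key h hk hl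
  · exact (key h hl hk).symm

lemma iter_n_eq_none {f : Fin n → Option (Fin n)} (hf : Acyc f) (i : Fin n) :
    (stepF f)^[n] (some i) = none := by
  by_contra h
  have hall : ∀ k : Fin (n + 1), ∃ x, (stepF f)^[(k : ℕ)] (some i) = some x := by
    intro k
    have hne : (stepF f)^[(k : ℕ)] (some i) ≠ none :=
      iter_ne_none_of_le (by omega) h
    exact Option.ne_none_iff_exists'.mp hne
  obtain ⟨k, l, hkl, heq⟩ := Fintype.exists_ne_map_eq_of_card_lt
    (fun k : Fin (n + 1) => (hall k).choose) (by simp)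
  have hk := (hall k).choose_spec
  have hl := (hall l).choose_spec
  rw [heq] at hk
  exact hkl (Fin.ext (iter_unique hf hk hl))

noncomputable def fN (f : Fin n → Option (Fin n)) : Matrix (Fin n) (Fin n) ℝ :=
  Matrix.of fun i j => if f i = some j then 1 else 0

lemma fN_pow (f : Fin n → Option (Fin n)) (k : ℕ) :
    fN f ^ k = Matrix.of fun i j =>
      if (stepF f)^[k] (some i) = some j then (1 : ℝ) else 0 := by
  induction k with
  | zero =>
    ext i j
    simp [Matrix.one_apply, eq_comm]
  | succ k ih =>
    rw [pow_succ, ih]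
    ext i j
    rw [Matrix.mul_apply]
    simp only [Matrix.of_apply]
    rw [Function.iterate_succ_apply']
    cases hm : (stepF f)^[k] (some i) with
    | none =>
      rw [show stepF f none = none from rfl]
      simp [hm]
    | some m =>
      rw [Finset.sum_eq_single m]
      · simp [hm, fN, stepF_some]
        congr
      · intro b _ hb
        simp [hm, Option.some_inj, Ne.symm hb]
      · intro habs; exact absurd (Finset.mem_univ m) habs

lemma fN_pow_n {f : Fin n → Option (Fin n)} (hf : Acyc f) : fN f ^ n = 0 := by
  rw [fN_pow]
  ext i j
  simp [iter_n_eq_none hf i]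

lemma det_one_sub_of_isNilpotent {N : Matrix (Fin n) (Fin n) ℝ} (h : IsNilpotent N) :
    (1 - N).det = 1 := by
  have hu : IsUnit N.charpolyRev := Matrix.isUnit_charpolyRev_of_isNilpotent h
  obtain ⟨r, -, hr⟩ := Polynomial.isUnit_iff.mp hu
  have h0 : Polynomial.eval 0 N.charpolyRev = 1 := Matrix.eval_charpolyRev
  have hr1 : r = 1 := by
    rw [← hr] at h0
    simpa using h0
  have hmap : (1 - (Polynomial.X : Polynomial ℝ) • N.map Polynomial.C).map
      (Polynomial.evalRingHom 1) = 1 - N := by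
    ext i j
    by_cases hij : i = j <;>
      simp [hij, Matrix.map_apply, Matrix.sub_apply, Matrix.smul_apply, Matrix.one_apply,
        Matrix.map_apply, smul_eq_mul]
  have hdet : (1 - N).det = Polynomial.eval 1 N.charpolyRev := by
    rw [Matrix.charpolyRev, ← Polynomial.coe_evalRingHom, RingHom.map_det, RingHom.mapMatrix_apply, hmap]
  rw [hdet, ← hr, hr1]
  simp

noncomputable def fG (f : Fin n → Option (Fin n)) : Matrix (Fin n) (Fin n) ℝ :=
  ∑ k ∈ Finset.range n, fN f ^ k

lemma fG_mul_fB {f : Fin n → Option (Fin n)} (hf : Acyc f) :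
    fG f * (1 - fN f) = 1 := by
  have h := geom_sum_mul (fN f) n
  rw [fN_pow_n hf, zero_sub] at h
  calc fG f * (1 - fN f) = -(fG f * (fN f - 1)) := by rw [← mul_neg, neg_sub]
    _ = 1 := by rw [fG, h, neg_neg]

lemma fB_mul_fG {f : Fin n → Option (Fin n)} (hf : Acyc f) :
    (1 - fN f) * fG f = 1 :=
  mul_eq_one_comm.mp (fG_mul_fB hf)

lemma det_fB {f : Fin n → Option (Fin n)} (hf : Acyc f) : (1 - fN f).det = 1 :=
  det_one_sub_of_isNilpotent ⟨n, fN_pow_n hf⟩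

lemma adjugate_fB {f : Fin n → Option (Fin n)} (hf : Acyc f) :
    (1 - fN f).adjugate = fG f := by
  calc (1 - fN f).adjugate = (1 - fN f).adjugate * ((1 - fN f) * fG f) := by
        rw [fB_mul_fG hf, mul_one]
    _ = ((1 - fN f).adjugate * (1 - fN f)) * fG f := by rw [mul_assoc]
    _ = fG f := by rw [Matrix.adjugate_mul, det_fB hf]; simp

open scoped Classical in
lemma fG_apply {f : Fin n → Option (Fin n)} (hf : Acyc f) (i j : Fin n) :
    fG f i j = if Relation.ReflTransGen (arcR f) i j then 1 else 0 := by
  rw [fG, Matrix.sum_apply]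
  simp only [fN_pow, Matrix.of_apply]
  by_cases h : Relation.ReflTransGen (arcR f) i j
  · obtain ⟨k0, hk0⟩ := reflTransGen_iter h
    have hk0n : k0 < n := by
      by_contra hge
      have := iter_ne_none_of_le (le_of_not_gt hge) (fun hc => by rw [hc] at hk0; exact absurd hk0 (by simp))
      exact this (iter_n_eq_none hf i)
    rw [if_pos h, Finset.sum_eq_single k0]
    · simp [hk0]
    · intro b _ hb
      rw [if_neg]
      intro hcon
      exact hb (iter_unique hf hcon hk0)
    · intro habs; exact absurd (Finset.mem_range.mpr hk0n) habs
  · rw [if_neg h, Finset.sum_eq_zero]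
    intro k _
    rw [if_neg]
    intro hcon
    exact h (iter_reflTransGen k hcon)


open scoped Classical in
lemma det_eq_zero_of_cycle {f : Fin n → Option (Fin n)} {i0 : Fin n}
    (hcyc : Relation.TransGen (arcR f) i0 i0) (M : Matrix (Fin n) (Fin n) ℝ)
    (hM : ∀ x, Relation.ReflTransGen (arcR f) i0 x → f x ≠ none → M x = (1 - fN f) x) :
    M.det = 0 := by
  -- a positive period m
  obtain ⟨b, hb, hbi0⟩ := Relation.TransGen.head'_iff.mp hcyc
  obtain ⟨k1, hk1⟩ := reflTransGen_iter hbi0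
  set m := k1 + 1 with hm
  have hmper : (stepF f)^[m] (some i0) = some i0 := by
    rw [hm, Function.iterate_succ_apply, stepF_some, hb]
    exact hk1
  have hper : ∀ q : ℕ, (stepF f)^[q * m] (some i0) = some i0 := by
    intro q
    induction q with
    | zero => rw [Nat.zero_mul]; rfl
    | succ q ih =>
      rw [Nat.succ_mul, Function.iterate_add_apply, hmper, ih]
  -- the reachable set
  set S : Finset (Fin n) :=
    Finset.univ.filter (fun x => Relation.ReflTransGen (arcR f) i0 x) with hS
  have hmemS : ∀ x, x ∈ S ↔ Relation.ReflTransGen (arcR f) i0 x := by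
    intro x; simp [hS]
  -- every reachable point has a next point which is reachable
  have hnext : ∀ x ∈ S, ∃ y, f x = some y ∧ y ∈ S := by
    intro x hx
    obtain ⟨k, hk⟩ := reflTransGen_iter ((hmemS x).mp hx)
    have hle : k + 1 ≤ (k + 1) * m := Nat.le_mul_of_pos_right _ (by omega)
    have hne : (stepF f)^[k + 1] (some i0) ≠ none :=
      iter_ne_none_of_le hle (by rw [hper (k + 1)]; exact fun h => nomatch h)
    rw [Function.iterate_succ_apply', hk, stepF_some] at hne
    obtain ⟨y, hy⟩ := Option.ne_none_iff_exists'.mp hne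
    refine ⟨y, hy, (hmemS y).mpr (iter_reflTransGen (k + 1) ?_)⟩
    rw [Function.iterate_succ_apply', hk, stepF_some, hy]
  -- every reachable point has a reachable predecessor
  have hpred : ∀ y ∈ S, ∃ x ∈ S, f x = some y := by
    intro y hy
    obtain ⟨k, hk⟩ := reflTransGen_iter ((hmemS y).mp hy)
    have hkm : (stepF f)^[k + m] (some i0) = some y := by
      rw [Function.iterate_add_apply, hmper, hk]
    have hke : k + m = (k + m - 1) + 1 := by omega
    rw [hke, Function.iterate_succ_apply'] at hkm
    cases hx : (stepF f)^[k + m - 1] (some i0) with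
    | none => rw [hx] at hkm; exact absurd hkm (by simp [stepF])
    | some x =>
      rw [hx, stepF_some] at hkm
      exact ⟨x, (hmemS x).mpr (iter_reflTransGen _ hx), hkm⟩
  -- the successor function on S
  set g : Fin n → Fin n := fun x => (f x).getD x with hg
  have hgS : ∀ x ∈ S, f x = some (g x) ∧ g x ∈ S := by
    intro x hx
    obtain ⟨y, hy, hyS⟩ := hnext x hx
    have : g x = y := by rw [hg]; simp [hy]
    rw [this]; exact ⟨hy, hyS⟩
  have hgsurj : ∀ y ∈ S, ∃ x, ∃ _ : x ∈ S, g x = y := by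
    intro y hy
    obtain ⟨x, hxS, hxy⟩ := hpred y hy
    exact ⟨x, hxS, by rw [hg]; simp [hxy]⟩
  -- the vector
  set v : Fin n → ℝ := fun x => if x ∈ S then 1 else 0 with hv
  have hv0 : v ≠ 0 := by
    intro hcon
    have : v i0 = 0 := congrFun hcon i0
    rw [hv] at this
    simp [(hmemS i0).mpr Relation.ReflTransGen.refl] at this
  have hvec : v ᵥ* M = 0 := by
    funext j'
    have hrow : ∀ x ∈ S, M x j' =
        (if x = j' then 1 else 0) - (if g x = j' then 1 else 0) := by
      intro x hx
      obtain ⟨hfx, -⟩ := hgS x hx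
      have := hM x ((hmemS x).mp hx) (by rw [hfx]; exact fun h => nomatch h)
      have hxj : M x j' = (1 - fN f) x j' := congrFun this j'
      rw [hxj]
      simp only [Matrix.sub_apply, Matrix.one_apply, fN, Matrix.of_apply, hfx,
        Option.some_inj]
    have : (v ᵥ* M) j' = ∑ x, v x * M x j' := by
      simp [Matrix.vecMul, dotProduct]
    rw [this]
    have h1 : ∑ x, v x * M x j' = ∑ x ∈ S, M x j' := by
      simp only [hv, ite_mul, one_mul, zero_mul]
      rw [Finset.sum_ite_mem, Finset.univ_inter]
    rw [h1, Finset.sum_congr rfl hrow, Finset.sum_sub_distrib]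
    have h2 : (∑ x ∈ S, if x = j' then (1:ℝ) else 0) = if j' ∈ S then 1 else 0 :=
      Finset.sum_ite_eq' S j' (fun _ => 1)
    have hginj : ∀ ⦃a₁⦄, a₁ ∈ S → ∀ ⦃a₂⦄, a₂ ∈ S → g a₁ = g a₂ → a₁ = a₂ :=
      Finset.inj_on_of_surj_on_of_card_le (fun x _ => g x)
        (fun x hx => (hgS x hx).2) hgsurj le_rfl
    have h3 : (∑ x ∈ S, if g x = j' then (1:ℝ) else 0)
        = ∑ y ∈ S, if y = j' then (1:ℝ) else 0 :=
      Finset.sum_bij (fun x _ => g x) (fun x hx => (hgS x hx).2)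
        hginj hgsurj (fun x hx => rfl)
    rw [h2, h3, Finset.sum_ite_eq' S j' (fun _ => 1), sub_self]
    rfl
  exact Matrix.exists_vecMul_eq_zero_iff.mp ⟨v, hv0, hvec⟩


lemma det_fB_cyclic {f : Fin n → Option (Fin n)} (hf : ¬ Acyc f) : (1 - fN f).det = 0 := by
  rw [Acyc] at hf
  push_neg at hf
  obtain ⟨i0, h⟩ := hf
  exact det_eq_zero_of_cycle h _ (fun x _ _ => rfl)

/-- The scalar factor attached to vertex `i` by the choice `f`. -/
noncomputable def vS (τ : ℝ) (W : Matrix (Fin n) (Fin n) ℝ)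
    (f : Fin n → Option (Fin n)) (i : Fin n) : ℝ :=
  match f i with
  | none => 1
  | some j => τ * W i j

/-- The summands in the row decomposition of `1 + τ • lap W`. -/
noncomputable def rRow (τ : ℝ) (W : Matrix (Fin n) (Fin n) ℝ) (i : Fin n) :
    Option (Fin n) → (Fin n → ℝ)
  | none => fun m => if i = m then 1 else 0
  | some j => fun m => τ * W i j * ((if i = m then 1 else 0) - (if j = m then 1 else 0))

lemma row_decomp (τ : ℝ) (W : Matrix (Fin n) (Fin n) ℝ) (i : Fin n) :
    ((1 : Matrix (Fin n) (Fin n) ℝ) + τ • lap W) i = ∑ o : Option (Fin n), rRow τ W i o := by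
  funext m
  rw [Finset.sum_apply, Fintype.sum_option]
  simp only [rRow, Matrix.add_apply, Matrix.smul_apply, Matrix.one_apply, lap,
    Matrix.sub_apply, Matrix.diagonal_apply, smul_eq_mul]
  by_cases him : i = m
  · subst him
    simp only [if_pos rfl]
    have hj : ∀ j, τ * W i j * ((1 : ℝ) - if j = i then 1 else 0)
        = τ * W i j - (if j = i then τ * W i i else 0) := by
      intro j; by_cases hji : j = i <;> simp [hji]
    simp only [hj, Finset.sum_sub_distrib,
      Finset.sum_ite_eq' Finset.univ i (fun _ => τ * W i i), Finset.mem_univ, if_true,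
      mul_sub, Finset.mul_sum]
  · simp only [if_neg him]
    have hj : ∀ j, τ * W i j * ((0 : ℝ) - if j = m then 1 else 0)
        = 0 - (if j = m then τ * W i m else 0) := by
      intro j; by_cases hjm : j = m <;> simp [hjm]
    simp only [hj, Finset.sum_sub_distrib, Finset.sum_const_zero,
      Finset.sum_ite_eq' Finset.univ m (fun _ => τ * W i m), Finset.mem_univ, if_true,
      mul_sub, mul_zero]

lemma rRow_eq (τ : ℝ) (W : Matrix (Fin n) (Fin n) ℝ) (f : Fin n → Option (Fin n)) (i : Fin n) :
    rRow τ W i (f i) = fun m => vS τ W f i * (1 - fN f) i m := by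
  funext m
  cases hf : f i with
  | none =>
    simp [rRow, vS, hf, Matrix.sub_apply, Matrix.one_apply, fN]
  | some j =>
    simp only [rRow, vS, hf, Matrix.sub_apply, Matrix.one_apply, fN, Matrix.of_apply,
      Option.some_inj]

lemma det_eq_alt (M : Matrix (Fin n) (Fin n) ℝ) :
    M.det = Matrix.detRowAlternating M := rfl

open scoped Classical in
lemma det_expand (τ : ℝ) (W : Matrix (Fin n) (Fin n) ℝ) :
    ((1 : Matrix (Fin n) (Fin n) ℝ) + τ • lap W).det
      = ∑ f : Fin n → Option (Fin n), (if Acyc f then ∏ i, vS τ W f i else 0) := by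
  have h1 : ((1 : Matrix (Fin n) (Fin n) ℝ) + τ • lap W)
      = Matrix.of fun i => ∑ o : Option (Fin n), rRow τ W i o := by
    ext i m
    exact congrFun (row_decomp τ W i) m
  rw [h1, det_eq_alt]
  rw [← AlternatingMap.coe_multilinearMap]
  erw [Matrix.detRowAlternating.toMultilinearMap.map_sum (g := fun i o => rRow τ W i o)]
  refine Finset.sum_congr rfl (fun f _ => ?_)
  have h2 : (fun i => rRow τ W i (f i))
      = Matrix.of fun i m => vS τ W f i * (1 - fN f) i m := by
    funext i
    exact rRow_eq τ W f i
  show Matrix.det (fun i => rRow τ W i (f i)) = _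
  rw [h2, Matrix.det_mul_column]
  by_cases hf : Acyc f
  · rw [det_fB hf, if_pos hf, mul_one]
  · rw [det_fB_cyclic hf, if_neg hf, mul_zero]


def Phi (f : Fin n → Option (Fin n)) : Finset (Fin n × Fin n) :=
  Finset.univ.filter (fun e => f e.1 = some e.2)

lemma mem_Phi {f : Fin n → Option (Fin n)} {e : Fin n × Fin n} :
    e ∈ Phi f ↔ f e.1 = some e.2 := by
  simp [Phi]

lemma rel_Phi (f : Fin n → Option (Fin n)) :
    (fun a b => (a, b) ∈ Phi f) = arcR f := by
  funext a b
  exact propext mem_Phi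

lemma acyc_Phi_iff (f : Fin n → Option (Fin n)) :
    (∀ i, ¬ Relation.TransGen (fun a b => (a, b) ∈ Phi f) i i) ↔ Acyc f := by
  rw [rel_Phi]; rfl

lemma root_Phi_iff (f : Fin n → Option (Fin n)) (j : Fin n) :
    (∀ e ∈ Phi f, e.1 ≠ j) ↔ f j = none := by
  constructor
  · intro h
    cases hfj : f j with
    | none => rfl
    | some b => exact absurd rfl (h (j, b) (mem_Phi.mpr hfj))
  · intro h e he hej
    rw [mem_Phi, hej, h] at he
    exact absurd he (by simp)

lemma inTree_Phi_iff (f : Fin n → Option (Fin n)) (i j : Fin n) :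
    InTreeRootedAt (Phi f) i j ↔ Relation.ReflTransGen (arcR f) i j ∧ f j = none := by
  unfold InTreeRootedAt
  rw [rel_Phi, root_Phi_iff]

lemma Phi_injective : Function.Injective (Phi (n := n)) := by
  intro f f' h
  funext i
  cases hfi : f i with
  | none =>
    cases hf'i : f' i with
    | none => rfl
    | some b =>
      have hb : (i, b) ∈ Phi f := h ▸ mem_Phi.mpr hf'i
      rw [mem_Phi, hfi] at hb
      exact absurd hb (by simp)
  | some b =>
    have hb : (i, b) ∈ Phi f' := h ▸ mem_Phi.mpr hfi
    rw [mem_Phi] at hb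
    rw [hb]

open scoped Classical in
lemma prod_vS (τ : ℝ) (W : Matrix (Fin n) (Fin n) ℝ) (f : Fin n → Option (Fin n)) :
    ∏ i, vS τ W f i = τ ^ (Phi f).card * forestWeight W (Phi f) := by
  have h1 : ∏ i, vS τ W f i = ∏ i ∈ Finset.univ.filter (fun i => (f i).isSome), vS τ W f i := by
    symm
    apply Finset.prod_subset (Finset.filter_subset _ _)
    intro x _ hx
    simp only [Finset.mem_filter, Finset.mem_univ, true_and] at hx
    cases hfx : f x with
    | none => simp [vS, hfx]
    | some b => rw [hfx] at hx; simp at hx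
  have h2 : ∏ i ∈ Finset.univ.filter (fun i => (f i).isSome), vS τ W f i
      = ∏ e ∈ Phi f, (τ * W e.1 e.2) := by
    apply Finset.prod_bij (fun a _ => (a, (f a).getD a))
    · intro a ha
      simp only [Finset.mem_filter, Finset.mem_univ, true_and] at ha
      rw [mem_Phi]
      cases hfa : f a with
      | none => rw [hfa] at ha; simp at ha
      | some b => simp [hfa]
    · intro a₁ _ a₂ _ h
      exact (Prod.mk.injEq _ _ _ _ ▸ h).1
    · intro e he
      rw [mem_Phi] at he
      refine ⟨e.1, ?_, ?_⟩
      · simp [he]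
      · rw [he]; simp
    · intro a ha
      simp only [Finset.mem_filter, Finset.mem_univ, true_and] at ha
      cases hfa : f a with
      | none => rw [hfa] at ha; simp at ha
      | some b => simp [vS, hfa]
  rw [h1, h2, Finset.prod_mul_distrib, Finset.prod_const, forestWeight]

lemma outdeg_Phi (f : Fin n → Option (Fin n)) (i : Fin n) :
    ((Phi f).filter (fun e => e.1 = i)).card ≤ 1 := by
  rw [Finset.card_le_one]
  intro a ha b hb
  simp only [Finset.mem_filter, mem_Phi] at ha hb
  obtain ⟨ha1, ha2⟩ := ha
  obtain ⟨hb1, hb2⟩ := hb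
  rw [ha2] at ha1
  rw [hb2] at hb1
  exact Prod.ext (ha2.trans hb2.symm) (Option.some_inj.mp (ha1.symm.trans hb1))

open scoped Classical in
lemma prod_vS_eq_zero {W : Matrix (Fin n) (Fin n) ℝ} {f : Fin n → Option (Fin n)}
    (hW : ∀ i j, 0 ≤ W i j) (hac : Acyc f) (hnf : ¬ IsInForest W (Phi f)) :
    forestWeight W (Phi f) = 0 := by
  have c2 := outdeg_Phi f
  have c3 : ∀ i, ¬ Relation.TransGen (fun a b => (a, b) ∈ Phi f) i i :=
    (acyc_Phi_iff f).mpr hac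
  have h1 : ¬ ∀ e ∈ Phi f, e.1 ≠ e.2 ∧ 0 < W e.1 e.2 :=
    fun hall => hnf ⟨hall, c2, c3⟩
  push_neg at h1
  obtain ⟨e, he, hne⟩ := h1
  by_cases hee : e.1 = e.2
  · exfalso
    have hmem : ((e.1 : Fin n), e.1) ∈ Phi f := by
      rw [mem_Phi]
      have h := mem_Phi.mp he
      rw [← hee] at h
      exact h
    exact c3 e.1 (Relation.TransGen.single hmem)
  · have hz : W e.1 e.2 = 0 := le_antisymm (hne hee) (hW _ _)
    exact Finset.prod_eq_zero he hz

open scoped Classical in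
lemma term_det {W : Matrix (Fin n) (Fin n) ℝ} (hW : ∀ i j, 0 ≤ W i j) (τ : ℝ)
    (f : Fin n → Option (Fin n)) :
    (if Acyc f then ∏ i, vS τ W f i else 0)
      = if IsInForest W (Phi f) then τ ^ (Phi f).card * forestWeight W (Phi f) else 0 := by
  by_cases hac : Acyc f
  · rw [if_pos hac, prod_vS]
    by_cases hF : IsInForest W (Phi f)
    · rw [if_pos hF]
    · rw [if_neg hF, prod_vS_eq_zero hW hac hF, mul_zero]
  · rw [if_neg hac, if_neg]
    intro hF
    exact hac ((acyc_Phi_iff f).mp hF.2.2)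

/-- Out-uniqueness in a forest. -/
lemma forest_out_unique {W : Matrix (Fin n) (Fin n) ℝ} {A : Finset (Fin n × Fin n)}
    (hF : IsInForest W A) {a b b' : Fin n} (hb : (a, b) ∈ A) (hb' : (a, b') ∈ A) :
    b = b' := by
  have h := Finset.card_le_one.mp (hF.2.1 a)
  have h1 : ((a, b) : Fin n × Fin n) ∈ A.filter (fun e => e.1 = a) := by
    simp [hb]
  have h2 : ((a, b') : Fin n × Fin n) ∈ A.filter (fun e => e.1 = a) := by
    simp [hb']
  have := h _ h1 _ h2
  exact congrArg Prod.snd this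

open scoped Classical in
/-- Inverse of `Phi` on functional arc-sets. -/
noncomputable def invPhi (A : Finset (Fin n × Fin n)) : Fin n → Option (Fin n) :=
  fun i => if h : ∃ j, (i, j) ∈ A then some h.choose else none

open scoped Classical in
lemma Phi_invPhi {W : Matrix (Fin n) (Fin n) ℝ} {A : Finset (Fin n × Fin n)}
    (hF : IsInForest W A) : Phi (invPhi A) = A := by
  ext e
  obtain ⟨a, b⟩ := e
  rw [mem_Phi]
  unfold invPhi
  constructor
  · intro hab
    split_ifs at hab with h
    · have hc := h.choose_spec
      rw [Option.some_inj] at hab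
      rwa [hab] at hc
  · intro hab
    have h : ∃ j, ((a : Fin n), j) ∈ A := ⟨b, hab⟩
    rw [dif_pos h, Option.some_inj]
    exact forest_out_unique hF h.choose_spec hab

open scoped Classical in
/-- Transport of a sum over functional graphs to a sum over forests. -/
lemma sum_phi (τ : ℝ) (W : Matrix (Fin n) (Fin n) ℝ) (P : Finset (Fin n × Fin n) → Prop) :
    (∑ f : Fin n → Option (Fin n),
        if IsInForest W (Phi f) ∧ P (Phi f) then τ ^ (Phi f).card * forestWeight W (Phi f) else 0)
      = ∑ A ∈ Finset.univ.powerset.filter (fun A => IsInForest W A ∧ P A),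
          τ ^ A.card * forestWeight W A := by
  rw [← Finset.sum_filter]
  apply Finset.sum_bij (fun f _ => Phi f)
  · intro f hf
    rw [Finset.mem_filter] at hf ⊢
    exact ⟨Finset.mem_powerset.mpr (Finset.subset_univ _), hf.2⟩
  · intro f₁ _ f₂ _ h
    exact Phi_injective h
  · intro A hA
    rw [Finset.mem_filter] at hA
    refine ⟨invPhi A, ?_, Phi_invPhi hA.2.1⟩
    rw [Finset.mem_filter, Phi_invPhi hA.2.1]
    exact ⟨Finset.mem_univ _, hA.2⟩
  · intro f _
    rfl

open scoped Classical in
lemma sum_forest_by_card (τ : ℝ) (W : Matrix (Fin n) (Fin n) ℝ)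
    (P : Finset (Fin n × Fin n) → Prop) :
    (∑ A ∈ Finset.univ.powerset.filter (fun A => IsInForest W A ∧ P A),
        τ ^ A.card * forestWeight W A)
      = ∑ k ∈ Finset.range (maxForestCard W + 1),
          (∑ A ∈ Finset.univ.powerset.filter
              (fun A => IsInForest W A ∧ A.card = k ∧ P A), forestWeight W A) * τ ^ k := by
  have hmap : ∀ A ∈ Finset.univ.powerset.filter (fun A => IsInForest W A ∧ P A),
      A.card ∈ Finset.range (maxForestCard W + 1) := by
    intro A hA
    rw [Finset.mem_filter] at hA
    rw [Finset.mem_range, Nat.lt_succ_iff]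
    exact Finset.le_sup (f := Finset.card)
      (Finset.mem_filter.mpr ⟨hA.1, hA.2.1⟩)
  rw [← Finset.sum_fiberwise_of_maps_to hmap (fun A => τ ^ A.card * forestWeight W A)]
  refine Finset.sum_congr rfl (fun k hk => ?_)
  have hset : (Finset.univ.powerset.filter (fun A => IsInForest W A ∧ P A)).filter
        (fun A => A.card = k)
      = Finset.univ.powerset.filter (fun A => IsInForest W A ∧ A.card = k ∧ P A) := by
    rw [Finset.filter_filter]
    apply Finset.filter_congr
    intro A _
    tauto
  rw [hset]
  rw [Finset.sum_mul]
  refine Finset.sum_congr rfl (fun A hA => ?_)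
  rw [Finset.mem_filter] at hA
  rw [hA.2.2.1]
  ring


open scoped Classical in
lemma adj_expand (τ : ℝ) (W : Matrix (Fin n) (Fin n) ℝ) (i j : Fin n) :
    ((1 : Matrix (Fin n) (Fin n) ℝ) + τ • lap W).adjugate i j
      = ∑ f : Fin n → Option (Fin n),
          (if f j = none ∧ Acyc f ∧ Relation.ReflTransGen (arcR f) i j
           then ∏ i', vS τ W f i' else 0) := by
  rw [Matrix.adjugate_apply]
  set r' : Fin n → Option (Fin n) → (Fin n → ℝ) := fun k o =>
    if k = j then (if o = none then Pi.single i 1 else 0) else rRow τ W k o with hr'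
  have h1 : ((1 + τ • lap W).updateRow j (Pi.single i 1))
      = Matrix.of fun k => ∑ o : Option (Fin n), r' k o := by
    ext k m
    show _ = (∑ o : Option (Fin n), r' k o) m
    rw [Finset.sum_apply, Fintype.sum_option]
    by_cases hkj : k = j
    · subst hkj
      rw [Matrix.updateRow_self]
      simp [hr']
    · rw [Matrix.updateRow_ne hkj]
      have := congrFun (row_decomp τ W k) m
      rw [this, Finset.sum_apply, Fintype.sum_option]
      simp [hr', hkj]
  rw [h1, det_eq_alt, ← AlternatingMap.coe_multilinearMap]
  erw [Matrix.detRowAlternating.toMultilinearMap.map_sum (g := fun k o => r' k o)]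
  refine Finset.sum_congr rfl (fun f _ => ?_)
  show Matrix.det (Matrix.of fun k => r' k (f k)) = _
  cases hfj : f j with
  | some b =>
    rw [Matrix.det_eq_zero_of_row_eq_zero j (by
      intro m
      simp [hr', hfj])]
    rw [if_neg (fun hcon => Option.some_ne_none b hcon.1)]
  | none =>
    have hvj : vS τ W f j = 1 := by simp [vS, hfj]
    have h2 : (Matrix.of fun k => r' k (f k)) = Matrix.of fun k m =>
        vS τ W f k * ((1 - fN f).updateRow j (Pi.single i 1)) k m := by
      ext k m
      by_cases hkj : k = j
      · subst hkj
        simp [hr', hfj, Matrix.updateRow_self, hvj]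
      · simp only [hr', Matrix.of_apply, if_neg hkj, Matrix.updateRow_ne hkj]
        exact congrFun (rRow_eq τ W f k) m
    rw [h2, Matrix.det_mul_column]
    have h3 : ((1 - fN f).updateRow j (Pi.single i 1)).det
        = if Acyc f ∧ Relation.ReflTransGen (arcR f) i j then 1 else 0 := by
      by_cases hac : Acyc f
      · rw [← Matrix.adjugate_apply, adjugate_fB hac, fG_apply hac]
        by_cases hrt : Relation.ReflTransGen (arcR f) i j
        · rw [if_pos hrt, if_pos ⟨hac, hrt⟩]
        · rw [if_neg hrt, if_neg (fun hc => hrt hc.2)]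
      · rw [if_neg (fun hc => hac hc.1)]
        rw [Acyc] at hac
        push_neg at hac
        obtain ⟨i0, hcyc⟩ := hac
        apply det_eq_zero_of_cycle hcyc
        intro x _ hfx
        apply Matrix.updateRow_ne
        intro hxj
        rw [hxj] at hfx
        exact hfx hfj
    rw [h3]
    by_cases hq : Acyc f ∧ Relation.ReflTransGen (arcR f) i j
    · rw [if_pos hq, mul_one, if_pos ⟨rfl, hq⟩]
      
    · rw [if_neg hq, mul_zero, if_neg (fun hc => hq hc.2)]


end PMFT


namespace PMFT

open scoped Classical in
lemma term_adj {n : ℕ} {W : Matrix (Fin n) (Fin n) ℝ} (hW : ∀ i j, 0 ≤ W i j) (τ : ℝ)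
    (f : Fin n → Option (Fin n)) (i j : Fin n) :
    (if f j = none ∧ Acyc f ∧ Relation.ReflTransGen (arcR f) i j
      then ∏ i', vS τ W f i' else 0)
      = if IsInForest W (Phi f) ∧ InTreeRootedAt (Phi f) i j
        then τ ^ (Phi f).card * forestWeight W (Phi f) else 0 := by
  by_cases hc : f j = none ∧ Acyc f ∧ Relation.ReflTransGen (arcR f) i j
  · rw [if_pos hc, prod_vS]
    have hIT : InTreeRootedAt (Phi f) i j := (inTree_Phi_iff f i j).mpr ⟨hc.2.2, hc.1⟩
    by_cases hF : IsInForest W (Phi f)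
    · rw [if_pos ⟨hF, hIT⟩]
    · rw [if_neg (fun h => hF h.1), prod_vS_eq_zero hW hc.2.1 hF, mul_zero]
  · rw [if_neg hc, if_neg]
    intro hcon
    obtain ⟨hF, hIT⟩ := hcon
    obtain ⟨hrt, hroot⟩ := (inTree_Phi_iff f i j).mp hIT
    exact hc ⟨hroot, (acyc_Phi_iff f).mp hF.2.2, hrt⟩

open scoped Classical in
lemma det_final {n : ℕ} {W : Matrix (Fin n) (Fin n) ℝ} (hW : ∀ i j, 0 ≤ W i j) (τ : ℝ) :
    ((1 : Matrix (Fin n) (Fin n) ℝ) + τ • lap W).det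
      = ∑ k ∈ Finset.range (maxForestCard W + 1), sigmaW W k * τ ^ k := by
  rw [det_expand τ W, Finset.sum_congr rfl (fun f _ => term_det hW τ f)]
  have h1 := sum_phi τ W (fun _ => True)
  simp only [and_true] at h1
  rw [h1]
  have h2 := sum_forest_by_card τ W (fun _ => True)
  simp only [and_true] at h2
  rw [h2]
  refine Finset.sum_congr rfl (fun k _ => ?_)
  rw [sigmaW]

open scoped Classical in
lemma adj_final {n : ℕ} {W : Matrix (Fin n) (Fin n) ℝ} (hW : ∀ i j, 0 ≤ W i j) (τ : ℝ) :
    ((1 : Matrix (Fin n) (Fin n) ℝ) + τ • lap W).adjugate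
      = ∑ k ∈ Finset.range (maxForestCard W + 1), τ ^ k • forestMatrix W k := by
  ext i j
  rw [adj_expand τ W i j, Finset.sum_congr rfl (fun f _ => term_adj hW τ f i j)]
  rw [sum_phi τ W (fun A => InTreeRootedAt A i j)]
  rw [sum_forest_by_card τ W (fun A => InTreeRootedAt A i j)]
  rw [Matrix.sum_apply]
  refine Finset.sum_congr rfl (fun k _ => ?_)
  rw [Matrix.smul_apply, smul_eq_mul, forestMatrix, mul_comm]
  rfl

end PMFT

/-- Parametric matrix-forest theorem: for every real `τ`,
`adj(I + τL) = Σ_{k=0}^{n-d} Q_k τ^k` and `det(I + τL) = Σ_{k=0}^{n-d} σ_k τ^k`. -/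
theorem parametric_matrix_forest_theorem {n : ℕ} (W : Matrix (Fin n) (Fin n) ℝ)
    (hn : 1 < n) (hW : ∀ i j, 0 ≤ W i j) (hdiag : ∀ i, W i i = 0) :
    ∀ τ : ℝ,
      (1 + τ • lap W).adjugate =
        ∑ k ∈ Finset.range (maxForestCard W + 1), τ ^ k • forestMatrix W k ∧
      (1 + τ • lap W).det =
        ∑ k ∈ Finset.range (maxForestCard W + 1), sigmaW W k * τ ^ k := by
  intro τ
  exact ⟨PMFT.adj_final hW τ, PMFT.det_final hW τ⟩
end

section
/- The coefficients of the characteristic polynomial det(λI + L) = Σ_{k=0}^n c_{n−k} λ^k of −L satisfy c_k = σ_k, the total weight of in-forests of Γ with k arcs, for all k = 0, …, n. -/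
open Matrix Finset Polynomial

namespace DetForestAux

variable {n : ℕ}

def nxt (f : Fin n → Option (Fin n)) (a : Fin n) : Fin n := (f a).getD a

def frel (f : Fin n → Option (Fin n)) : Fin n → Fin n → Prop := fun a b => f a = some b

noncomputable def uvec (i : Fin n) (c : Option (Fin n)) : Fin n → ℝ :=
  c.elim (Pi.single i 1) (fun j => Pi.single i 1 - Pi.single j 1)

noncomputable def U (f : Fin n → Option (Fin n)) : Matrix (Fin n) (Fin n) ℝ :=
  Matrix.of fun i => uvec i (f i)

lemma transGen_nxt {f : Fin n → Option (Fin n)} {i j : Fin n}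
    (h : Relation.TransGen (frel f) i j) :
    ∃ m : ℕ, 0 < m ∧ (nxt f)^[m] i = j ∧
      ∀ k < m, f ((nxt f)^[k] i) = some ((nxt f)^[k+1] i) := by
  induction h with
  | single hb =>
      replace hb : f _ = some _ := hb
      refine ⟨1, one_pos, ?_, ?_⟩
      · simp [nxt, hb]
      · intro k hk
        interval_cases k
        simp [nxt, hb]
  | tail _ hbc ih =>
      replace hbc : f _ = some _ := hbc
      obtain ⟨m, hm, hiter, harc⟩ := ih
      refine ⟨m + 1, Nat.succ_pos _, ?_, ?_⟩
      · rw [Function.iterate_succ_apply', hiter]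
        simp [nxt, hbc]
      · intro k hk
        rcases Nat.lt_succ_iff_lt_or_eq.mp hk with hk' | rfl
        · exact harc k hk'
        · rw [Function.iterate_succ_apply', hiter]
          simp [nxt, hbc]


lemma det_U_of_cycle {f : Fin n → Option (Fin n)} {i : Fin n}
    (h : Relation.TransGen (frel f) i i) : (U f).det = 0 := by
  classical
  obtain ⟨m, hm, hiter, harc⟩ := transGen_nxt h
  set g := nxt f with hg
  set C : Finset (Fin n) := (Finset.range m).image (fun k => g^[k] i) with hC
  have hiC : i ∈ C := Finset.mem_image.mpr ⟨0, Finset.mem_range.mpr hm, rfl⟩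
  have harcC : ∀ a ∈ C, f a = some (g a) := by
    intro a ha
    obtain ⟨k, hk, rfl⟩ := Finset.mem_image.mp ha
    rw [← Function.iterate_succ_apply' g k i]
    exact harc k (Finset.mem_range.mp hk)
  have himg : C.image g = C := by
    apply Finset.Subset.antisymm
    · intro b hb
      obtain ⟨a, ha, rfl⟩ := Finset.mem_image.mp hb
      obtain ⟨k, hk, rfl⟩ := Finset.mem_image.mp ha
      rw [← Function.iterate_succ_apply' g k i]
      rcases lt_or_eq_of_le (Nat.succ_le_of_lt (Finset.mem_range.mp hk)) with h1 | h1
      · exact Finset.mem_image.mpr ⟨k + 1, Finset.mem_range.mpr h1, rfl⟩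
      · rw [h1, hiter]; exact hiC
    · intro a ha
      obtain ⟨k, hk, rfl⟩ := Finset.mem_image.mp ha
      rcases Nat.eq_zero_or_pos k with rfl | hk0
      · refine Finset.mem_image.mpr ⟨g^[m-1] i,
          Finset.mem_image.mpr ⟨m - 1, Finset.mem_range.mpr (Nat.sub_lt hm one_pos), rfl⟩, ?_⟩
        rw [← Function.iterate_succ_apply' g (m-1) i, Nat.succ_eq_add_one, Nat.sub_add_cancel hm, hiter]
        simp
      · exact Finset.mem_image.mpr ⟨g^[k-1] i,
          Finset.mem_image.mpr ⟨k - 1, Finset.mem_range.mpr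
            (lt_of_le_of_lt (Nat.sub_le _ _) (Finset.mem_range.mp hk)), rfl⟩,
          by rw [← Function.iterate_succ_apply' g (k-1) i, Nat.succ_eq_add_one, Nat.sub_add_cancel hk0]⟩
  have hinj : Set.InjOn g C := Finset.injOn_of_card_image_eq (by rw [himg])
  rw [← Matrix.exists_vecMul_eq_zero_iff]
  refine ⟨fun a => if a ∈ C then (1 : ℝ) else 0, ?_, ?_⟩
  · intro h0
    have := congrFun h0 i
    simp [hiC] at this
  · funext l
    show (∑ a, (if a ∈ C then (1:ℝ) else 0) * U f a l) = 0
    simp only [ite_mul, one_mul, zero_mul]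
    rw [Finset.sum_ite_mem, Finset.univ_inter]
    have hrow : ∀ a ∈ C, U f a l = (Pi.single a 1 : Fin n → ℝ) l - (Pi.single (g a) 1 : Fin n → ℝ) l := by
      intro a ha
      simp [U, uvec, harcC a ha]
    rw [Finset.sum_congr rfl hrow, Finset.sum_sub_distrib]
    have himgsum : ∑ a ∈ C, (Pi.single (g a) 1 : Fin n → ℝ) l = ∑ b ∈ C, (Pi.single b 1 : Fin n → ℝ) l := by
      have hmapsto : ∀ a ∈ C, g a ∈ C := by
        intro a ha
        have h2 : g a ∈ Finset.image g C := Finset.mem_image_of_mem g ha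
        rwa [himg] at h2
      exact Finset.sum_bij (fun a _ => g a)
        (fun a ha => hmapsto a ha)
        (fun a ha b hb hab => hinj ha hb hab)
        (fun b hb => by
          have hb' : b ∈ Finset.image g C := by rwa [himg]
          obtain ⟨a, ha, rfl⟩ := Finset.mem_image.mp hb'
          exact ⟨a, ha, rfl⟩)
        (fun a ha => rfl)
    rw [himgsum, sub_self]


lemma det_U_of_acyclic {f : Fin n → Option (Fin n)}
    (h : ∀ i, ¬ Relation.TransGen (frel f) i i) : (U f).det = 1 := by
  classical
  set ht : Fin n → ℕ :=
    fun a => (univ.filter (fun b => Relation.TransGen (frel f) a b)).card with hht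
  have hkey : ∀ a b : Fin n, f a = some b → ht b < ht a := by
    intro a b hab
    apply Finset.card_lt_card
    rw [Finset.ssubset_def]
    constructor
    · intro c hc
      simp only [Finset.mem_filter, Finset.mem_univ, true_and] at hc ⊢
      exact Relation.TransGen.head hab hc
    · intro hcon
      have hb : b ∈ univ.filter (fun c => Relation.TransGen (frel f) a c) := by
        simp only [Finset.mem_filter, Finset.mem_univ, true_and]
        exact Relation.TransGen.single hab
      have hbb := hcon hb
      simp only [Finset.mem_filter, Finset.mem_univ, true_and] at hbb
      exact h b hbb
  have hdiagU : ∀ a, U f a a = 1 := by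
    intro a
    cases hfa : f a with
    | none => simp [U, uvec, hfa]
    | some b =>
        have hba : b ≠ a := fun e =>
          h a (Relation.TransGen.single (show frel f a a from show f a = some a by rw [hfa, e]))
        simp [U, uvec, hfa, Pi.single_apply, hba]
  have hoff : ∀ x y : Fin n, x ≠ y → ¬ (ht y < ht x) → U f x y = 0 := by
    intro x y hne hnlt
    cases hfx : f x with
    | none =>
        simp [U, uvec, hfx, Pi.single_apply, Ne.symm hne]
    | some b =>
        have hyb : y ≠ b := fun e => hnlt (by rw [e]; exact hkey x b hfx)
        simp [U, uvec, hfx, Pi.single_apply, Ne.symm hne, hyb]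
  have hBT : (U f).BlockTriangular (fun a => OrderDual.toDual (ht a)) := by
    intro x y hxy
    have hlt : ht x < ht y := hxy
    exact hoff x y (fun e => by subst e; exact lt_irrefl _ hlt) (fun hc => lt_asymm hc hlt)
  rw [hBT.det]
  apply Finset.prod_eq_one
  intro a _
  have hblock : (U f).toSquareBlock (fun a => OrderDual.toDual (ht a)) a = 1 := by
    ext x y
    rcases eq_or_ne x y with rfl | hxy
    · simp [Matrix.toSquareBlock_def, hdiagU, Matrix.one_apply]
    · have hxy' : (x : Fin n) ≠ (y : Fin n) := fun e => hxy (Subtype.ext e)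
      have hhxy : ht (x : Fin n) = ht (y : Fin n) := by
        have := x.2.trans y.2.symm
        exact OrderDual.toDual_inj.mp this
      have hU : U f (x : Fin n) (y : Fin n) = 0 :=
        hoff _ _ hxy' (by rw [hhxy]; exact lt_irrefl _)
      simp [Matrix.toSquareBlock_def, hU, Matrix.one_apply, hxy]
  rw [hblock, Matrix.det_one]


noncomputable def fOf (A : Finset (Fin n × Fin n)) : Fin n → Option (Fin n) :=
  fun a => if h : ∃ b, (a, b) ∈ A then some h.choose else none

lemma fOf_eq_some {A : Finset (Fin n × Fin n)}
    (hA : ∀ i : Fin n, (A.filter (fun e => e.1 = i)).card ≤ 1) {a b : Fin n} :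
    fOf A a = some b ↔ (a, b) ∈ A := by
  have huniq : ∀ b b' : Fin n, (a, b) ∈ A → (a, b') ∈ A → b = b' := by
    intro b b' h1 h2
    have h1' : ((a, b) : Fin n × Fin n) ∈ A.filter (fun e => e.1 = a) :=
      Finset.mem_filter.mpr ⟨h1, rfl⟩
    have h2' : ((a, b') : Fin n × Fin n) ∈ A.filter (fun e => e.1 = a) :=
      Finset.mem_filter.mpr ⟨h2, rfl⟩
    have heq := Finset.card_le_one.mp (hA a) _ h1' _ h2'
    exact congrArg Prod.snd heq
  constructor
  · intro hsome
    unfold fOf at hsome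
    split_ifs at hsome with hex
    · have hc := hex.choose_spec
      have hcb : hex.choose = b := Option.some_inj.mp hsome
      rwa [hcb] at hc
  · intro hmem
    have hex : ∃ b, (a, b) ∈ A := ⟨b, hmem⟩
    unfold fOf
    rw [dif_pos hex]
    exact congrArg some (huniq _ _ hex.choose_spec hmem)

lemma fOf_eq_none {A : Finset (Fin n × Fin n)} {a : Fin n} :
    fOf A a = none ↔ ∀ b, (a, b) ∉ A := by
  unfold fOf
  by_cases hex : ∃ b, (a, b) ∈ A
  · rw [dif_pos hex]
    constructor
    · intro h; exact absurd h (by simp)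
    · intro h; exact absurd hex.choose_spec (h _)
  · rw [dif_neg hex]
    push_neg at hex
    simp [hex]

end DetForestAux

/-- The coefficients of `det(λI + L) = Σ_{k=0}^n c_{n-k} λ^k` satisfy `c_k = σ_k`:
`det(λI + L) = Σ_{k=0}^n σ_k λ^{n-k}`. -/
theorem det_charMatrix_eq_sum_sigma {n : ℕ} (W : Matrix (Fin n) (Fin n) ℝ)
    (hn : 1 < n) (hW : ∀ i j, 0 ≤ W i j) (hdiag : ∀ i, W i i = 0) :
    ∀ lam : ℝ,
      (lam • (1 : Matrix (Fin n) (Fin n) ℝ) + lap W).det =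
        ∑ k ∈ Finset.range (n + 1), sigmaW W k * lam ^ (n - k) := by
  classical
  intro lam
  set cf : Fin n → Option (Fin n) → ℝ := fun i c => c.elim lam (fun j => W i j) with hcf
  -- Step 0: row decomposition of the matrix
  have hrows : (lam • (1 : Matrix (Fin n) (Fin n) ℝ) + lap W) =
      Matrix.of (fun i => ∑ c : Option (Fin n), cf i c • DetForestAux.uvec i c) := by
    ext i j
    rw [Matrix.of_apply]
    have hRHS : (∑ c : Option (Fin n), cf i c • DetForestAux.uvec i c) j
        = lam * (if j = i then (1 : ℝ) else 0)
          + ((∑ b, W i b) * (if j = i then (1 : ℝ) else 0) - W i j) := by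
      rw [Finset.sum_apply, Fintype.sum_option]
      simp only [hcf, DetForestAux.uvec, Option.elim, Pi.smul_apply, Pi.sub_apply,
        smul_eq_mul, Pi.single_apply, mul_sub]
      rw [Finset.sum_sub_distrib, ← Finset.sum_mul]
      congr 1
      congr 1
      simp only [mul_ite, mul_one, mul_zero]
      rw [Finset.sum_ite_eq]
      simp
    rw [hRHS]
    simp only [Matrix.add_apply, Matrix.smul_apply, Matrix.one_apply, smul_eq_mul,
      lap, Matrix.sub_apply, Matrix.diagonal_apply]
    by_cases hij : i = j
    · subst hij; simp
    · simp [hij, Ne.symm hij]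
  -- Step 1: multilinear expansion of the determinant
  have hdet1 : (lam • (1 : Matrix (Fin n) (Fin n) ℝ) + lap W).det
      = ∑ f : Fin n → Option (Fin n), (∏ i, cf i (f i)) * (DetForestAux.U f).det := by
    rw [hrows]
    calc (Matrix.of (fun i => ∑ c : Option (Fin n), cf i c • DetForestAux.uvec i c)).det
        = (Matrix.detRowAlternating :
            ((Fin n → ℝ) [⋀^Fin n]→ₗ[ℝ] ℝ)).toMultilinearMap
            (fun i => ∑ c : Option (Fin n), cf i c • DetForestAux.uvec i c) := rfl
      _ = ∑ f : Fin n → Option (Fin n),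
            (Matrix.detRowAlternating :
              ((Fin n → ℝ) [⋀^Fin n]→ₗ[ℝ] ℝ)).toMultilinearMap
              (fun i => cf i (f i) • DetForestAux.uvec i (f i)) :=
          MultilinearMap.map_sum _ _
      _ = ∑ f : Fin n → Option (Fin n), (∏ i, cf i (f i)) * (DetForestAux.U f).det := by
          refine Finset.sum_congr rfl fun f _ => ?_
          rw [MultilinearMap.map_smul_univ]
          rfl
  rw [hdet1]
  have hdetU : ∀ f : Fin n → Option (Fin n),
      (DetForestAux.U f).det =
        if (∀ i, ¬ Relation.TransGen (DetForestAux.frel f) i i) then 1 else 0 := by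
    intro f
    by_cases hf : ∀ i, ¬ Relation.TransGen (DetForestAux.frel f) i i
    · rw [if_pos hf]; exact DetForestAux.det_U_of_acyclic hf
    · rw [if_neg hf]
      push_neg at hf
      obtain ⟨i, hi⟩ := hf
      exact DetForestAux.det_U_of_cycle hi
  set Acyc : (Fin n → Option (Fin n)) → Prop :=
    fun f => ∀ i, ¬ Relation.TransGen (DetForestAux.frel f) i i with hAc
  set Good : (Fin n → Option (Fin n)) → Prop :=
    fun f => Acyc f ∧ ∀ i j, f i = some j → 0 < W i j with hGood
  have step1 : ∑ f : Fin n → Option (Fin n), (∏ i, cf i (f i)) * (DetForestAux.U f).det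
      = ∑ f ∈ univ.filter Acyc, ∏ i, cf i (f i) := by
    rw [Finset.sum_filter]
    refine Finset.sum_congr rfl fun f _ => ?_
    rw [hdetU f]
    by_cases hf : Acyc f
    · rw [if_pos hf, if_pos hf, mul_one]
    · rw [if_neg hf, if_neg hf, mul_zero]
  have step2 : ∑ f ∈ univ.filter Acyc, ∏ i, cf i (f i)
      = ∑ f ∈ univ.filter Good, ∏ i, cf i (f i) := by
    symm
    apply Finset.sum_subset
    · intro f hf
      simp only [Finset.mem_filter, Finset.mem_univ, true_and] at hf ⊢
      exact hf.1
    · intro f hf hnf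
      simp only [Finset.mem_filter, Finset.mem_univ, true_and] at hf hnf
      have hex : ∃ i j, f i = some j ∧ ¬ 0 < W i j := by
        by_contra hc
        push_neg at hc
        exact hnf ⟨hf, fun i j hij => hc i j hij⟩
      obtain ⟨i, j, hij, hw⟩ := hex
      have hw0 : W i j = 0 := le_antisymm (not_lt.mp hw) (hW i j)
      refine Finset.prod_eq_zero (Finset.mem_univ i) ?_
      simp [hcf, hij, hw0]
  -- Step 2: rewrite the RHS as a single sum over forests
  have hforestcard : ∀ A ∈ univ.powerset.filter
      (fun A : Finset (Fin n × Fin n) => IsInForest W A), A.card ∈ Finset.range (n + 1) := by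
    intro A hA
    rw [Finset.mem_range, Nat.lt_succ_iff]
    have hAf : IsInForest W A := (Finset.mem_filter.mp hA).2
    have h1 : A.card = ∑ i : Fin n, (A.filter (fun e => e.1 = i)).card :=
      Finset.card_eq_sum_card_fiberwise (fun e _ => Finset.mem_univ e.1)
    calc A.card = ∑ i : Fin n, (A.filter (fun e => e.1 = i)).card := h1
      _ ≤ ∑ _i : Fin n, 1 := Finset.sum_le_sum (fun i _ => hAf.2.1 i)
      _ = n := by simp
  have hRHS : ∑ k ∈ Finset.range (n + 1), sigmaW W k * lam ^ (n - k)
      = ∑ A ∈ univ.powerset.filter (fun A : Finset (Fin n × Fin n) => IsInForest W A),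
          forestWeight W A * lam ^ (n - A.card) := by
    rw [← Finset.sum_fiberwise_of_maps_to hforestcard
      (fun A => forestWeight W A * lam ^ (n - A.card))]
    refine Finset.sum_congr rfl fun k hk => ?_
    rw [sigmaW, Finset.sum_mul, Finset.filter_filter]
    refine Finset.sum_congr (Finset.filter_congr fun A _ => Iff.rfl) fun A hA => ?_
    rw [(Finset.mem_filter.mp hA).2.2]
  rw [step1, step2, hRHS]
  -- Step 3: bijection between acyclic positive-weight functions and forests
  have hAf_outdeg : ∀ (f : Fin n → Option (Fin n)) (i : Fin n),
      (((univ.filter (fun e : Fin n × Fin n => f e.1 = some e.2)).filter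
        (fun e => e.1 = i)).card ≤ 1) := by
    intro f i
    rw [Finset.card_le_one]
    intro e he e' he'
    simp only [Finset.mem_filter, Finset.mem_univ, true_and] at he he'
    obtain ⟨hfe, h1⟩ := he
    obtain ⟨hfe', h1'⟩ := he'
    refine Prod.ext (by rw [h1, h1']) ?_
    have hs : some e.2 = some e'.2 := by rw [← hfe, h1, ← h1', hfe']
    exact Option.some_inj.mp hs
  refine Finset.sum_nbij'
    (i := fun f => univ.filter (fun e : Fin n × Fin n => f e.1 = some e.2))
    (j := fun A => DetForestAux.fOf A) ?_ ?_ ?_ ?_ ?_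
  · -- maps to forests
    intro f hf
    simp only [Finset.mem_filter, Finset.mem_univ, true_and] at hf
    obtain ⟨hAcf, hpos⟩ := hf
    refine Finset.mem_filter.mpr ⟨Finset.mem_powerset.mpr (Finset.subset_univ _),
      ?_, fun i => hAf_outdeg f i, ?_⟩
    · intro e he
      simp only [Finset.mem_filter, Finset.mem_univ, true_and] at he
      constructor
      · intro h12
        exact hAcf e.1 (Relation.TransGen.single
          (show DetForestAux.frel f e.1 e.1 from
            show f e.1 = some e.1 by rw [he, ← h12]))
      · exact hpos e.1 e.2 he
    · intro i hT
      refine hAcf i (Relation.TransGen.mono ?_ _ _ hT)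
      intro a b hab
      simp only [Finset.mem_filter, Finset.mem_univ, true_and] at hab
      exact hab
  · -- maps back
    intro A hA
    have hF : IsInForest W A := (Finset.mem_filter.mp hA).2
    refine Finset.mem_filter.mpr ⟨Finset.mem_univ _, ?_, ?_⟩
    · intro i hT
      refine hF.2.2 i (Relation.TransGen.mono ?_ _ _ hT)
      intro a b hab
      exact (DetForestAux.fOf_eq_some hF.2.1).mp hab
    · intro i j hij
      exact (hF.1 _ ((DetForestAux.fOf_eq_some hF.2.1).mp hij)).2
  · -- left inverse
    intro f hf
    funext a
    cases hfa : f a with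
    | none =>
        apply DetForestAux.fOf_eq_none.mpr
        intro b hb
        simp only [Finset.mem_filter, Finset.mem_univ, true_and] at hb
        rw [hfa] at hb
        exact nomatch hb
    | some b =>
        apply (DetForestAux.fOf_eq_some (hAf_outdeg f)).mpr
        simp only [Finset.mem_filter, Finset.mem_univ, true_and]
        exact hfa
  · -- right inverse
    intro A hA
    have hF : IsInForest W A := (Finset.mem_filter.mp hA).2
    ext e
    simp only [Finset.mem_filter, Finset.mem_univ, true_and]
    rw [DetForestAux.fOf_eq_some hF.2.1, Prod.mk.eta]
  · -- values agree
    intro f hf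
    set S : Finset (Fin n) := univ.filter (fun i => (f i).isSome) with hS
    have hsplit : ∏ i, cf i (f i)
        = (∏ i ∈ S, cf i (f i)) * ∏ i ∈ univ.filter (fun i => ¬ (f i).isSome), cf i (f i) :=
      (Finset.prod_filter_mul_prod_filter_not univ _ _).symm
    have hlamprod : ∏ i ∈ univ.filter (fun i => ¬ (f i).isSome), cf i (f i)
        = lam ^ (n - S.card) := by
      have hcards := Finset.card_filter_add_card_filter_not
        (s := (univ : Finset (Fin n))) (p := fun i => (f i).isSome)
      rw [Finset.card_univ, Fintype.card_fin] at hcards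
      have hcardS : (univ.filter (fun i => ¬ (f i).isSome)).card = n - S.card := by
        rw [hS]
        omega
      rw [Finset.prod_congr rfl (fun i hi => ?_), Finset.prod_const, hcardS]
      have hnone : f i = none := by
        simp only [Finset.mem_filter, Finset.mem_univ, true_and] at hi
        exact Option.not_isSome_iff_eq_none.mp hi
      rw [hcf, hnone]
      rfl
    have hmapsAf : ∀ e ∈ univ.filter (fun e : Fin n × Fin n => f e.1 = some e.2),
        (e.1 : Fin n) ∈ S := by
      intro e he
      simp only [Finset.mem_filter, Finset.mem_univ, true_and] at he
      simp only [hS, Finset.mem_filter, Finset.mem_univ, true_and]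
      rw [he]
      rfl
    have hinjAf : ∀ e ∈ univ.filter (fun e : Fin n × Fin n => f e.1 = some e.2),
        ∀ e' ∈ univ.filter (fun e : Fin n × Fin n => f e.1 = some e.2),
        e.1 = e'.1 → e = e' := by
      intro e he e' he' h1
      simp only [Finset.mem_filter, Finset.mem_univ, true_and] at he he'
      refine Prod.ext h1 ?_
      have hs : some e.2 = some e'.2 := by rw [← he, h1, he']
      exact Option.some_inj.mp hs
    have hsurjAf : ∀ i ∈ S, ∃ e ∈ univ.filter (fun e : Fin n × Fin n => f e.1 = some e.2),
        e.1 = i := by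
      intro i hi
      simp only [hS, Finset.mem_filter, Finset.mem_univ, true_and] at hi
      obtain ⟨b, hb⟩ := Option.isSome_iff_exists.mp hi
      exact ⟨(i, b), by simp [hb], rfl⟩
    have hweight : forestWeight W (univ.filter (fun e : Fin n × Fin n => f e.1 = some e.2))
        = ∏ i ∈ S, cf i (f i) := by
      rw [forestWeight]
      refine Finset.prod_bij (fun e _ => e.1) hmapsAf
        (fun e he e' he' h1 => hinjAf e he e' he' h1)
        (fun i hi => by obtain ⟨e, he, h1⟩ := hsurjAf i hi; exact ⟨e, he, h1⟩) ?_
      intro e he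
      simp only [Finset.mem_filter, Finset.mem_univ, true_and] at he
      rw [hcf, he]
      rfl
    have hcardAf : (univ.filter (fun e : Fin n × Fin n => f e.1 = some e.2)).card = S.card := by
      refine Finset.card_bij (fun e _ => e.1) hmapsAf
        (fun e he e' he' h1 => hinjAf e he e' he' h1)
        (fun i hi => by obtain ⟨e, he, h1⟩ := hsurjAf i hi; exact ⟨e, he, h1⟩)
    rw [hsplit, hlamprod, hweight, hcardAf]
end

section
/- The multiplicity of 0 as an eigenvalue (root of the characteristic polynomial) of the Laplacian matrix L of a weighted digraph Γ equals the in-forest dimension d of Γ, the minimum number of trees in a spanning converging forest. -/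
open Matrix Finset Polynomial

namespace ForestProof

variable {n : ℕ}

def rel (c : Fin n → Option (Fin n)) (a b : Fin n) : Prop := c a = some b

def Pmat (c : Fin n → Option (Fin n)) : Matrix (Fin n) (Fin n) ℝ :=
  Matrix.of fun i j => (if i = j then (1:ℝ) else 0) - (if c i = some j then (1:ℝ) else 0)

theorem det_Pmat_acyclic (c : Fin n → Option (Fin n))
    (hc : ∀ i, ¬ Relation.TransGen (rel c) i i) : (Pmat c).det = 1 := by
  classical
  set h : Fin n → ℕ := fun i => (univ.filter (fun k => Relation.ReflTransGen (rel c) i k)).card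
    with hh
  have key : ∀ i j, rel c i j → h j < h i := by
    intro i j hij
    apply Finset.card_lt_card
    constructor
    · intro k hk
      simp only [hh, mem_filter, mem_univ, true_and] at hk ⊢
      exact Relation.ReflTransGen.head hij hk
    · intro hsub
      have hi : i ∈ univ.filter (fun k => Relation.ReflTransGen (rel c) i k) := by
        simp [Relation.ReflTransGen.refl]
      have := hsub hi
      simp only [mem_filter, mem_univ, true_and] at this
      exact hc i (Relation.TransGen.head' hij this)
  have hbt : (Pmat c).BlockTriangular (fun i => -(h i : ℤ)) := by
    intro i j hij
    simp only [neg_lt_neg_iff, Nat.cast_lt] at hij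
    have h1 : i ≠ j := by rintro rfl; exact lt_irrefl _ hij
    have h2 : ¬ (c i = some j) := fun hcij => absurd (key i j hcij) (by omega)
    simp [Pmat, h1, h2]
  rw [hbt.det]
  apply Finset.prod_eq_one
  intro a _
  have : (Pmat c).toSquareBlock (fun i => -(h i : ℤ)) a = 1 := by
    ext ⟨i, hi⟩ ⟨j, hj⟩
    by_cases hij : i = j
    · subst hij
      have : ¬ (c i = some i) := fun hcii => hc i (Relation.TransGen.single hcii)
      simp [Matrix.toSquareBlock_def, Pmat, this, Matrix.one_apply]
    · have : ¬ (c i = some j) := by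
        intro hcij
        have := key i j hcij
        have : h i = h j := by
          have := hi.trans hj.symm
          exact_mod_cast neg_injective this
        omega
      have hne : (⟨i, hi⟩ : {k // (fun i => -(h i : ℤ)) k = a}) ≠ ⟨j, hj⟩ := by
        simp [Subtype.ext_iff, hij]
      simp [Matrix.toSquareBlock_def, Pmat, hij, this, Matrix.one_apply, hne]
  rw [this, Matrix.det_one]

theorem det_Pmat_cycle (c : Fin n → Option (Fin n)) (i₀ : Fin n)
    (hc : Relation.TransGen (rel c) i₀ i₀) : (Pmat c).det = 0 := by
  classical
  set r := rel c with hr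
  set S : Finset (Fin n) := univ.filter
    (fun j => Relation.ReflTransGen r i₀ j ∧ Relation.ReflTransGen r j i₀) with hS
  have hmemS : ∀ j, j ∈ S ↔ Relation.ReflTransGen r i₀ j ∧ Relation.ReflTransGen r j i₀ := by
    intro j; simp [hS]
  have hi₀S : i₀ ∈ S := by
    rw [hmemS]; exact ⟨Relation.ReflTransGen.refl, Relation.ReflTransGen.refl⟩
  have hcyc : ∀ j ∈ S, Relation.TransGen r j j := by
    intro j hj
    rw [hmemS] at hj
    exact Relation.TransGen.trans_right hj.2 (hc.trans_left hj.1)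
  have hsucc : ∀ j ∈ S, ∀ k, c j = some k → k ∈ S := by
    intro j hj k hk
    have hj' := (hmemS j).mp hj
    obtain ⟨k', hk', hpath⟩ := Relation.TransGen.head'_iff.mp (hcyc j hj)
    have hk'' : c j = some k' := hk'
    have : k' = k := Option.some_injective _ (hk''.symm.trans hk)
    subst this
    rw [hmemS]
    exact ⟨hj'.1.tail hk', hpath.trans hj'.2⟩
  -- the successor function on S as a subtype map
  have hsome : ∀ j : {x // x ∈ S}, (c j.1).isSome := by
    rintro ⟨j, hj⟩
    obtain ⟨k', hk', _⟩ := Relation.TransGen.head'_iff.mp (hcyc j hj)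
    have hk'' : c j = some k' := hk'
    simp [hk'']
  let f : {x // x ∈ S} → {x // x ∈ S} := fun j =>
    ⟨(c j.1).get (hsome j), hsucc j.1 j.2 _ (Option.eq_some_of_isSome (hsome j)) ⟩
  have hf : ∀ (j : {x // x ∈ S}) k, c j.1 = some k → (f j).1 = k := by
    rintro ⟨j, hj⟩ k hk
    simp only [f]
    simp [hk]
  have hfsurj : Function.Surjective f := by
    rintro ⟨k, hk⟩
    obtain ⟨j, hjk, hjr⟩ := Relation.TransGen.tail'_iff.mp (hcyc k hk)
    have hjS : j ∈ S := by
      have hk' := (hmemS k).mp hk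
      rw [hmemS]
      exact ⟨hk'.1.trans hjk, Relation.ReflTransGen.trans (Relation.ReflTransGen.single hjr) hk'.2⟩
    refine ⟨⟨j, hjS⟩, ?_⟩
    exact Subtype.ext (hf ⟨j, hjS⟩ k hjr)
  have hfinj : Function.Injective f := Finite.injective_iff_surjective.mpr hfsurj
  -- the key counting fact
  have hcount : ∀ j : Fin n,
      (S.filter (fun i => c i = some j)).card = if j ∈ S then 1 else 0 := by
    intro j
    by_cases hjS : j ∈ S
    · rw [if_pos hjS]
      obtain ⟨⟨i₁, hi₁⟩, hfi₁⟩ := hfsurj ⟨j, hjS⟩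
      rw [Finset.card_eq_one]
      refine ⟨i₁, ?_⟩
      ext i
      simp only [Finset.mem_filter, Finset.mem_singleton]
      constructor
      · rintro ⟨hiS, hcij⟩
        have : f ⟨i, hiS⟩ = ⟨j, hjS⟩ := Subtype.ext (hf ⟨i, hiS⟩ j hcij)
        have := hfinj (this.trans hfi₁.symm)
        exact congrArg Subtype.val this
      · intro hi
        rw [hi]
        refine ⟨hi₁, ?_⟩
        have h1 : (f ⟨i₁, hi₁⟩).1 = j := congrArg Subtype.val hfi₁
        have h2 := Option.eq_some_of_isSome (hsome ⟨i₁, hi₁⟩)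
        exact h2.trans (congrArg some h1)
    · rw [if_neg hjS, Finset.card_eq_zero]
      rw [Finset.filter_eq_empty_iff]
      intro i hiS hcij
      exact hjS (hsucc i hiS j hcij)
  -- the indicator vector of S is a left null vector
  have hvm : (fun i => if i ∈ S then (1:ℝ) else 0) ᵥ* Pmat c = 0 := by
    funext j
    simp only [Matrix.vecMul, dotProduct, Pmat, Matrix.of_apply]
    rw [show ∀ (g : Fin n → ℝ), ∑ i, (if i ∈ S then (1:ℝ) else 0) * g i
        = ∑ i ∈ S, g i from fun g => by
      simp only [ite_mul, one_mul, zero_mul]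
      rw [Finset.sum_ite_mem, Finset.univ_inter]]
    rw [Finset.sum_sub_distrib]
    have h1 : ∑ i ∈ S, (if i = j then (1:ℝ) else 0) = if j ∈ S then 1 else 0 := by
      rw [Finset.sum_ite_eq' S j (fun _ => (1:ℝ))]
    have h2 : ∑ i ∈ S, (if c i = some j then (1:ℝ) else 0)
        = ((S.filter (fun i => c i = some j)).card : ℝ) := by
      rw [Finset.sum_ite, Finset.sum_const, Finset.sum_const]
      simp
    rw [h1, h2, hcount j]
    simp only [Pi.zero_apply]
    split <;> norm_num
  have hvne : (fun i => if i ∈ S then (1:ℝ) else 0) ≠ 0 := by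
    intro h
    have := congrFun h i₀
    simp [hi₀S] at this
  exact Matrix.exists_vecMul_eq_zero_iff.mp ⟨_, hvne, hvm⟩
/-- scalar factor -/
noncomputable def sc (W : Matrix (Fin n) (Fin n) ℝ) (i : Fin n) : Option (Fin n) → ℝ[X]
  | none => X
  | some b => -C (W i b)

/-- row vector -/
def vr (i : Fin n) : Option (Fin n) → (Fin n → ℝ)
  | none => Pi.single i 1
  | some b => Pi.single i 1 - Pi.single b 1

/-- arc set of a choice function -/
def arcs (c : Fin n → Option (Fin n)) : Finset (Fin n × Fin n) :=
  Finset.univ.filter (fun e => c e.1 = some e.2)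

theorem mem_arcs {c : Fin n → Option (Fin n)} {a b : Fin n} :
    (a, b) ∈ arcs c ↔ c a = some b := by simp [arcs]

theorem vr_eq_Pmat (c : Fin n → Option (Fin n)) (i j : Fin n) :
    vr i (c i) j = Pmat c i j := by
  rcases hci : c i with _ | b
  · simp only [vr, Pmat, Matrix.of_apply, hci]
    rw [Pi.single_apply]
    simp [eq_comm]
  · simp only [vr, Pmat, Matrix.of_apply, hci, Pi.sub_apply]
    rw [Pi.single_apply, Pi.single_apply]
    simp only [Option.some.injEq]
    congr 1
    · exact if_congr eq_comm rfl rfl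
    · exact if_congr eq_comm rfl rfl

theorem row_decomp (W : Matrix (Fin n) (Fin n) ℝ) (i : Fin n) :
    (charmatrix (lap W)) i = ∑ o : Option (Fin n), sc W i o • (fun j => C (vr i o j)) := by
  funext j
  rw [Fintype.sum_option]
  simp only [Pi.add_apply, Finset.sum_apply, Pi.smul_apply, smul_eq_mul, sc, vr]
  by_cases hij : i = j
  · subst hij
    rw [charmatrix_apply_eq]
    have key : ∀ x : Fin n, (-C (W i x)) * C ((Pi.single i 1 - Pi.single x 1 : Fin n → ℝ) i)
        = -C (W i x) + (if x = i then C (W i x) else 0) := by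
      intro x
      rcases eq_or_ne x i with rfl | hx
      · simp
      · rw [Pi.sub_apply, Pi.single_eq_same, Pi.single_apply, if_neg (Ne.symm hx)]
        simp [hx]
    rw [Finset.sum_congr rfl (fun x _ => key x), Finset.sum_add_distrib,
      Finset.sum_ite_eq' Finset.univ i (fun x => C (W i x))]
    simp only [Finset.mem_univ, if_pos, Pi.single_eq_same, Polynomial.C_1, mul_one]
    simp only [lap, Matrix.sub_apply, Matrix.diagonal_apply_eq, map_sub, map_sum]
    rw [Finset.sum_neg_distrib]
    ring
  · rw [charmatrix_apply_ne _ _ _ hij]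
    have hji : j ≠ i := Ne.symm hij
    have key : ∀ x : Fin n, (-C (W i x)) * C ((Pi.single i 1 - Pi.single x 1 : Fin n → ℝ) j)
        = if x = j then C (W i x) else 0 := by
      intro x
      rcases eq_or_ne x j with rfl | hx
      · rw [Pi.sub_apply, Pi.single_eq_of_ne hji, Pi.single_eq_same]
        simp
      · rw [Pi.sub_apply, Pi.single_eq_of_ne hji, Pi.single_eq_of_ne (Ne.symm hx)]
        simp [hx]
    rw [Finset.sum_congr rfl (fun x _ => key x),
      Finset.sum_ite_eq' Finset.univ j (fun x => C (W i x))]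
    rw [Pi.single_eq_of_ne hji]
    simp only [Finset.mem_univ, if_pos, map_zero, mul_zero, zero_add]
    simp [lap, Matrix.sub_apply, Matrix.diagonal_apply_ne _ hij]


theorem det_expansion (W : Matrix (Fin n) (Fin n) ℝ) :
    (lap W).charpoly = ∑ c : Fin n → Option (Fin n),
      (∏ i, sc W i (c i)) * C ((Pmat c).det) := by
  classical
  let f := (Matrix.detRowAlternating :
      (Fin n → ℝ[X]) [⋀^Fin n]→ₗ[ℝ[X]] ℝ[X]).toMultilinearMap
  have h0 : (lap W).charpoly = f (fun i => charmatrix (lap W) i) := rfl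
  rw [h0]
  have h1 : (fun i => charmatrix (lap W) i)
      = fun i => ∑ o : Option (Fin n), sc W i o • (fun j => C (vr i o j)) := by
    funext i
    exact row_decomp W i
  rw [h1, f.map_sum]
  apply Finset.sum_congr rfl
  intro c _
  rw [f.map_smul_univ]
  have h2 : (fun i (j : Fin n) => C (vr i (c i) j)) = (Pmat c).map C := by
    funext i j
    rw [vr_eq_Pmat]
    rfl
  have h3 : f (fun i (j : Fin n) => C (vr i (c i) j)) = C ((Pmat c).det) := by
    rw [h2]
    exact ((Polynomial.C : ℝ →+* ℝ[X]).map_det (Pmat c)).symm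
  rw [h3, smul_eq_mul]


def good (W : Matrix (Fin n) (Fin n) ℝ) (c : Fin n → Option (Fin n)) : Prop :=
  (∀ i, ¬ Relation.TransGen (rel c) i i) ∧ (∀ i b, c i = some b → 0 < W i b)

theorem arcs_deg (c : Fin n → Option (Fin n)) (i : Fin n) :
    ((arcs c).filter (fun e => e.1 = i)).card ≤ 1 := by
  classical
  apply Finset.card_le_one.mpr
  rintro ⟨a₁, b₁⟩ h₁ ⟨a₂, b₂⟩ h₂
  simp only [Finset.mem_filter, mem_arcs] at h₁ h₂
  obtain ⟨hm₁, he₁⟩ := h₁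
  obtain ⟨hm₂, he₂⟩ := h₂
  subst he₁; subst he₂
  have : b₁ = b₂ := Option.some_injective _ (hm₁.symm.trans hm₂)
  rw [this]

theorem card_arcs (c : Fin n → Option (Fin n)) :
    (arcs c).card + (Finset.univ.filter (fun i => c i = none)).card = n := by
  classical
  have h1 : (arcs c).card = (Finset.univ.filter (fun i => (c i).isSome)).card := by
    apply Finset.card_bij (fun e _ => e.1)
    · rintro ⟨a, b⟩ he
      rw [mem_arcs] at he
      simp [he]
    · rintro ⟨a₁, b₁⟩ h₁ ⟨a₂, b₂⟩ h₂ hab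
      simp only at hab
      subst hab
      rw [mem_arcs] at h₁ h₂
      have : b₁ = b₂ := Option.some_injective _ (h₁.symm.trans h₂)
      rw [this]
    · intro i hi
      simp only [Finset.mem_filter, Finset.mem_univ, true_and] at hi
      exact ⟨(i, (c i).get hi), mem_arcs.mpr (Option.some_get hi).symm, rfl⟩
  rw [h1]
  have h2 : (Finset.univ.filter (fun i => c i = none))
      = (Finset.univ.filter (fun i => ¬ (c i).isSome)) := by
    apply Finset.filter_congr
    intro i _
    simp [Option.not_isSome_iff_eq_none]
  rw [h2]
  rw [Finset.card_filter_add_card_filter_not]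
  rw [Finset.card_univ, Fintype.card_fin]

theorem arcs_card_le (c : Fin n → Option (Fin n)) : (arcs c).card ≤ n := by
  have := card_arcs c; omega

theorem prod_sc (W : Matrix (Fin n) (Fin n) ℝ) (c : Fin n → Option (Fin n)) :
    (∏ i, sc W i (c i))
      = (-1 : ℝ[X])^(arcs c).card * C (forestWeight W (arcs c))
        * X^(n - (arcs c).card) := by
  classical
  rw [← Finset.prod_filter_mul_prod_filter_not Finset.univ (fun i => c i = none)
    (fun i => sc W i (c i))]
  have hX : ∏ i ∈ Finset.univ.filter (fun i => c i = none), sc W i (c i)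
      = X^(n - (arcs c).card) := by
    rw [Finset.prod_congr rfl (fun i hi => ?_), Finset.prod_const]
    · congr 1
      have := card_arcs c
      omega
    · rw [(Finset.mem_filter.mp hi).2]
      rfl
  have hA : ∏ i ∈ Finset.univ.filter (fun i => ¬ c i = none), sc W i (c i)
      = ∏ e ∈ arcs c, -C (W e.1 e.2) := by
    apply Finset.prod_bij
      (i := fun a ha => (a, (c a).get (by
        simpa [Option.isSome_iff_ne_none] using (Finset.mem_filter.mp ha).2)))
    · intro a ha
      rw [mem_arcs]
      exact (Option.some_get _).symm
    · intro a₁ h₁ a₂ h₂ he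
      exact congrArg Prod.fst he
    · rintro ⟨a, b⟩ he
      rw [mem_arcs] at he
      have ha : a ∈ Finset.univ.filter (fun i => ¬ c i = none) := by
        simp [he]
      refine ⟨a, ha, ?_⟩
      simp [he]
    · intro a ha
      have h : (c a).isSome := by
        simpa [Option.isSome_iff_ne_none] using (Finset.mem_filter.mp ha).2
      conv_lhs => rw [(Option.some_get h).symm]
      rfl
  rw [hX, hA]
  have : ∏ e ∈ arcs c, -C (W e.1 e.2)
      = (-1 : ℝ[X])^(arcs c).card * C (forestWeight W (arcs c)) := by
    rw [show (fun (e : Fin n × Fin n) => -C (W e.1 e.2))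
        = fun e => (-1) * C (W e.1 e.2) from by funext e; ring]
    rw [Finset.prod_mul_distrib, Finset.prod_const, forestWeight, map_prod]
  rw [this]
  ring


open scoped Classical in
noncomputable def cOf (A : Finset (Fin n × Fin n)) : Fin n → Option (Fin n) :=
  fun i => if h : ∃ b, (i, b) ∈ A then some h.choose else none

theorem cOf_eq_some {A : Finset (Fin n × Fin n)}
    (hdeg : ∀ i : Fin n, (A.filter (fun e => e.1 = i)).card ≤ 1) (i b : Fin n) :
    cOf A i = some b ↔ (i, b) ∈ A := by
  classical
  constructor
  · intro h
    by_cases hex : ∃ b', (i, b') ∈ A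
    · have h1 : cOf A i = some hex.choose := dif_pos hex
      rw [h1] at h
      have := Option.some_injective _ h
      rw [← this]
      exact hex.choose_spec
    · have h1 : cOf A i = none := dif_neg hex
      rw [h1] at h
      cases h
  · intro h
    have hex : ∃ b', (i, b') ∈ A := ⟨b, h⟩
    have h1 : cOf A i = some hex.choose := dif_pos hex
    have h2 : (i, hex.choose) ∈ A := hex.choose_spec
    have h3 : ((i, hex.choose) : Fin n × Fin n) = (i, b) := by
      have hone := Finset.card_le_one.mp (hdeg i)
      exact hone _ (by simp [h2]) _ (by simp [h])
    rw [h1, Prod.mk.injEq] at *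
    exact congrArg some h3.2

theorem arcs_cOf {A : Finset (Fin n × Fin n)}
    (hdeg : ∀ i : Fin n, (A.filter (fun e => e.1 = i)).card ≤ 1) :
    arcs (cOf A) = A := by
  ext ⟨a, b⟩
  rw [mem_arcs, cOf_eq_some hdeg]

theorem cOf_arcs (c : Fin n → Option (Fin n)) : cOf (arcs c) = c := by
  classical
  funext i
  rcases ho : c i with _ | b
  · apply dif_neg
    rintro ⟨b, hb⟩
    rw [mem_arcs, ho] at hb
    cases hb
  · exact (cOf_eq_some (arcs_deg c) i b).mpr (mem_arcs.mpr ho)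

theorem rel_arcs (c : Fin n → Option (Fin n)) :
    (fun a b => (a, b) ∈ arcs c) = rel c := by
  funext a b
  exact propext mem_arcs

theorem forest_arcs {W : Matrix (Fin n) (Fin n) ℝ} {c : Fin n → Option (Fin n)}
    (hc : good W c) : IsInForest W (arcs c) := by
  refine ⟨?_, fun i => arcs_deg c i, ?_⟩
  · rintro ⟨a, b⟩ he
    rw [mem_arcs] at he
    refine ⟨?_, hc.2 a b he⟩
    simp only [ne_eq]
    rintro rfl
    exact hc.1 a (Relation.TransGen.single he)
  · rw [rel_arcs]
    exact hc.1

theorem good_cOf {W : Matrix (Fin n) (Fin n) ℝ} {A : Finset (Fin n × Fin n)}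
    (hA : IsInForest W A) : good W (cOf A) := by
  constructor
  · intro i hi
    apply hA.2.2 i
    refine Relation.TransGen.mono ?_ i i hi
    intro a b hab
    exact (cOf_eq_some hA.2.1 a b).mp hab
  · intro i b hib
    exact (hA.1 _ ((cOf_eq_some hA.2.1 i b).mp hib)).2

open scoped Classical in
theorem charpoly_forest (W : Matrix (Fin n) (Fin n) ℝ) (hW : ∀ i j, 0 ≤ W i j) :
    (lap W).charpoly
      = ∑ A ∈ Finset.univ.powerset.filter (fun A => IsInForest W A),
          (-1 : ℝ[X])^A.card * C (forestWeight W A) * X^(n - A.card) := by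
  rw [det_expansion]
  have hzero : ∀ c ∈ (Finset.univ : Finset (Fin n → Option (Fin n))),
      ((∏ i, sc W i (c i)) * C ((Pmat c).det)) ≠ 0 → good W c := by
    intro c _ hne
    by_contra hbad
    apply hne
    by_cases hcyc : ∀ i, ¬ Relation.TransGen (rel c) i i
    · have hq : ¬ ∀ i b, c i = some b → 0 < W i b := fun hq => hbad ⟨hcyc, hq⟩
      push_neg at hq
      obtain ⟨i, b, hib, hnpos⟩ := hq
      have hz : W i b = 0 := le_antisymm hnpos (hW i b)
      have hs : sc W i (c i) = 0 := by
        rw [hib]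
        simp [sc, hz]
      rw [Finset.prod_eq_zero (Finset.mem_univ i) hs, zero_mul]
    · push_neg at hcyc
      obtain ⟨i, hi⟩ := hcyc
      rw [det_Pmat_cycle c i hi, map_zero, mul_zero]
  rw [← Finset.sum_filter_of_ne hzero]
  refine Finset.sum_nbij' (i := fun c => arcs c) (j := fun A => cOf A)
    ?_ ?_ ?_ ?_ ?_
  · intro c hc
    have hgood : good W c := (Finset.mem_filter.mp hc).2
    rw [Finset.mem_filter]
    exact ⟨Finset.mem_powerset.mpr (Finset.subset_univ _), forest_arcs hgood⟩
  · intro A hA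
    rw [Finset.mem_filter]
    exact ⟨Finset.mem_univ _, good_cOf (Finset.mem_filter.mp hA).2⟩
  · intro c _
    exact cOf_arcs c
  · intro A hA
    exact arcs_cOf (Finset.mem_filter.mp hA).2.2.1
  · intro c hc
    have hgood : good W c := (Finset.mem_filter.mp hc).2
    rw [prod_sc, det_Pmat_acyclic c hgood.1, Polynomial.C_1, mul_one]


theorem forest_card_le {W : Matrix (Fin n) (Fin n) ℝ} {A : Finset (Fin n × Fin n)}
    (hA : IsInForest W A) : A.card ≤ n := by
  calc A.card = (arcs (cOf A)).card := by rw [arcs_cOf hA.2.1]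
  _ ≤ n := arcs_card_le _

open scoped Classical in
theorem coeff_charpoly (W : Matrix (Fin n) (Fin n) ℝ) (hW : ∀ i j, 0 ≤ W i j)
    (m : ℕ) (hm : m ≤ n) :
    (lap W).charpoly.coeff m = (-1:ℝ)^(n-m) * sigmaW W (n-m) := by
  rw [charpoly_forest W hW, Polynomial.finset_sum_coeff]
  have key : ∀ A ∈ Finset.univ.powerset.filter
      (fun A : Finset (Fin n × Fin n) => IsInForest W A),
      ((-1:ℝ[X])^A.card * C (forestWeight W A) * X^(n - A.card)).coeff m
      = if A.card = n - m then (-1:ℝ)^(n-m) * forestWeight W A else 0 := by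
    intro A hA
    have hcard : A.card ≤ n := forest_card_le (Finset.mem_filter.mp hA).2
    have h1 : ((-1:ℝ[X])^A.card * C (forestWeight W A))
        = C ((-1)^A.card * forestWeight W A) := by
      rw [_root_.map_mul, _root_.map_pow, map_neg, Polynomial.C_1]
    rw [h1, Polynomial.coeff_C_mul, Polynomial.coeff_X_pow]
    by_cases h : A.card = n - m
    · rw [if_pos h, if_pos (by omega)]
      rw [h]
      ring
    · rw [if_neg (by omega), if_neg h, mul_zero]
  rw [Finset.sum_congr rfl key, ← Finset.sum_filter, Finset.filter_filter]
  rw [sigmaW, Finset.mul_sum]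

theorem empty_forest (W : Matrix (Fin n) (Fin n) ℝ) : IsInForest W ∅ := by
  refine ⟨by simp, by simp, ?_⟩
  intro i h
  obtain ⟨b, hb, -⟩ := Relation.TransGen.head'_iff.mp h
  simp at hb

open scoped Classical in
theorem maxForestCard_le (W : Matrix (Fin n) (Fin n) ℝ) : maxForestCard W ≤ n := by
  apply Finset.sup_le
  intro A hA
  exact forest_card_le (Finset.mem_filter.mp hA).2

open scoped Classical in
theorem sigma_max_pos (W : Matrix (Fin n) (Fin n) ℝ) :
    0 < sigmaW W (maxForestCard W) := by
  have hne : (Finset.univ.powerset.filter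
      (fun A : Finset (Fin n × Fin n) => IsInForest W A)).Nonempty :=
    ⟨∅, Finset.mem_filter.mpr ⟨Finset.mem_powerset.mpr (Finset.empty_subset _),
      empty_forest W⟩⟩
  obtain ⟨A₀, hA₀, hsup⟩ := Finset.exists_mem_eq_sup _ hne Finset.card
  rw [sigmaW]
  apply Finset.sum_pos
  · intro A hA
    rw [Finset.mem_filter] at hA
    apply Finset.prod_pos
    intro e he
    exact (hA.2.1.1 e he).2
  · refine ⟨A₀, Finset.mem_filter.mpr ⟨(Finset.mem_filter.mp hA₀).1, ?_, ?_⟩⟩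
    · exact (Finset.mem_filter.mp hA₀).2
    · rw [maxForestCard, hsup]

open scoped Classical in
theorem sigma_eq_zero (W : Matrix (Fin n) (Fin n) ℝ) (k : ℕ)
    (hk : maxForestCard W < k) : sigmaW W k = 0 := by
  rw [sigmaW]
  apply Finset.sum_eq_zero
  intro A hA
  exfalso
  rw [Finset.mem_filter] at hA
  have hle : A.card ≤ maxForestCard W :=
    Finset.le_sup (f := Finset.card) (Finset.mem_filter.mpr ⟨hA.1, hA.2.1⟩)
  omega

theorem final (W : Matrix (Fin n) (Fin n) ℝ)
    (hW : ∀ i j, 0 ≤ W i j) :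
    (lap W).charpoly.rootMultiplicity 0 = forestDim W := by
  classical
  have hmax : maxForestCard W ≤ n := maxForestCard_le W
  have hd : forestDim W = n - maxForestCard W := rfl
  have hd_le : forestDim W ≤ n := by rw [hd]; omega
  have hnd : n - forestDim W = maxForestCard W := by rw [hd]; omega
  rw [Polynomial.rootMultiplicity_eq_natTrailingDegree']
  have hcoeff_d : (lap W).charpoly.coeff (forestDim W) ≠ 0 := by
    rw [coeff_charpoly W hW _ hd_le, hnd]
    exact mul_ne_zero (pow_ne_zero _ (by norm_num)) (ne_of_gt (sigma_max_pos W))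
  have hlow : ∀ m < forestDim W, (lap W).charpoly.coeff m = 0 := by
    intro m hm
    rw [coeff_charpoly W hW _ (by omega)]
    rw [sigma_eq_zero W (n - m) (by omega), mul_zero]
  apply le_antisymm
  · exact Polynomial.natTrailingDegree_le_of_ne_zero hcoeff_d
  · apply Polynomial.le_natTrailingDegree
    · intro h0
      apply hcoeff_d
      rw [h0]
      simp
    · exact hlow

end ForestProof

/-- The multiplicity of `0` as an eigenvalue of the Laplacian matrix `L` equals
the in-forest dimension `d` of the digraph. -/
theorem multiplicity_zero_eigenvalue_eq_forestDim {n : ℕ}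
    (W : Matrix (Fin n) (Fin n) ℝ)
    (hn : 1 < n) (hW : ∀ i j, 0 ≤ W i j) (hdiag : ∀ i, W i i = 0) :
    (lap W).charpoly.rootMultiplicity 0 = forestDim W := by
  exact ForestProof.final W hW
end

section
/- The in-forest matrices obey the Faddeev-type recursion Q_{k+1} = (−L)Q_k + σ_{k+1}I with σ_{k+1} = tr(LQ_k)/(k+1), starting from Q_0 = I. -/
open Matrix Finset Polynomial

section ForestAux

variable {n : ℕ}

/-- Reachability along arcs of `A`. -/
def Reach (A : Finset (Fin n × Fin n)) (a b : Fin n) : Prop :=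
  Relation.ReflTransGen (fun a b => (a, b) ∈ A) a b

/-- Determinism: at most one arc out of each vertex. -/
def Det (A : Finset (Fin n × Fin n)) : Prop :=
  ∀ ⦃i l m : Fin n⦄, (i, l) ∈ A → (i, m) ∈ A → l = m

lemma IsInForest.det {W : Matrix (Fin n) (Fin n) ℝ} {A : Finset (Fin n × Fin n)}
    (h : IsInForest W A) : Det A := by
  intro i l m h1 h2
  have := Finset.card_le_one.mp (h.2.1 i) (i, l) (by simp [Finset.mem_filter, h1])
    (i, m) (by simp [Finset.mem_filter, h2])
  exact (Prod.ext_iff.mp this).2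

lemma Reach.mono {A B : Finset (Fin n × Fin n)} (hAB : A ⊆ B) {x y : Fin n}
    (h : Reach A x y) : Reach B x y :=
  Relation.ReflTransGen.mono (fun a b hab => hAB hab) _ _ h

lemma Reach.refl {A : Finset (Fin n × Fin n)} {x : Fin n} : Reach A x x :=
  Relation.ReflTransGen.refl

lemma reach_eq_of_noArc {A : Finset (Fin n × Fin n)} {x y : Fin n}
    (hno : ∀ z, (x, z) ∉ A) (h : Reach A x y) : x = y := by
  rcases Relation.ReflTransGen.cases_head h with h | ⟨z, hz, _⟩
  · exact h
  · exact absurd hz (hno z)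

lemma reach_filter_of_not_reach {A : Finset (Fin n × Fin n)} {x y i : Fin n}
    (h : Reach A x y) (hni : ¬ Reach A x i) :
    Reach (A.filter (fun e => e.1 ≠ i)) x y := by
  revert hni
  induction h using Relation.ReflTransGen.head_induction_on with
  | refl => exact fun _ => Relation.ReflTransGen.refl
  | @head a c hac hcy ih =>
    intro hni
    have hai : a ≠ i := fun h => hni (h ▸ Relation.ReflTransGen.refl)
    have hnc : ¬ Reach A c i := fun h => hni (Relation.ReflTransGen.head hac h)
    exact Relation.ReflTransGen.head (by simp [Finset.mem_filter, hac, hai]) (ih hnc)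

lemma reach_insert_to_src {A : Finset (Fin n × Fin n)} {i l x : Fin n}
    (h : Reach (insert (i, l) A) x i) : Reach A x i := by
  induction h using Relation.ReflTransGen.head_induction_on with
  | refl => exact Relation.ReflTransGen.refl
  | @head a c hac hcy ih =>
    rcases Finset.mem_insert.mp hac with h | h
    · have : a = i := (Prod.ext_iff.mp h).1
      exact this ▸ Relation.ReflTransGen.refl
    · exact Relation.ReflTransGen.head h ih

lemma reach_comparable {A : Finset (Fin n × Fin n)} (hdet : Det A) {x y z : Fin n}
    (hxy : Reach A x y) (hxz : Reach A x z) : Reach A y z ∨ Reach A z y := by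
  revert hxz
  induction hxy using Relation.ReflTransGen.head_induction_on with
  | refl => exact fun hxz => Or.inl hxz
  | @head a c hac hcy ih =>
    intro haz
    rcases Relation.ReflTransGen.cases_head haz with h | ⟨w, hw, hwz⟩
    · exact Or.inr (h ▸ Relation.ReflTransGen.head hac hcy)
    · exact ih (hdet hac hw ▸ hwz)

lemma transGen_filter_of_not_reach {A : Finset (Fin n × Fin n)} {x y i : Fin n}
    (hni : ¬ Reach A x i) (h : Relation.TransGen (fun a b => (a, b) ∈ A) x y) :
    Relation.TransGen (fun a b => (a, b) ∈ A.filter (fun e => e.1 ≠ i)) x y := by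
  revert hni
  induction h using Relation.TransGen.head_induction_on with
  | @single a hab =>
    intro hni
    have hai : a ≠ i := fun h => hni (h ▸ Relation.ReflTransGen.refl)
    exact Relation.TransGen.single (by simp [Finset.mem_filter, hab, hai])
  | @head a c hac hcy ihh =>
    intro hni
    have hai : a ≠ i := fun h => hni (h ▸ Relation.ReflTransGen.refl)
    have hnc : ¬ Reach A c i := fun h => hni (Relation.ReflTransGen.head hac h)
    exact Relation.TransGen.head (by simp [Finset.mem_filter, hac, hai]) (ihh hnc)

lemma transGen_cycle_of_reach {A : Finset (Fin n × Fin n)} (hdet : Det A) {x i : Fin n}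
    (hc : Relation.TransGen (fun a b => (a, b) ∈ A) x x) (hr : Reach A x i) :
    Relation.TransGen (fun a b => (a, b) ∈ A) i i := by
  revert hc
  induction hr using Relation.ReflTransGen.head_induction_on with
  | refl => exact fun hc => hc
  | @head a c hac hci ih =>
    intro hc
    rcases Relation.TransGen.head'_iff.mp hc with ⟨w, hw, hwa⟩
    have hwc : w = c := hdet hw hac
    subst hwc
    exact ih (Relation.TransGen.tail' hwa hac)

end ForestAux
section ForestAux2

variable {n : ℕ} {W : Matrix (Fin n) (Fin n) ℝ}

/-- No arc out of `i`. -/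
def NoArc (A : Finset (Fin n × Fin n)) (i : Fin n) : Prop := ∀ z, (i, z) ∉ A

lemma noArc_filter (A : Finset (Fin n × Fin n)) (i : Fin n) :
    NoArc (A.filter (fun e => e.1 ≠ i)) i := by
  intro z hz
  simp [Finset.mem_filter] at hz

lemma filter_eq_self_of_noArc {A : Finset (Fin n × Fin n)} {i : Fin n} (h : NoArc A i) :
    A.filter (fun e => e.1 ≠ i) = A := by
  apply Finset.filter_true_of_mem
  rintro ⟨a, b⟩ he hei
  simp only at hei
  subst hei
  exact h b he

lemma insert_filter_eq {A : Finset (Fin n × Fin n)} {i l : Fin n} (hdet : Det A)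
    (hil : (i, l) ∈ A) : insert (i, l) (A.filter (fun e => e.1 ≠ i)) = A := by
  ext ⟨a, b⟩
  simp only [Finset.mem_insert, Finset.mem_filter]
  constructor
  · rintro (h | ⟨he, _⟩)
    · rw [h]; exact hil
    · exact he
  · intro he
    by_cases hei : a = i
    · subst hei
      exact Or.inl (by rw [hdet he hil])
    · exact Or.inr ⟨he, hei⟩

lemma mem_filter_ne {A : Finset (Fin n × Fin n)} {i : Fin n} {e : Fin n × Fin n} :
    e ∈ A.filter (fun e => e.1 ≠ i) ↔ e ∈ A ∧ e.1 ≠ i := Finset.mem_filter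

lemma notMem_filter_ne (A : Finset (Fin n × Fin n)) (i l : Fin n) :
    (i, l) ∉ A.filter (fun e => e.1 ≠ i) := by simp [Finset.mem_filter]

lemma card_insert_filter {A : Finset (Fin n × Fin n)} {i l : Fin n} (hdet : Det A)
    (hil : (i, l) ∈ A) : (A.filter (fun e => e.1 ≠ i)).card + 1 = A.card := by
  have h := Finset.card_insert_of_notMem (notMem_filter_ne A i l)
  rw [insert_filter_eq hdet hil] at h
  omega

lemma weight_insert {A : Finset (Fin n × Fin n)} {i l : Fin n} (h : (i, l) ∉ A) :
    forestWeight W (insert (i, l) A) = W i l * forestWeight W A := by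
  unfold forestWeight
  rw [Finset.prod_insert h]

/-- Inserting an arc `(i,l)` into a forest with no arc out of `i`, such that `l`
does not reach `i`, yields a forest. -/
lemma isInForest_insert {A : Finset (Fin n × Fin n)} {i l : Fin n}
    (hA : IsInForest W A) (hno : NoArc A i) (hil : i ≠ l) (hpos : 0 < W i l)
    (hnr : ¬ Reach A l i) : IsInForest W (insert (i, l) A) := by
  have hdet : Det (insert (i, l) A) := by
    intro a b c hb hc
    rcases Finset.mem_insert.mp hb with h | h <;> rcases Finset.mem_insert.mp hc with h' | h'
    · exact (Prod.ext_iff.mp h).2.trans (Prod.ext_iff.mp h').2.symm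
    · obtain ⟨rfl, rfl⟩ : a = i ∧ b = l := Prod.ext_iff.mp h
      exact absurd h' (hno c)
    · obtain ⟨rfl, rfl⟩ : a = i ∧ c = l := Prod.ext_iff.mp h'
      exact absurd h (hno b)
    · exact hA.det h h'
  refine ⟨?_, ?_, ?_⟩
  · intro e he
    rcases Finset.mem_insert.mp he with h | h
    · rw [h]; exact ⟨hil, hpos⟩
    · exact hA.1 e h
  · intro a
    apply Finset.card_le_one.mpr
    intro e he f hf
    simp only [Finset.mem_filter] at he hf
    have : e.2 = f.2 := by
      apply hdet (i := a)
      · rw [← he.2, Prod.mk.eta]; exact he.1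
      · rw [← hf.2, Prod.mk.eta]; exact hf.1
    calc e = (a, e.2) := by rw [← he.2]
    _ = (a, f.2) := by rw [this]
    _ = f := by rw [← hf.2]
  · intro x hcyc
    -- case split on whether x reaches i in the inserted graph
    by_cases hxi : Reach (insert (i, l) A) x i
    · have hcyci := transGen_cycle_of_reach hdet hcyc hxi
      rcases Relation.TransGen.head'_iff.mp hcyci with ⟨w, hw, hwi⟩
      have hwl : w = l := by
        rcases Finset.mem_insert.mp hw with h | h
        · exact (Prod.ext_iff.mp h).2
        · exact absurd h (hno w)
      subst hwl
      exact hnr (reach_insert_to_src hwi)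
    · have := transGen_filter_of_not_reach hxi hcyc
      have hsub : (insert (i, l) A).filter (fun e => e.1 ≠ i) ⊆ A := by
        intro e he
        rcases Finset.mem_filter.mp he with ⟨he1, he2⟩
        rcases Finset.mem_insert.mp he1 with h | h
        · exact absurd (Prod.ext_iff.mp h).1 he2
        · exact h
      exact hA.2.2 x (Relation.TransGen.mono (fun a b hab => hsub hab) _ _ this)

lemma isInForest_filter {A : Finset (Fin n × Fin n)} (hA : IsInForest W A)
    (p : Fin n × Fin n → Prop) [DecidablePred p] : IsInForest W (A.filter p) := by
  refine ⟨fun e he => hA.1 e (Finset.mem_of_mem_filter e he), ?_, ?_⟩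
  · intro i
    calc ((A.filter p).filter (fun e => e.1 = i)).card
        ≤ (A.filter (fun e => e.1 = i)).card :=
          Finset.card_le_card (Finset.filter_subset_filter _ (Finset.filter_subset _ _))
    _ ≤ 1 := hA.2.1 i
  · intro x hcyc
    exact hA.2.2 x (Relation.TransGen.mono (fun a b hab => Finset.mem_of_mem_filter _ hab) _ _ hcyc)

lemma isInForest_empty (W : Matrix (Fin n) (Fin n) ℝ) : IsInForest W (∅ : Finset (Fin n × Fin n)) := by
  refine ⟨by simp, by simp, ?_⟩
  intro x hcyc
  rcases Relation.TransGen.head'_iff.mp hcyc with ⟨w, hw, _⟩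
  simp at hw

/-- The successor of `i` in `A` (junk value `i` if there is no arc out of `i`). -/
noncomputable def nxt (A : Finset (Fin n × Fin n)) (i : Fin n) : Fin n :=
  if h : ∃ z, (i, z) ∈ A then h.choose else i

lemma nxt_mem {A : Finset (Fin n × Fin n)} {i : Fin n} (h : ∃ z, (i, z) ∈ A) :
    (i, nxt A i) ∈ A := by
  rw [nxt, dif_pos h]
  exact h.choose_spec

lemma nxt_eq {A : Finset (Fin n × Fin n)} (hdet : Det A) {i z : Fin n} (h : (i, z) ∈ A) :
    nxt A i = z :=
  hdet (nxt_mem ⟨z, h⟩) h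

lemma inTree_self_iff {A : Finset (Fin n × Fin n)} {j : Fin n} :
    InTreeRootedAt A j j ↔ NoArc A j := by
  constructor
  · intro ⟨_, h⟩ z hz
    exact h (j, z) hz rfl
  · intro h
    refine ⟨Relation.ReflTransGen.refl, ?_⟩
    rintro ⟨a, b⟩ he hej
    simp only at hej
    subst hej
    exact h b he

lemma root_iff_noArc {A : Finset (Fin n × Fin n)} {j : Fin n} :
    (∀ e ∈ A, e.1 ≠ j) ↔ NoArc A j := by
  constructor
  · intro h z hz
    exact h (j, z) hz rfl
  · intro h
    rintro ⟨a, b⟩ he hej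
    simp only at hej
    subst hej
    exact h b he

end ForestAux2
section ForestAux3

open scoped Classical

variable {n : ℕ} {W : Matrix (Fin n) (Fin n) ℝ}

lemma tree_mem_of_reach {A : Finset (Fin n × Fin n)} (hdet : Det A) {l i j : Fin n}
    (hl : InTreeRootedAt A l j) (hr : Reach A l i) : InTreeRootedAt A i j := by
  obtain ⟨hlj, hroot⟩ := hl
  refine ⟨?_, hroot⟩
  rcases reach_comparable hdet hr hlj with h | h
  · exact h
  · rw [reach_eq_of_noArc (root_iff_noArc.mp hroot) h]

lemma not_reach_of_inTree {A : Finset (Fin n × Fin n)} (hdet : Det A) {l i j : Fin n}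
    (hl : InTreeRootedAt A l j) (hno : NoArc A i) (hij : i ≠ j) : ¬ Reach A l i := by
  intro hr
  exact hij (reach_eq_of_noArc hno (tree_mem_of_reach hdet hl hr).1)

lemma exists_arc_of_inTree {A : Finset (Fin n × Fin n)} {i j : Fin n}
    (h : InTreeRootedAt A i j) (hij : i ≠ j) : ∃ z, (i, z) ∈ A := by
  rcases Relation.ReflTransGen.cases_head h.1 with h' | ⟨w, hw, _⟩
  · exact absurd h' hij
  · exact ⟨w, hw⟩

lemma reach_tail_of_inTree {A : Finset (Fin n × Fin n)} {i j w : Fin n}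
    (h : InTreeRootedAt A i j) (hdet : Det A) (hij : i ≠ j) (hw : (i, w) ∈ A) :
    Reach A w j := by
  rcases Relation.ReflTransGen.cases_head h.1 with h' | ⟨u, hu, huj⟩
  · exact absurd h' hij
  · rwa [hdet hw hu]

/-- Detaching the arc out of `i` from a forest: master summation bijection. -/
lemma detach_sum (hW : ∀ a b, 0 ≤ W a b) (i : Fin n) (k : ℕ)
    (Φ : Finset (Fin n × Fin n) → Prop) (Ψ : Fin n → Finset (Fin n × Fin n) → Prop)
    (hcorr : ∀ l F, IsInForest W F → F.card = k → NoArc F i → ¬ Reach F l i →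
      W i l ≠ 0 → (Φ (insert (i, l) F) ↔ Ψ l F)) :
    ∑ A ∈ Finset.univ.powerset.filter
        (fun A => IsInForest W A ∧ A.card = k + 1 ∧ (∃ z, (i, z) ∈ A) ∧ Φ A),
      forestWeight W A
    = ∑ p ∈ (Finset.univ ×ˢ Finset.univ.powerset).filter
        (fun p : Fin n × Finset (Fin n × Fin n) =>
          IsInForest W p.2 ∧ p.2.card = k ∧ NoArc p.2 i ∧ ¬ Reach p.2 p.1 i ∧
          W i p.1 ≠ 0 ∧ Ψ p.1 p.2),
      W i p.1 * forestWeight W p.2 := by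
  apply Finset.sum_nbij' (i := fun A => (nxt A i, A.filter (fun e => e.1 ≠ i)))
    (j := fun p => insert (i, p.1) p.2)
  · -- forward membership
    intro A hA
    rw [Finset.mem_filter] at hA
    obtain ⟨-, hF, hcard, hex, hΦ⟩ := hA
    have hil : (i, nxt A i) ∈ A := nxt_mem hex
    have hins : insert (i, nxt A i) (A.filter (fun e => e.1 ≠ i)) = A :=
      insert_filter_eq hF.det hil
    have hcard' : (A.filter (fun e => e.1 ≠ i)).card = k := by
      have := card_insert_filter hF.det hil
      omega
    have hnr : ¬ Reach (A.filter (fun e => e.1 ≠ i)) (nxt A i) i := by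
      intro hr
      exact hF.2.2 i (Relation.TransGen.head' hil (hr.mono (Finset.filter_subset _ _)))
    have hW0 : W i (nxt A i) ≠ 0 := ne_of_gt (hF.1 _ hil).2
    rw [Finset.mem_filter]
    refine ⟨Finset.mem_product.mpr ⟨Finset.mem_univ _, Finset.mem_powerset.mpr
      (Finset.subset_univ _)⟩, isInForest_filter hF _, hcard', noArc_filter A i, hnr, hW0, ?_⟩
    exact (hcorr _ _ (isInForest_filter hF _) hcard' (noArc_filter A i) hnr hW0).mp
      (by rwa [hins])
  · -- backward membership
    rintro ⟨l, F⟩ hp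
    rw [Finset.mem_filter] at hp
    obtain ⟨-, hF, hcard, hno, hnr, hW0, hΨ⟩ := hp
    have hil : i ≠ l := fun h => hnr (h ▸ Reach.refl)
    have hpos : 0 < W i l := lt_of_le_of_ne (hW i l) (Ne.symm hW0)
    have hFor : IsInForest W (insert (i, l) F) := isInForest_insert hF hno hil hpos hnr
    rw [Finset.mem_filter]
    refine ⟨Finset.mem_powerset.mpr (Finset.subset_univ _), hFor, ?_, ⟨l, Finset.mem_insert_self _ _⟩, ?_⟩
    · rw [Finset.card_insert_of_notMem (hno l), hcard]
    · exact (hcorr _ _ hF hcard hno hnr hW0).mpr hΨ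
  · -- left inverse
    intro A hA
    rw [Finset.mem_filter] at hA
    obtain ⟨-, hF, hcard, hex, hΦ⟩ := hA
    exact insert_filter_eq hF.det (nxt_mem hex)
  · -- right inverse
    rintro ⟨l, F⟩ hp
    rw [Finset.mem_filter] at hp
    obtain ⟨-, hF, hcard, hno, hnr, hW0, hΨ⟩ := hp
    have hil : i ≠ l := fun h => hnr (h ▸ Reach.refl)
    have hpos : 0 < W i l := lt_of_le_of_ne (hW i l) (Ne.symm hW0)
    have hFor : IsInForest W (insert (i, l) F) := isInForest_insert hF hno hil hpos hnr
    have h1 : nxt (insert (i, l) F) i = l := nxt_eq hFor.det (Finset.mem_insert_self _ _)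
    have h2 : (insert (i, l) F).filter (fun e => e.1 ≠ i) = F := by
      rw [Finset.filter_insert]
      simp only [ne_eq, not_true_eq_false, if_neg, if_false]
      exact filter_eq_self_of_noArc hno
    rw [h1, h2]
  · -- weights
    intro A hA
    rw [Finset.mem_filter] at hA
    obtain ⟨-, hF, hcard, hex, hΦ⟩ := hA
    have hil : (i, nxt A i) ∈ A := nxt_mem hex
    conv_lhs => rw [← insert_filter_eq hF.det hil]
    exact weight_insert (notMem_filter_ne A i (nxt A i))

end ForestAux3
section ForestAux4

open scoped Classical

variable {n : ℕ} {W : Matrix (Fin n) (Fin n) ℝ}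

/-- Replace the arc out of `i` by an arc to the marked vertex, marking the old target. -/
noncomputable def swapMap (i : Fin n) (p : Fin n × Finset (Fin n × Fin n)) :
    Fin n × Finset (Fin n × Fin n) :=
  (nxt p.2 i, insert (i, p.1) (p.2.filter (fun e => e.1 ≠ i)))

lemma swap_facts {F : Finset (Fin n × Fin n)} {i x : Fin n} (hW : ∀ a b, 0 ≤ W a b)
    (hF : IsInForest W F) (hex : ∃ z, (i, z) ∈ F) (hnr : ¬ Reach F x i)
    (hW0 : W i x ≠ 0) :
    IsInForest W (insert (i, x) (F.filter (fun e => e.1 ≠ i))) ∧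
    (insert (i, x) (F.filter (fun e => e.1 ≠ i))).card = F.card ∧
    swapMap i (swapMap i (x, F)) = (x, F) ∧
    ¬ Reach (insert (i, x) (F.filter (fun e => e.1 ≠ i))) (nxt F i) i ∧
    W i (nxt F i) ≠ 0 ∧
    forestWeight W F = W i (nxt F i) * forestWeight W (F.filter (fun e => e.1 ≠ i)) ∧
    forestWeight W (insert (i, x) (F.filter (fun e => e.1 ≠ i)))
      = W i x * forestWeight W (F.filter (fun e => e.1 ≠ i)) := by
  set A₀ := F.filter (fun e => e.1 ≠ i) with hA₀def
  have hm : (i, nxt F i) ∈ F := nxt_mem hex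
  have hA₀ : IsInForest W A₀ := isInForest_filter hF _
  have hnoA₀ : NoArc A₀ i := noArc_filter F i
  have hix : i ≠ x := fun h => hnr (h ▸ Reach.refl)
  have hnrA₀ : ¬ Reach A₀ x i := fun h => hnr (h.mono (Finset.filter_subset _ _))
  have hpos : 0 < W i x := lt_of_le_of_ne (hW i x) (Ne.symm hW0)
  have hG : IsInForest W (insert (i, x) A₀) := isInForest_insert hA₀ hnoA₀ hix hpos hnrA₀
  have hcards : A₀.card + 1 = F.card := card_insert_filter hF.det hm
  have hcardG : (insert (i, x) A₀).card = F.card := by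
    rw [Finset.card_insert_of_notMem (hnoA₀ x)]; omega
  have hGfilter : (insert (i, x) A₀).filter (fun e => e.1 ≠ i) = A₀ := by
    rw [Finset.filter_insert]
    simp only [ne_eq, not_true_eq_false, if_neg, if_false]
    exact filter_eq_self_of_noArc hnoA₀
  have hswap : swapMap i (swapMap i (x, F)) = (x, F) := by
    show (nxt (insert (i, x) A₀) i, insert (i, nxt F i)
      ((insert (i, x) A₀).filter (fun e => e.1 ≠ i))) = (x, F)
    rw [hGfilter, nxt_eq hG.det (Finset.mem_insert_self _ _), insert_filter_eq hF.det hm]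
  have hGnr : ¬ Reach (insert (i, x) A₀) (nxt F i) i := by
    intro h
    exact hF.2.2 i (Relation.TransGen.head' hm
      ((reach_insert_to_src h).mono (Finset.filter_subset _ _)))
  have hWm : W i (nxt F i) ≠ 0 := ne_of_gt (hF.1 _ hm).2
  have hwF : forestWeight W F = W i (nxt F i) * forestWeight W A₀ := by
    conv_lhs => rw [← insert_filter_eq hF.det hm]
    exact weight_insert (notMem_filter_ne F i (nxt F i))
  exact ⟨hG, hcardG, hswap, hGnr, hWm, hwF, weight_insert (hnoA₀ x)⟩

lemma reach_transfer {F : Finset (Fin n × Fin n)} {i x y j : Fin n}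
    (hr : Reach F y j) (hni : ¬ Reach F y i) :
    Reach (insert (i, x) (F.filter (fun e => e.1 ≠ i))) y j :=
  (reach_filter_of_not_reach hr hni).mono (Finset.subset_insert _ _)

lemma root_transfer {F : Finset (Fin n × Fin n)} {i x j : Fin n}
    (hroot : ∀ e ∈ F, e.1 ≠ j) (hij : i ≠ j) :
    ∀ e ∈ insert (i, x) (F.filter (fun e => e.1 ≠ i)), e.1 ≠ j := by
  intro e he
  rcases Finset.mem_insert.mp he with h | h
  · rw [h]; exact hij
  · exact hroot e (Finset.mem_of_mem_filter e h)

/-- The key exchange bijection for the off-diagonal entries. -/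
lemma swap_sum (hW : ∀ a b, 0 ≤ W a b) {i j : Fin n} (hij : i ≠ j) (k : ℕ) :
    ∑ p ∈ (Finset.univ ×ˢ Finset.univ.powerset).filter
        (fun p : Fin n × Finset (Fin n × Fin n) =>
          IsInForest W p.2 ∧ p.2.card = k ∧ InTreeRootedAt p.2 p.1 j ∧
          (∃ z, (i, z) ∈ p.2) ∧ W i p.1 ≠ 0),
      W i p.1 * forestWeight W p.2
    = ∑ p ∈ (Finset.univ ×ˢ Finset.univ.powerset).filter
        (fun p : Fin n × Finset (Fin n × Fin n) =>
          IsInForest W p.2 ∧ p.2.card = k ∧ InTreeRootedAt p.2 i j ∧ W i p.1 ≠ 0),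
      W i p.1 * forestWeight W p.2 := by
  classical
  rw [← Finset.sum_filter_add_sum_filter_not
      (p := fun p : Fin n × Finset (Fin n × Fin n) => Reach p.2 p.1 i) _ _,
    ← Finset.sum_filter_add_sum_filter_not
      (p := fun p : Fin n × Finset (Fin n × Fin n) => Reach p.2 p.1 i)
      ((Finset.univ ×ˢ Finset.univ.powerset).filter
        (fun p : Fin n × Finset (Fin n × Fin n) =>
          IsInForest W p.2 ∧ p.2.card = k ∧ InTreeRootedAt p.2 i j ∧ W i p.1 ≠ 0)) _]
  congr 1
  · -- bad parts: equal index sets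
    apply Finset.sum_congr _ (fun _ _ => rfl)
    rw [Finset.filter_filter, Finset.filter_filter]
    apply Finset.filter_congr
    rintro ⟨x, F⟩ -
    simp only
    constructor
    · rintro ⟨⟨hF, hcard, hTree, hex, hW0⟩, hr⟩
      exact ⟨⟨hF, hcard, tree_mem_of_reach hF.det hTree hr, hW0⟩, hr⟩
    · rintro ⟨⟨hF, hcard, hTree, hW0⟩, hr⟩
      refine ⟨⟨hF, hcard, ⟨hr.trans hTree.1, hTree.2⟩,
        exists_arc_of_inTree hTree hij, hW0⟩, hr⟩
  · -- good parts: the exchange bijection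
    apply Finset.sum_nbij' (i := swapMap i) (j := swapMap i)
    · rintro ⟨x, F⟩ hp
      simp only [Finset.mem_filter] at hp
      obtain ⟨⟨-, hF, hcard, hTree, hex, hW0⟩, hnr⟩ := hp
      obtain ⟨hG, hcardG, -, hGnr, hWm, -, -⟩ := swap_facts hW hF hex hnr hW0
      simp only [Finset.mem_filter, swapMap]
      refine ⟨⟨Finset.mem_product.mpr ⟨Finset.mem_univ _, Finset.mem_powerset.mpr
        (Finset.subset_univ _)⟩, hG, by rw [hcardG, hcard], ?_, hWm⟩, hGnr⟩
      exact ⟨Relation.ReflTransGen.head (Finset.mem_insert_self _ _)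
        (reach_transfer hTree.1 hnr), root_transfer hTree.2 hij⟩
    · rintro ⟨m, G⟩ hp
      simp only [Finset.mem_filter] at hp
      obtain ⟨⟨-, hG, hcard, hTree, hW0⟩, hnr⟩ := hp
      have hex : ∃ z, (i, z) ∈ G := exists_arc_of_inTree hTree hij
      have hx : (i, nxt G i) ∈ G := nxt_mem hex
      obtain ⟨hF, hcardF, -, hFnr, hWx, -, -⟩ := swap_facts hW hG hex hnr hW0
      have hxj : Reach G (nxt G i) j := reach_tail_of_inTree hTree hG.det hij hx
      have hxi : ¬ Reach G (nxt G i) i := fun h =>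
        hG.2.2 i (Relation.TransGen.head' hx h)
      simp only [Finset.mem_filter, swapMap]
      refine ⟨⟨Finset.mem_product.mpr ⟨Finset.mem_univ _, Finset.mem_powerset.mpr
        (Finset.subset_univ _)⟩, hF, by rw [hcardF, hcard],
        ⟨reach_transfer hxj hxi, root_transfer hTree.2 hij⟩,
        ⟨m, Finset.mem_insert_self _ _⟩, hWx⟩, hFnr⟩
    · rintro ⟨x, F⟩ hp
      simp only [Finset.mem_filter] at hp
      obtain ⟨⟨-, hF, hcard, hTree, hex, hW0⟩, hnr⟩ := hp
      exact (swap_facts hW hF hex hnr hW0).2.2.1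
    · rintro ⟨m, G⟩ hp
      simp only [Finset.mem_filter] at hp
      obtain ⟨⟨-, hG, hcard, hTree, hW0⟩, hnr⟩ := hp
      exact (swap_facts hW hG (exists_arc_of_inTree hTree hij) hnr hW0).2.2.1
    · rintro ⟨x, F⟩ hp
      simp only [Finset.mem_filter] at hp
      obtain ⟨⟨-, hF, hcard, hTree, hex, hW0⟩, hnr⟩ := hp
      obtain ⟨-, -, -, -, -, hwF, hwG⟩ := swap_facts hW hF hex hnr hW0
      simp only [swapMap]
      rw [hwF, hwG]
      ring

end ForestAux4
section ForestAux5

open scoped Classical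

variable {n : ℕ} {W : Matrix (Fin n) (Fin n) ℝ}

lemma sum_pair_filter {α β M : Type*} [AddCommMonoid M] (s : Finset α) (t : Finset β)
    (C : α × β → Prop) [DecidablePred C] (f : α × β → M) :
    ∑ p ∈ (s ×ˢ t).filter C, f p
      = ∑ a ∈ s, ∑ b ∈ t.filter (fun b => C (a, b)), f (a, b) := by
  apply Finset.sum_finset_product
  intro p
  rw [Finset.mem_filter, Finset.mem_product, Finset.mem_filter]
  tauto

lemma sum_filter_congr {α M : Type*} [AddCommMonoid M] {s : Finset α} {p q : α → Prop}
    {_i1 : DecidablePred p} {_i2 : DecidablePred q} (h : ∀ x, p x ↔ q x) (f : α → M) :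
    ∑ x ∈ s.filter p, f x = ∑ x ∈ s.filter q, f x := by
  apply Finset.sum_congr _ (fun _ _ => rfl)
  ext x
  simp only [Finset.mem_filter, h]

lemma sum_nested_filter {α M : Type*} [AddCommMonoid M] {s : Finset α} {p q r : α → Prop}
    {_i1 : DecidablePred p} {_i2 : DecidablePred q} {_i3 : DecidablePred r}
    (h : ∀ x, p x ∧ q x ↔ r x) (f : α → M) :
    ∑ x ∈ (s.filter p).filter q, f x = ∑ x ∈ s.filter r, f x := by
  apply Finset.sum_congr _ (fun _ _ => rfl)
  ext x
  simp only [Finset.mem_filter, and_assoc, h]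

lemma row_sum (i j : Fin n) (k : ℕ) :
    ∑ l, W i l * forestMatrix W k l j
      = ∑ p ∈ (Finset.univ ×ˢ Finset.univ.powerset).filter
        (fun p : Fin n × Finset (Fin n × Fin n) =>
          (IsInForest W p.2 ∧ p.2.card = k ∧ InTreeRootedAt p.2 p.1 j) ∧ W i p.1 ≠ 0),
        W i p.1 * forestWeight W p.2 := by
  have e1 : ∑ p ∈ (Finset.univ ×ˢ Finset.univ.powerset).filter
        (fun p : Fin n × Finset (Fin n × Fin n) =>
          (IsInForest W p.2 ∧ p.2.card = k ∧ InTreeRootedAt p.2 p.1 j) ∧ W i p.1 ≠ 0),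
        W i p.1 * forestWeight W p.2
      = ∑ p ∈ (Finset.univ ×ˢ Finset.univ.powerset).filter
        (fun p : Fin n × Finset (Fin n × Fin n) =>
          IsInForest W p.2 ∧ p.2.card = k ∧ InTreeRootedAt p.2 p.1 j),
        W i p.1 * forestWeight W p.2 := by
    rw [Finset.sum_filter, Finset.sum_filter]
    apply Finset.sum_congr rfl
    rintro p -
    by_cases h0 : W i p.1 = 0
    · simp [h0]
    · simp [h0]
  rw [e1]
  refine Eq.symm ((sum_pair_filter _ _ _ _).trans ?_)
  refine Eq.symm (Finset.sum_congr rfl ?_)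
  intro l _
  show W i l * forestMatrix W k l j = _
  rw [show forestMatrix W k l j = ∑ A ∈ Finset.univ.powerset.filter
      (fun A => IsInForest W A ∧ A.card = k ∧ InTreeRootedAt A l j), forestWeight W A from rfl,
    Finset.mul_sum]

lemma const_sum (i j : Fin n) (k : ℕ) :
    (∑ m, W i m) * forestMatrix W k i j
      = ∑ p ∈ (Finset.univ ×ˢ Finset.univ.powerset).filter
        (fun p : Fin n × Finset (Fin n × Fin n) =>
          (IsInForest W p.2 ∧ p.2.card = k ∧ InTreeRootedAt p.2 i j) ∧ W i p.1 ≠ 0),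
        W i p.1 * forestWeight W p.2 := by
  have e1 : ∑ p ∈ (Finset.univ ×ˢ Finset.univ.powerset).filter
        (fun p : Fin n × Finset (Fin n × Fin n) =>
          (IsInForest W p.2 ∧ p.2.card = k ∧ InTreeRootedAt p.2 i j) ∧ W i p.1 ≠ 0),
        W i p.1 * forestWeight W p.2
      = ∑ p ∈ (Finset.univ ×ˢ Finset.univ.powerset).filter
        (fun p : Fin n × Finset (Fin n × Fin n) =>
          IsInForest W p.2 ∧ p.2.card = k ∧ InTreeRootedAt p.2 i j),
        W i p.1 * forestWeight W p.2 := by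
    rw [Finset.sum_filter, Finset.sum_filter]
    apply Finset.sum_congr rfl
    rintro p -
    by_cases h0 : W i p.1 = 0
    · simp [h0]
    · simp [h0]
  rw [e1, Finset.sum_mul]
  refine Eq.symm ((sum_pair_filter _ _ _ _).trans ?_)
  refine Eq.symm (Finset.sum_congr rfl ?_)
  intro m _
  show W i m * forestMatrix W k i j = _
  rw [show forestMatrix W k i j = ∑ A ∈ Finset.univ.powerset.filter
      (fun A => IsInForest W A ∧ A.card = k ∧ InTreeRootedAt A i j), forestWeight W A from rfl,
    Finset.mul_sum]

lemma inTree_insert_iff {F : Finset (Fin n × Fin n)} {i l j : Fin n} (hij : i ≠ j)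
    (hno : NoArc F i) (hnr : ¬ Reach F l i) :
    InTreeRootedAt (insert (i, l) F) i j ↔ InTreeRootedAt F l j := by
  have hfilt : (insert (i, l) F).filter (fun e => e.1 ≠ i) = F := by
    rw [Finset.filter_insert]
    simp only [ne_eq, not_true_eq_false, if_neg, if_false]
    exact filter_eq_self_of_noArc hno
  constructor
  · rintro ⟨hr, hroot⟩
    have hrootF : ∀ e ∈ F, e.1 ≠ j := fun e he => hroot e (Finset.mem_insert_of_mem he)
    rcases Relation.ReflTransGen.cases_head hr with h | ⟨w, hw, hwj⟩
    · exact absurd h hij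
    · have hwl : w = l := by
        rcases Finset.mem_insert.mp hw with h | h
        · exact (Prod.ext_iff.mp h).2
        · exact absurd h (hno w)
      rw [hwl] at hwj
      have hnrG : ¬ Reach (insert (i, l) F) l i := fun h => hnr (reach_insert_to_src h)
      have := reach_filter_of_not_reach hwj hnrG
      rw [hfilt] at this
      exact ⟨this, hrootF⟩
  · rintro ⟨hr, hroot⟩
    refine ⟨Relation.ReflTransGen.head (Finset.mem_insert_self _ _)
      (Reach.mono (Finset.subset_insert _ _) hr), ?_⟩
    intro e he
    rcases Finset.mem_insert.mp he with h | h
    · rw [h]; exact hij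
    · exact hroot e h

end ForestAux5
section ForestAux6

open scoped Classical

variable {n : ℕ} {W : Matrix (Fin n) (Fin n) ℝ}

lemma entry_off (hW : ∀ a b, 0 ≤ W a b) {i j : Fin n} (hij : i ≠ j) (k : ℕ) :
    forestMatrix W (k + 1) i j
      = (∑ l, W i l * forestMatrix W k l j) - (∑ m, W i m) * forestMatrix W k i j := by
  -- the detach bijection
  have hdetach := detach_sum (W := W) hW i k (fun A => InTreeRootedAt A i j)
      (fun l F => InTreeRootedAt F l j)
      (fun l F hF hc hno hnr hW0 => inTree_insert_iff hij hno hnr)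
  -- the matrix entry expressed through the detach bijection
  have h1 : forestMatrix W (k + 1) i j
      = ∑ p ∈ (Finset.univ ×ˢ Finset.univ.powerset).filter
          (fun p : Fin n × Finset (Fin n × Fin n) =>
            ((IsInForest W p.2 ∧ p.2.card = k ∧ InTreeRootedAt p.2 p.1 j) ∧ W i p.1 ≠ 0)
              ∧ NoArc p.2 i),
          W i p.1 * forestWeight W p.2 := by
    have h0 : forestMatrix W (k + 1) i j
        = ∑ A ∈ Finset.univ.powerset.filter
            (fun A => IsInForest W A ∧ A.card = k + 1 ∧ (∃ z, (i, z) ∈ A) ∧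
              InTreeRootedAt A i j),
          forestWeight W A := by
      show (∑ A ∈ Finset.univ.powerset.filter
          (fun A => IsInForest W A ∧ A.card = k + 1 ∧ InTreeRootedAt A i j),
        forestWeight W A) = _
      apply sum_filter_congr _ _
      intro A
      constructor
      · rintro ⟨hF, hc, hT⟩
        exact ⟨hF, hc, exists_arc_of_inTree hT hij, hT⟩
      · rintro ⟨hF, hc, -, hT⟩
        exact ⟨hF, hc, hT⟩
    rw [h0, hdetach]
    apply sum_filter_congr _ _
    rintro ⟨l, F⟩
    simp only
    constructor
    · rintro ⟨hF, hc, hno, hnr, hW0, hT⟩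
      exact ⟨⟨⟨hF, hc, hT⟩, hW0⟩, hno⟩
    · rintro ⟨⟨⟨hF, hc, hT⟩, hW0⟩, hno⟩
      exact ⟨hF, hc, hno, not_reach_of_inTree hF.det hT hno hij, hW0, hT⟩
  -- split the row sum
  have hsplit := Finset.sum_filter_add_sum_filter_not
      ((Finset.univ ×ˢ Finset.univ.powerset).filter
        (fun p : Fin n × Finset (Fin n × Fin n) =>
          (IsInForest W p.2 ∧ p.2.card = k ∧ InTreeRootedAt p.2 p.1 j) ∧ W i p.1 ≠ 0))
      (fun p => NoArc p.2 i) (fun p => W i p.1 * forestWeight W p.2)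
  have hone : ∑ p ∈ ((Finset.univ ×ˢ Finset.univ.powerset).filter
        (fun p : Fin n × Finset (Fin n × Fin n) =>
          (IsInForest W p.2 ∧ p.2.card = k ∧ InTreeRootedAt p.2 p.1 j) ∧ W i p.1 ≠ 0)).filter
        (fun p => NoArc p.2 i), W i p.1 * forestWeight W p.2
      = ∑ p ∈ (Finset.univ ×ˢ Finset.univ.powerset).filter
          (fun p : Fin n × Finset (Fin n × Fin n) =>
            ((IsInForest W p.2 ∧ p.2.card = k ∧ InTreeRootedAt p.2 p.1 j) ∧ W i p.1 ≠ 0)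
              ∧ NoArc p.2 i),
          W i p.1 * forestWeight W p.2 :=
    sum_nested_filter (fun p => Iff.rfl) _
  have htwo : ∑ p ∈ ((Finset.univ ×ˢ Finset.univ.powerset).filter
        (fun p : Fin n × Finset (Fin n × Fin n) =>
          (IsInForest W p.2 ∧ p.2.card = k ∧ InTreeRootedAt p.2 p.1 j) ∧ W i p.1 ≠ 0)).filter
        (fun p => ¬ NoArc p.2 i), W i p.1 * forestWeight W p.2
      = ∑ p ∈ (Finset.univ ×ˢ Finset.univ.powerset).filter
          (fun p : Fin n × Finset (Fin n × Fin n) =>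
            IsInForest W p.2 ∧ p.2.card = k ∧ InTreeRootedAt p.2 p.1 j ∧
            (∃ z, (i, z) ∈ p.2) ∧ W i p.1 ≠ 0),
          W i p.1 * forestWeight W p.2 := by
    apply sum_nested_filter _ _
    rintro ⟨l, F⟩
    simp only
    constructor
    · rintro ⟨⟨⟨hF, hc, hT⟩, hW0⟩, hno⟩
      exact ⟨hF, hc, hT, not_forall_not.mp hno, hW0⟩
    · rintro ⟨hF, hc, hT, ⟨z, hz⟩, hW0⟩
      exact ⟨⟨⟨hF, hc, hT⟩, hW0⟩, fun hno => hno z hz⟩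
  have hswap := swap_sum (W := W) hW hij k
  have hconst : (∑ m, W i m) * forestMatrix W k i j
      = ∑ p ∈ (Finset.univ ×ˢ Finset.univ.powerset).filter
          (fun p : Fin n × Finset (Fin n × Fin n) =>
            IsInForest W p.2 ∧ p.2.card = k ∧ InTreeRootedAt p.2 i j ∧ W i p.1 ≠ 0),
          W i p.1 * forestWeight W p.2 := by
    rw [const_sum i j k]
    apply sum_filter_congr _ _
    rintro ⟨l, F⟩
    simp only
    tauto
  rw [h1, row_sum i j k, hconst, ← hsplit, hone, htwo, hswap]
  ring
lemma entry_diag (hW : ∀ a b, 0 ≤ W a b) (j : Fin n) (k : ℕ) :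
    forestMatrix W (k + 1) j j
      = (∑ l, W j l * forestMatrix W k l j) - (∑ m, W j m) * forestMatrix W k j j
        + sigmaW W (k + 1) := by
  have hdetach := detach_sum (W := W) hW j k (fun _ => True) (fun _ _ => True)
      (fun _ _ _ _ _ _ _ => Iff.rfl)
  -- split σ_{k+1} by whether j is a root
  have hsig := Finset.sum_filter_add_sum_filter_not
      (Finset.univ.powerset.filter (fun A => IsInForest W A ∧ A.card = k + 1))
      (fun A => NoArc A j) (forestWeight W)
  have hsig1 : ∑ A ∈ (Finset.univ.powerset.filter
        (fun A => IsInForest W A ∧ A.card = k + 1)).filter (fun A => NoArc A j),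
        forestWeight W A = forestMatrix W (k + 1) j j := by
    show _ = ∑ A ∈ Finset.univ.powerset.filter
        (fun A => IsInForest W A ∧ A.card = k + 1 ∧ InTreeRootedAt A j j), forestWeight W A
    apply sum_nested_filter _ _
    intro A
    constructor
    · rintro ⟨⟨hF, hc⟩, hno⟩
      exact ⟨hF, hc, inTree_self_iff.mpr hno⟩
    · rintro ⟨hF, hc, hT⟩
      exact ⟨⟨hF, hc⟩, inTree_self_iff.mp hT⟩
  have hsig2 : ∑ A ∈ (Finset.univ.powerset.filter
        (fun A => IsInForest W A ∧ A.card = k + 1)).filter (fun A => ¬ NoArc A j),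
        forestWeight W A
      = ∑ p ∈ (Finset.univ ×ˢ Finset.univ.powerset).filter
          (fun p : Fin n × Finset (Fin n × Fin n) =>
            ((IsInForest W p.2 ∧ p.2.card = k ∧ NoArc p.2 j) ∧ W j p.1 ≠ 0)
              ∧ ¬ Reach p.2 p.1 j),
          W j p.1 * forestWeight W p.2 := by
    have e1 : ∑ A ∈ (Finset.univ.powerset.filter
          (fun A => IsInForest W A ∧ A.card = k + 1)).filter (fun A => ¬ NoArc A j),
          forestWeight W A
        = ∑ A ∈ Finset.univ.powerset.filter
            (fun A => IsInForest W A ∧ A.card = k + 1 ∧ (∃ z, (j, z) ∈ A) ∧ True),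
          forestWeight W A := by
      apply sum_nested_filter _ _
      intro A
      constructor
      · rintro ⟨⟨hF, hc⟩, hno⟩
        exact ⟨hF, hc, not_forall_not.mp hno, trivial⟩
      · rintro ⟨hF, hc, ⟨z, hz⟩, -⟩
        exact ⟨⟨hF, hc⟩, fun hno => hno z hz⟩
    rw [e1]
    refine (sum_filter_congr (fun A => Iff.rfl) _).trans (hdetach.trans ?_)
    apply sum_filter_congr _ _
    rintro ⟨l, F⟩
    simp only
    constructor
    · rintro ⟨hF, hc, hno, hnr, hW0, -⟩
      exact ⟨⟨⟨hF, hc, hno⟩, hW0⟩, hnr⟩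
    · rintro ⟨⟨⟨hF, hc, hno⟩, hW0⟩, hnr⟩
      exact ⟨hF, hc, hno, hnr, hW0, trivial⟩
  -- the base set for the row and diagonal sums
  have hZsplit := Finset.sum_filter_add_sum_filter_not
      ((Finset.univ ×ˢ Finset.univ.powerset).filter
        (fun p : Fin n × Finset (Fin n × Fin n) =>
          (IsInForest W p.2 ∧ p.2.card = k ∧ NoArc p.2 j) ∧ W j p.1 ≠ 0))
      (fun p => Reach p.2 p.1 j) (fun p => W j p.1 * forestWeight W p.2)
  have hrow : ∑ l, W j l * forestMatrix W k l j
      = ∑ p ∈ ((Finset.univ ×ˢ Finset.univ.powerset).filter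
          (fun p : Fin n × Finset (Fin n × Fin n) =>
            (IsInForest W p.2 ∧ p.2.card = k ∧ NoArc p.2 j) ∧ W j p.1 ≠ 0)).filter
          (fun p => Reach p.2 p.1 j),
          W j p.1 * forestWeight W p.2 := by
    rw [row_sum j j k]
    refine Eq.symm (sum_nested_filter ?_ _)
    rintro ⟨l, F⟩
    simp only
    constructor
    · rintro ⟨⟨⟨hF, hc, hno⟩, hW0⟩, hr⟩
      exact ⟨⟨hF, hc, hr, root_iff_noArc.mpr hno⟩, hW0⟩
    · rintro ⟨⟨hF, hc, hr, hroot⟩, hW0⟩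
      exact ⟨⟨⟨hF, hc, root_iff_noArc.mp hroot⟩, hW0⟩, hr⟩
  have hconst : (∑ m, W j m) * forestMatrix W k j j
      = ∑ p ∈ (Finset.univ ×ˢ Finset.univ.powerset).filter
          (fun p : Fin n × Finset (Fin n × Fin n) =>
            (IsInForest W p.2 ∧ p.2.card = k ∧ NoArc p.2 j) ∧ W j p.1 ≠ 0),
          W j p.1 * forestWeight W p.2 := by
    rw [const_sum j j k]
    apply sum_filter_congr _ _
    rintro ⟨l, F⟩
    simp only
    constructor
    · rintro ⟨⟨hF, hc, hT⟩, hW0⟩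
      exact ⟨⟨hF, hc, inTree_self_iff.mp hT⟩, hW0⟩
    · rintro ⟨⟨hF, hc, hno⟩, hW0⟩
      exact ⟨⟨hF, hc, inTree_self_iff.mpr hno⟩, hW0⟩
  have hgamma : ∑ p ∈ ((Finset.univ ×ˢ Finset.univ.powerset).filter
        (fun p : Fin n × Finset (Fin n × Fin n) =>
          (IsInForest W p.2 ∧ p.2.card = k ∧ NoArc p.2 j) ∧ W j p.1 ≠ 0)).filter
        (fun p => ¬ Reach p.2 p.1 j),
        W j p.1 * forestWeight W p.2
      = ∑ p ∈ (Finset.univ ×ˢ Finset.univ.powerset).filter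
          (fun p : Fin n × Finset (Fin n × Fin n) =>
            ((IsInForest W p.2 ∧ p.2.card = k ∧ NoArc p.2 j) ∧ W j p.1 ≠ 0)
              ∧ ¬ Reach p.2 p.1 j),
          W j p.1 * forestWeight W p.2 :=
    sum_nested_filter (fun p => Iff.rfl) _
  have hsigma : sigmaW W (k + 1)
      = ∑ A ∈ (Finset.univ.powerset.filter
          (fun A => IsInForest W A ∧ A.card = k + 1)).filter (fun A => NoArc A j)
          , forestWeight W A
        + ∑ A ∈ (Finset.univ.powerset.filter
          (fun A => IsInForest W A ∧ A.card = k + 1)).filter (fun A => ¬ NoArc A j)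
          , forestWeight W A := hsig.symm
  rw [hsigma, hsig1, hsig2, hrow, hconst, ← hZsplit, hgamma]
  ring
lemma forestMatrix_zero : forestMatrix W 0 = 1 := by
  ext i j
  show (∑ A ∈ Finset.univ.powerset.filter
      (fun A => IsInForest W A ∧ A.card = 0 ∧ InTreeRootedAt A i j), forestWeight W A)
    = (1 : Matrix (Fin n) (Fin n) ℝ) i j
  have hempty : NoArc (∅ : Finset (Fin n × Fin n)) i := fun z h => absurd h (Finset.notMem_empty _)
  by_cases hij : i = j
  · subst hij
    rw [Matrix.one_apply_eq]
    have hset : Finset.univ.powerset.filter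
        (fun A => IsInForest W A ∧ A.card = 0 ∧ InTreeRootedAt A i i)
        = {(∅ : Finset (Fin n × Fin n))} := by
      ext A
      simp only [Finset.mem_filter, Finset.mem_powerset, Finset.mem_singleton]
      constructor
      · rintro ⟨-, -, hc, -⟩
        exact Finset.card_eq_zero.mp hc
      · rintro rfl
        exact ⟨Finset.empty_subset _, isInForest_empty W, Finset.card_empty,
          inTree_self_iff.mpr hempty⟩
    rw [hset, Finset.sum_singleton]
    simp [forestWeight]
  · rw [Matrix.one_apply_ne hij]
    have hset : Finset.univ.powerset.filter
        (fun A => IsInForest W A ∧ A.card = 0 ∧ InTreeRootedAt A i j)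
        = (∅ : Finset (Finset (Fin n × Fin n))) := by
      ext A
      simp only [Finset.mem_filter, Finset.mem_powerset, Finset.notMem_empty, iff_false,
        not_and]
      rintro - - hc ⟨hr, -⟩
      obtain rfl := Finset.card_eq_zero.mp hc
      exact hij (reach_eq_of_noArc hempty hr)
    rw [hset, Finset.sum_empty]

lemma trace_forestMatrix (k : ℕ) :
    ∑ j, forestMatrix W k j j = ((n : ℝ) - k) * sigmaW W k := by
  have per_j : ∀ j : Fin n, forestMatrix W k j j
      = ∑ A ∈ Finset.univ.powerset.filter (fun A => IsInForest W A ∧ A.card = k),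
          (if NoArc A j then forestWeight W A else 0) := by
    intro j
    rw [← Finset.sum_filter]
    show (∑ A ∈ Finset.univ.powerset.filter
        (fun A => IsInForest W A ∧ A.card = k ∧ InTreeRootedAt A j j), forestWeight W A) = _
    refine Eq.symm (sum_nested_filter ?_ _)
    intro A
    constructor
    · rintro ⟨⟨hF, hc⟩, hno⟩
      exact ⟨hF, hc, inTree_self_iff.mpr hno⟩
    · rintro ⟨hF, hc, hT⟩
      exact ⟨⟨hF, hc⟩, inTree_self_iff.mp hT⟩
  calc ∑ j, forestMatrix W k j j
      = ∑ j : Fin n, ∑ A ∈ Finset.univ.powerset.filter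
          (fun A => IsInForest W A ∧ A.card = k),
          (if NoArc A j then forestWeight W A else 0) :=
        Finset.sum_congr rfl (fun j _ => per_j j)
    _ = ∑ A ∈ Finset.univ.powerset.filter (fun A => IsInForest W A ∧ A.card = k),
          ∑ j : Fin n, (if NoArc A j then forestWeight W A else 0) := Finset.sum_comm
    _ = ∑ A ∈ Finset.univ.powerset.filter (fun A => IsInForest W A ∧ A.card = k),
          ((n : ℝ) - k) * forestWeight W A := ?_
    _ = ((n : ℝ) - k) * sigmaW W k := by
        rw [← Finset.mul_sum]
        rfl
  apply Finset.sum_congr rfl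
  intro A hA
  rw [Finset.mem_filter] at hA
  obtain ⟨-, hF, hc⟩ := hA
  rw [← Finset.sum_filter, Finset.sum_const, nsmul_eq_mul]
  congr 1
  have himage : Finset.univ.filter (fun j : Fin n => NoArc A j)
      = Finset.univ \ A.image Prod.fst := by
    ext x
    simp only [Finset.mem_filter, Finset.mem_univ, true_and, Finset.mem_sdiff,
      Finset.mem_image]
    constructor
    · intro h hex
      obtain ⟨⟨a, b⟩, he, rfl⟩ := hex
      exact h b he
    · intro h z hz
      exact h ⟨(x, z), hz, rfl⟩
  have hinj : Set.InjOn Prod.fst (A : Set (Fin n × Fin n)) := by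
    rintro ⟨a, b⟩ ha ⟨c, d⟩ hc h
    simp only at h
    subst h
    rw [hF.det ha hc]
  have hcard : (A.image Prod.fst).card = k := by
    rw [Finset.card_image_of_injOn hinj, hc]
  have hkn : k ≤ n := by
    calc k = (A.image Prod.fst).card := hcard.symm
    _ ≤ (Finset.univ : Finset (Fin n)).card := Finset.card_le_card (Finset.subset_univ _)
    _ = n := Finset.card_univ.trans (Fintype.card_fin n)
  rw [himage, Finset.card_sdiff_of_subset (Finset.subset_univ _), hcard, Finset.card_univ,
    Fintype.card_fin]
  push_cast [hkn]
  ring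
end ForestAux6
/-- Faddeev-type recursion for the forest matrices:
`Q_{k+1} = (−L)Q_k + σ_{k+1} I` and `σ_{k+1} = tr(L Q_k)/(k+1)`,
starting from `Q_0 = I`. -/
theorem forestMatrix_recursion {n : ℕ} (W : Matrix (Fin n) (Fin n) ℝ)
    (hn : 1 < n) (hW : ∀ i j, 0 ≤ W i j) (hdiag : ∀ i, W i i = 0) :
    forestMatrix W 0 = 1 ∧
    ∀ k : ℕ,
      forestMatrix W (k + 1) =
        (-(lap W)) * forestMatrix W k + sigmaW W (k + 1) • 1 ∧
      sigmaW W (k + 1) = (lap W * forestMatrix W k).trace / (k + 1) := by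
  refine ⟨forestMatrix_zero, fun k => ?_⟩
  have hrw : (-(lap W)) * forestMatrix W k
      = W * forestMatrix W k
        - Matrix.diagonal (fun i => ∑ m, W i m) * forestMatrix W k := by
    unfold lap
    rw [neg_sub, Matrix.sub_mul]
  have hmat : forestMatrix W (k + 1)
      = (-(lap W)) * forestMatrix W k + sigmaW W (k + 1) • 1 := by
    ext i j
    rw [Matrix.add_apply, hrw, Matrix.sub_apply, Matrix.diagonal_mul, Matrix.mul_apply,
      Matrix.smul_apply, smul_eq_mul]
    by_cases hij : i = j
    · subst hij
      rw [Matrix.one_apply_eq, mul_one]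
      exact entry_diag hW i k
    · rw [Matrix.one_apply_ne hij, mul_zero, add_zero]
      exact entry_off hW hij k
  refine ⟨hmat, ?_⟩
  have hL : lap W * forestMatrix W k
      = sigmaW W (k + 1) • 1 - forestMatrix W (k + 1) := by
    rw [hmat, Matrix.neg_mul]
    abel
  have htr : (forestMatrix W (k + 1)).trace = ((n : ℝ) - (k + 1)) * sigmaW W (k + 1) := by
    have := trace_forestMatrix (W := W) (k + 1)
    push_cast at this ⊢
    rw [Matrix.trace]
    simpa [Matrix.diag] using this
  rw [hL, Matrix.trace_sub, Matrix.trace_smul, Matrix.trace_one, htr]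
  have hk : ((k : ℝ) + 1) ≠ 0 := by positivity
  have hcard : (Fintype.card (Fin n) : ℝ) = (n : ℝ) := by rw [Fintype.card_fin]
  rw [smul_eq_mul, hcard]
  field_simp
  ring
end
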